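/- arXiv:2601.12869 — 12 statements merged into one kernel-verified Lean document; each statement's English description precedes it below -/
import Mathlib

section
/- Let p > 1, and let ν̃ ∈ (1/(p' p^{p'-1}), 1) where p' = p/(p-1). Define a sequence by a_0 = 1 and a_{n+1} = a_n^{1/p} - ν̃. If the sequence (a_n) is bounded below by some positive constant, then (a_n) is decreasing and converges to a limit a_∞ ∈ (0,1) satisfying ν̃ = a_∞^{1/p}(1 - a_∞); but since the maximum of x ↦ x^{1/p}(1-x)^{1/p'} on (0,1) is 1/(p' p^{p'-1}) < ν̃, no such positive lower bound can exist. In other words, the sequence a_n eventually becomes nonpositive. -/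
lemma key_ineq (p p' : ℝ) (hp : 1 < p) (hp' : p' = p / (p - 1)) {x : ℝ} (hx : 0 ≤ x) :
    x ^ (1 / p) ≤ x + 1 / (p' * p ^ (p' - 1)) := by
  have hp0 : (0:ℝ) < p := lt_trans zero_lt_one hp
  have hpq : p.HolderConjugate p' :=
    (Real.holderConjugate_iff_eq_conjExponent hp).2 hp'
  have hp'0 : (0:ℝ) < p' := hpq.symm.pos
  have hkey : (1 / p) * p' = p' - 1 := by
    rw [show (1 / p) * p' = p' / p by ring, hpq.symm.div_conj_eq_sub_one]
  have hab : ((p * x) ^ (1 / p)) * ((1 / p) ^ (1 / p)) = x ^ (1 / p) := by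
    rw [← Real.mul_rpow (by positivity) (by positivity)]
    congr 1
    field_simp
  have hyoung := Real.young_inequality_of_nonneg
    (Real.rpow_nonneg (by positivity : (0:ℝ) ≤ p * x) (1 / p))
    (Real.rpow_nonneg (by positivity : (0:ℝ) ≤ 1 / p) (1 / p)) hpq
  rw [hab] at hyoung
  have h1 : ((p * x) ^ (1 / p)) ^ p = p * x := by
    rw [← Real.rpow_mul (by positivity), one_div_mul_cancel hp0.ne', Real.rpow_one]
  have h2 : ((1 / p : ℝ) ^ (1 / p)) ^ p' = (1 / p) ^ (p' - 1) := by
    rw [← Real.rpow_mul (by positivity), hkey]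
  rw [h1, h2] at hyoung
  have h3 : p * x / p = x := by field_simp
  have h4 : ((1 / p : ℝ)) ^ (p' - 1) / p' = 1 / (p' * p ^ (p' - 1)) := by
    rw [one_div, Real.inv_rpow hp0.le]
    have hpp : (0:ℝ) < p ^ (p' - 1) := Real.rpow_pos_of_pos hp0 _
    field_simp
  rw [h3, h4] at hyoung
  exact hyoung

/-- For `p > 1`, `p' = p/(p-1)` and `ν̃ ∈ (1/(p' p^{p'-1}), 1)`, the sequence
`a_0 = 1`, `a_{n+1} = (a_n^+)^{1/p} - ν̃` eventually becomes nonpositive. -/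
theorem stmt3 (p p' ν : ℝ) (hp : 1 < p) (hp' : p' = p / (p - 1))
    (hν₁ : 1 / (p' * p ^ (p' - 1)) < ν) (hν₂ : ν < 1)
    (a : ℕ → ℝ) (ha0 : a 0 = 1)
    (ha : ∀ n, a (n + 1) = (max (a n) 0) ^ (1 / p) - ν) :
    ∃ n, a n ≤ 0 := by
  by_contra h
  push_neg at h
  set C := 1 / (p' * p ^ (p' - 1)) with hC
  set ε := ν - C with hε
  have hε0 : 0 < ε := sub_pos.2 hν₁
  have hdec : ∀ n, a (n + 1) ≤ a n - ε := by
    intro n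
    have hmax : max (a n) 0 = a n := max_eq_left (h n).le
    rw [ha n, hmax]
    have := key_ineq p p' hp hp' (h n).le
    linarith
  have hbound : ∀ n, a n ≤ 1 - n * ε := by
    intro n
    induction n with
    | zero => simp [ha0]
    | succ k ih =>
      have := hdec k
      push_cast
      nlinarith
  obtain ⟨n, hn⟩ := Archimedean.arch 1 hε0
  have := hbound n
  have hp2 := h n
  simp [nsmul_eq_mul] at hn
  nlinarith
end

section
/- Let p > 1, p' = p/(p-1), c ∈ ℝ, h ∈ L^∞(0,1), and f ∈ L^1(0,1) with f > 0 on (0,1) and f lower semicontinuous on (0,1). If y : [0,1] → ℝ is absolutely continuous, satisfies y'(t) = p'[(c - h(t))(max(y(t),0))^{1/p} - f(t)] for a.e. t ∈ (0,1), and y(1) = 0, then y(t) > 0 for all t ∈ (0,1). -/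
open MeasureTheory Set

/-- Positivity of Carathéodory solutions of the backward initial value problem
`y' = p'[(c - h)(y⁺)^{1/p} - f]`, `y(1) = 0`, where `f > 0` is lower semicontinuous and
integrable on `(0,1)` and `h` is essentially bounded.  The solution is encoded through
its equivalent integral formulation. -/
theorem stmt4 (p p' c : ℝ) (hp : 1 < p) (hp' : p' = p / (p - 1))
    (h f y : ℝ → ℝ)
    (hhm : Measurable h) (hhb : ∃ M, ∀ t ∈ Set.Ioo (0 : ℝ) 1, |h t| ≤ M)
    (hfint : IntegrableOn f (Set.Ioo 0 1))
    (hfpos : ∀ t ∈ Set.Ioo (0 : ℝ) 1, 0 < f t)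
    (hflsc : LowerSemicontinuousOn f (Set.Ioo 0 1))
    (hFint : IntegrableOn
      (fun τ => p' * ((c - h τ) * (max (y τ) 0) ^ (1 / p) - f τ)) (Set.Icc 0 1))
    (hy1 : y 1 = 0)
    (hysol : ∀ t ∈ Set.Icc (0 : ℝ) 1,
      y t = -∫ τ in t..1, p' * ((c - h τ) * (max (y τ) 0) ^ (1 / p) - f τ)) :
    ∀ t ∈ Set.Ioo (0 : ℝ) 1, 0 < y t := by
  obtain ⟨M, hM⟩ := hhb
  set F : ℝ → ℝ := fun τ => p' * ((c - h τ) * (max (y τ) 0) ^ (1 / p) - f τ) with hF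
  have hppos : 0 < p := lt_trans one_pos hp
  have hp'pos : 0 < p' := by
    rw [hp']; exact div_pos hppos (by linarith)
  -- interval integrability of F on subintervals of [0,1]
  have hFi : ∀ a ∈ Set.Icc (0:ℝ) 1, ∀ b ∈ Set.Icc (0:ℝ) 1,
      IntervalIntegrable F volume a b := by
    intro a ha b hb
    exact (hFint.mono_set (Set.uIcc_subset_Icc ha hb)).intervalIntegrable
  -- y equals a primitive of F on [0,1]
  have e : ∀ a ∈ Set.Icc (0:ℝ) 1, y a = ∫ τ in (1:ℝ)..a, F τ := by
    intro a ha
    rw [hysol a ha, intervalIntegral.integral_symm 1 a, neg_neg]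
  -- y is continuous on [0,1]
  have hyc : ContinuousOn y (Set.Icc 0 1) := by
    have h1 : (1:ℝ) ∈ Set.uIcc (0:ℝ) 1 := by
      rw [Set.uIcc_of_le zero_le_one]; exact ⟨zero_le_one, le_rfl⟩
    have hc := intervalIntegral.continuousOn_primitive_interval'
      (μ := volume) (f := F) (b₁ := 0) (b₂ := 1) (a := 1)
      (hFi 0 ⟨le_rfl, zero_le_one⟩ 1 ⟨zero_le_one, le_rfl⟩) h1
    rw [Set.uIcc_of_le zero_le_one] at hc
    exact ContinuousOn.congr hc e
  -- difference formula
  have hdiff : ∀ a ∈ Set.Icc (0:ℝ) 1, ∀ b ∈ Set.Icc (0:ℝ) 1,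
      y a - y b = ∫ τ in b..a, F τ := by
    intro a ha b hb
    have h01 : (1:ℝ) ∈ Set.Icc (0:ℝ) 1 := ⟨zero_le_one, le_rfl⟩
    rw [e a ha, e b hb]
    exact intervalIntegral.integral_interval_sub_left (hFi 1 h01 a ha) (hFi 1 h01 b hb)
  -- Step A: nonnegativity
  have hnn : ∀ t ∈ Set.Ioo (0:ℝ) 1, 0 ≤ y t := by
    intro t₀ ht₀
    by_contra hneg
    push_neg at hneg
    set S : Set ℝ := Set.Icc t₀ 1 ∩ y ⁻¹' Set.Ici 0 with hS
    have hScl : IsClosed S :=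
      ContinuousOn.preimage_isClosed_of_isClosed
        (hyc.mono (Set.Icc_subset_Icc ht₀.1.le le_rfl)) isClosed_Icc isClosed_Ici
    have hSne : S.Nonempty := ⟨1, ⟨ht₀.2.le, le_rfl⟩, by simp [hy1]⟩
    have hSbdd : BddBelow S := ⟨t₀, fun x hx => hx.1.1⟩
    have ht₁S : sInf S ∈ S := hScl.csInf_mem hSne hSbdd
    set t₁ := sInf S with ht₁
    have ht₁mem : t₁ ∈ Set.Icc t₀ 1 := ht₁S.1
    have hyt₁ : 0 ≤ y t₁ := ht₁S.2
    have ht₀t₁ : t₀ < t₁ := by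
      rcases lt_or_eq_of_le ht₁mem.1 with h' | h'
      · exact h'
      · exfalso; rw [← h'] at hyt₁; linarith
    have ht₀01 : t₀ ∈ Set.Icc (0:ℝ) 1 := ⟨ht₀.1.le, ht₀.2.le⟩
    have ht₁01 : t₁ ∈ Set.Icc (0:ℝ) 1 := ⟨le_trans ht₀.1.le ht₁mem.1, ht₁mem.2⟩
    -- y < 0 on Ico t₀ t₁
    have hylt : ∀ τ ∈ Set.Ico t₀ t₁, y τ < 0 := by
      intro τ hτ
      by_contra hge
      push_neg at hge
      have : τ ∈ S := ⟨⟨hτ.1, le_trans hτ.2.le ht₁mem.2⟩, hge⟩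
      exact absurd (csInf_le hSbdd this) (not_le.mpr hτ.2)
    -- the integral of F over [t₀,t₁] is nonpositive
    have hint : ∫ τ in t₀..t₁, F τ ≤ 0 := by
      have hae : ∀ᵐ τ ∂(volume.restrict (Set.Icc t₀ t₁)), F τ ≤ (0:ℝ) := by
        rw [← MeasureTheory.restrict_Ioo_eq_restrict_Icc]
        refine ae_restrict_of_forall_mem measurableSet_Ioo ?_
        intro τ hτ
        have hτ01 : τ ∈ Set.Ioo (0:ℝ) 1 :=
          ⟨lt_of_le_of_lt ht₀.1.le hτ.1, lt_of_lt_of_le hτ.2 ht₁mem.2⟩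
        have hyn : y τ < 0 := hylt τ ⟨hτ.1.le, hτ.2⟩
        have hmax : max (y τ) 0 = 0 := max_eq_right hyn.le
        have hFτ : F τ = p' * (0 - f τ) := by
          rw [hF]; simp only
          rw [hmax, Real.zero_rpow (one_div_ne_zero (ne_of_gt hppos)), mul_zero]
        rw [hFτ]
        have := hfpos τ hτ01
        nlinarith
      calc ∫ τ in t₀..t₁, F τ ≤ ∫ _τ in t₀..t₁, (0:ℝ) :=
            intervalIntegral.integral_mono_ae_restrict ht₀t₁.le
              (hFi t₀ ht₀01 t₁ ht₁01) intervalIntegrable_const hae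
        _ = 0 := by simp
    have hd : y t₀ - y t₁ = -∫ τ in t₀..t₁, F τ := by
      rw [hdiff t₀ ht₀01 t₁ ht₁01, intervalIntegral.integral_symm t₀ t₁]
    linarith
  -- Step B: strict positivity
  intro t₀ ht₀
  by_contra hle
  push_neg at hle
  have hy0 : y t₀ = 0 := le_antisymm hle (hnn t₀ ht₀)
  have ht₀01 : t₀ ∈ Set.Icc (0:ℝ) 1 := ⟨ht₀.1.le, ht₀.2.le⟩
  have hM0 : 0 ≤ M := le_trans (abs_nonneg _) (hM (1/2) (by norm_num))
  set C : ℝ := |c| + M + 1 with hC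
  have hCpos : 0 < C := by positivity
  set ε : ℝ := f t₀ / 2 with hε
  have hεpos : 0 < ε := by
    have := hfpos t₀ ht₀; positivity
  set K : ℝ := ε / (2 * C) with hK
  have hKpos : 0 < K := by positivity
  have hKp : 0 < K ^ p := Real.rpow_pos_of_pos hKpos p
  -- lsc gives a neighborhood where f > ε
  have hlsc := hflsc t₀ ht₀ ε (by rw [hε]; linarith [hfpos t₀ ht₀])
  rw [Filter.eventually_iff, Metric.mem_nhdsWithin_iff] at hlsc
  obtain ⟨δ₁, hδ₁pos, hδ₁⟩ := hlsc
  -- continuity gives a neighborhood where |y| < K^p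
  have hcw := hyc t₀ ht₀01
  rw [Metric.continuousWithinAt_iff] at hcw
  obtain ⟨δ₂, hδ₂pos, hδ₂⟩ := hcw (K ^ p) hKp
  set δ : ℝ := min δ₁ (min δ₂ (1 - t₀)) with hδ
  have hδpos : 0 < δ :=
    lt_min hδ₁pos (lt_min hδ₂pos (by linarith [ht₀.2]))
  set t : ℝ := t₀ + δ / 2 with ht
  have htgt : t₀ < t := by rw [ht]; linarith
  have htlt1 : t < 1 := by
    have hd1 : δ ≤ 1 - t₀ := le_trans (min_le_right _ _) (min_le_right _ _)
    rw [ht]; linarith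
  have ht01 : t ∈ Set.Icc (0:ℝ) 1 := ⟨by linarith [ht₀.1], htlt1.le⟩
  have hsub : ∀ τ ∈ Set.Icc t₀ t, τ ∈ Set.Ioo (0:ℝ) 1 :=
    fun τ hτ => ⟨lt_of_lt_of_le ht₀.1 hτ.1, lt_of_le_of_lt hτ.2 htlt1⟩
  have hdist : ∀ τ ∈ Set.Icc t₀ t, dist τ t₀ < δ := by
    intro τ hτ
    rw [Real.dist_eq, abs_of_nonneg (by linarith [hτ.1])]
    have h2 : τ ≤ t₀ + δ / 2 := hτ.2
    linarith
  -- pointwise lower bound for -F on [t₀, t]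
  have hbound : ∀ τ ∈ Set.Icc t₀ t, p' * (ε / 2) ≤ -F τ := by
    intro τ hτ
    have hτ01 := hsub τ hτ
    have hdτ := hdist τ hτ
    have hfτ : ε < f τ :=
      hδ₁ ⟨by simpa [Metric.mem_ball] using lt_of_lt_of_le hdτ (min_le_left _ _), hτ01⟩
    have hyτnn : 0 ≤ y τ := hnn τ hτ01
    have hyτlt : y τ < K ^ p := by
      have hd2 := hδ₂ ⟨hτ01.1.le, hτ01.2.le⟩
        (lt_of_lt_of_le hdτ (le_trans (min_le_right _ _) (min_le_left _ _)))
      rw [Real.dist_eq, hy0, sub_zero] at hd2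
      exact lt_of_le_of_lt (le_abs_self _) hd2
    have hmax : max (y τ) 0 = y τ := max_eq_left hyτnn
    have hrpow : (max (y τ) 0) ^ (1 / p) ≤ K := by
      rw [hmax]
      calc (y τ) ^ (1/p) ≤ (K ^ p) ^ (1/p) :=
            Real.rpow_le_rpow hyτnn hyτlt.le (by positivity)
        _ = K := by
            rw [← Real.rpow_mul hKpos.le, mul_one_div_cancel (ne_of_gt hppos),
              Real.rpow_one]
    have hrpownn : 0 ≤ (max (y τ) 0) ^ (1 / p) :=
      Real.rpow_nonneg (le_max_right _ _) _
    have hch : |c - h τ| ≤ C := by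
      have := hM τ hτ01
      calc |c - h τ| ≤ |c| + |h τ| := abs_sub _ _
        _ ≤ C := by rw [hC]; linarith
    have hprod : (c - h τ) * (max (y τ) 0) ^ (1 / p) ≤ ε / 2 := by
      calc (c - h τ) * (max (y τ) 0) ^ (1 / p)
          ≤ |c - h τ| * (max (y τ) 0) ^ (1 / p) :=
            mul_le_mul_of_nonneg_right (le_abs_self _) hrpownn
        _ ≤ C * K := mul_le_mul hch hrpow hrpownn hCpos.le
        _ = ε / 2 := by rw [hK]; field_simp
    have hFle : F τ ≤ p' * (ε / 2 - ε) := by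
      rw [hF]; simp only
      apply mul_le_mul_of_nonneg_left _ hp'pos.le
      linarith
    nlinarith
  -- integrate the bound
  have hintge : p' * (ε / 2) * (t - t₀) ≤ ∫ τ in t₀..t, -F τ := by
    have hmono := intervalIntegral.integral_mono_on (μ := volume) (a := t₀) (b := t)
      htgt.le intervalIntegrable_const ((hFi t₀ ht₀01 t ht01).neg) hbound
    rw [intervalIntegral.integral_const] at hmono
    calc p' * (ε / 2) * (t - t₀) = (t - t₀) • (p' * (ε/2)) := by
          rw [smul_eq_mul]; ring
      _ ≤ _ := hmono
  have hdiff' : y t₀ - y t = ∫ τ in t₀..t, -F τ := by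
    rw [hdiff t₀ ht₀01 t ht01, intervalIntegral.integral_symm t₀ t,
      ← intervalIntegral.integral_neg]
  have hyt : 0 ≤ y t := hnn t ⟨lt_of_lt_of_le ht₀.1 htgt.le, htlt1⟩
  have hpos : 0 < p' * (ε / 2) * (t - t₀) := by
    have hd3 : 0 < t - t₀ := by linarith
    positivity
  linarith
end

section
/- Let p > 1, p' = p/(p-1), c ∈ ℝ, h ∈ L^∞(0,1), f ∈ L^1(0,1) with f > 0 lower semicontinuous on (0,1), and let y_c be the (unique, strictly positive on (0,1)) solution of the backward problem y' = p'[(c-h)(y^+)^{1/p} - f], y(1) = 0. Suppose φ : [0,1] → ℝ is absolutely continuous with φ > 0 on (0,1), φ(1) ≥ 0, and φ'(t) ≤ p'[(c - h(t))(max(φ(t),0))^{1/p} - f(t)] for a.e. t ∈ [0,1]. Then y_c(t) ≤ φ(t) for all t ∈ [0,1]. -/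
open MeasureTheory Set

private lemma rpow_tangent {θ x y : ℝ} (hθ0 : 0 < θ) (hθ1 : θ ≤ 1) (hx : 0 < x) (hy : 0 < y) :
    y ^ θ - x ^ θ ≤ θ * x ^ (θ - 1) * (y - x) := by
  have hxne : x ≠ 0 := ne_of_gt hx
  have hs : -1 ≤ y / x - 1 := by
    have : 0 ≤ y / x := le_of_lt (div_pos hy hx)
    linarith
  have hb := rpow_one_add_le_one_add_mul_self hs hθ0.le hθ1
  have h1x : (1 : ℝ) + (y / x - 1) = y / x := by ring
  rw [h1x] at hb
  have hxx : x ^ (θ - 1) * x = x ^ θ := by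
    have h := Real.rpow_add hx (θ - 1) 1
    rw [Real.rpow_one] at h
    rw [← h]; norm_num
  have e1 : (y / x - 1) * x ^ θ = (y - x) * x ^ (θ - 1) := by
    rw [← hxx]; field_simp
  have h2 : y ^ θ = (y / x) ^ θ * x ^ θ := by
    rw [← Real.mul_rpow (div_nonneg hy.le hx.le) hx.le, div_mul_cancel₀ _ hxne]
  have h3 : (y / x) ^ θ * x ^ θ ≤ (1 + θ * (y / x - 1)) * x ^ θ :=
    mul_le_mul_of_nonneg_right hb (Real.rpow_nonneg hx.le θ)
  calc y ^ θ - x ^ θ = (y / x) ^ θ * x ^ θ - x ^ θ := by rw [h2]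
    _ ≤ (1 + θ * (y / x - 1)) * x ^ θ - x ^ θ := by linarith
    _ = θ * ((y / x - 1) * x ^ θ) := by ring
    _ = θ * ((y - x) * x ^ (θ - 1)) := by rw [e1]
    _ = θ * x ^ (θ - 1) * (y - x) := by ring

private lemma integrableOn_cont_mul {g F : ℝ → ℝ} {a b : ℝ}
    (hg : ContinuousOn g (Icc a b)) (hF : IntegrableOn F (Icc a b)) :
    IntegrableOn (fun τ => g τ * F τ) (Icc a b) := by
  obtain ⟨C, hC⟩ := isCompact_Icc.exists_bound_of_continuousOn hg
  exact hF.bdd_mul (hg.aestronglyMeasurable measurableSet_Icc)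
    ((ae_restrict_iff' measurableSet_Icc).2 (ae_of_all _ hC))

private lemma lemA {F φ : ℝ → ℝ} {s t δ θ : ℝ} (hst : s ≤ t) (hθ0 : 0 < θ) (hθ1 : θ ≤ 1)
    (hδ : 0 < δ) (hφδ : ∀ τ ∈ Icc s t, δ ≤ φ τ)
    (hφc : ContinuousOn φ (Icc s t))
    (hF : IntegrableOn F (Icc s t))
    (hsuper : ∀ a ∈ Icc s t, ∀ b ∈ Icc s t, a ≤ b → φ b - φ a ≤ ∫ τ in a..b, F τ) :
    φ t ^ θ - φ s ^ θ ≤ ∫ τ in s..t, (θ * φ τ ^ (θ - 1)) * F τ := by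
  rcases eq_or_lt_of_le hst with rfl | hst'
  · simp
  set g : ℝ → ℝ := fun τ => θ * φ τ ^ (θ - 1) with hgdef
  have hφpos : ∀ τ ∈ Icc s t, 0 < φ τ := fun τ hτ => lt_of_lt_of_le hδ (hφδ τ hτ)
  have hgc : ContinuousOn g (Icc s t) :=
    continuousOn_const.mul (hφc.rpow_const (fun τ hτ => Or.inl (ne_of_gt (hφpos τ hτ))))
  have hgF : IntegrableOn (fun τ => g τ * F τ) (Icc s t) := integrableOn_cont_mul hgc hF
  have habs : IntegrableOn (fun τ => |F τ|) (Icc s t) := hF.abs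
  refine le_of_forall_pos_le_add fun ε hε => ?_
  set C : ℝ := ∫ τ in s..t, |F τ| with hCdef
  have hC : 0 ≤ C := intervalIntegral.integral_nonneg hst (fun u _ => abs_nonneg _)
  set ε₁ : ℝ := ε / (C + 1) with hε₁def
  have hε₁ : 0 < ε₁ := div_pos hε (by linarith)
  have huc := isCompact_Icc.uniformContinuousOn_of_continuous hgc
  rw [Metric.uniformContinuousOn_iff] at huc
  obtain ⟨d, hd, hdprop⟩ := huc ε₁ hε₁
  obtain ⟨n, hn⟩ := exists_nat_gt ((t - s) / d)
  have hn0 : 0 < (n : ℝ) := lt_of_le_of_lt (div_nonneg (by linarith) hd.le) hn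
  set L : ℝ := (t - s) / n with hLdef
  have hL0 : 0 < L := div_pos (by linarith) hn0
  have hLd : L < d := by
    rw [hLdef, div_lt_iff₀ hn0]
    rw [div_lt_iff₀ hd] at hn
    linarith [hn]
  set σ : ℕ → ℝ := fun i => s + i * L with hσdef
  have hstep : ∀ i : ℕ, σ (i + 1) = σ i + L := by
    intro i; simp only [hσdef]; push_cast; ring
  have hσ0 : σ 0 = s := by simp [hσdef]
  have hσn : σ n = t := by
    simp only [hσdef, hLdef]
    field_simp
    ring
  have hσle : ∀ i : ℕ, i ≤ n → σ i ∈ Icc s t := by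
    intro i hi
    constructor
    · simp only [hσdef]; nlinarith [hL0, (Nat.cast_nonneg i : (0:ℝ) ≤ i)]
    · have : (i : ℝ) ≤ n := Nat.cast_le.2 hi
      have h1 : σ i ≤ σ n := by
        simp only [hσdef]
        nlinarith [hL0]
      rw [hσn] at h1; exact h1
  have hmono : ∀ i : ℕ, σ i ≤ σ (i + 1) := by
    intro i; rw [hstep]; linarith
  have hpiece : ∀ k, k < n →
      IntervalIntegrable (fun x => g x * F x + ε₁ * |F x|) volume (σ k) (σ (k + 1)) := by
    intro k hk
    have hsub : Icc (σ k) (σ (k + 1)) ⊆ Icc s t :=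
      Icc_subset_Icc (hσle k hk.le).1 (hσle (k + 1) hk).2
    exact (intervalIntegrable_iff_integrableOn_Icc_of_le (hmono k)).2
      ((hgF.mono_set hsub).add ((habs.mono_set hsub).const_mul ε₁))
  have step : ∀ i, i < n → φ (σ (i + 1)) ^ θ - φ (σ i) ^ θ ≤
      ∫ x in (σ i)..(σ (i + 1)), (g x * F x + ε₁ * |F x|) := by
    intro i hi
    have hai : σ i ∈ Icc s t := hσle i hi.le
    have hbi : σ (i + 1) ∈ Icc s t := hσle (i + 1) hi
    have hab : σ i ≤ σ (i + 1) := hmono i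
    have hsub : Icc (σ i) (σ (i + 1)) ⊆ Icc s t := Icc_subset_Icc hai.1 hbi.2
    have hFab : IntervalIntegrable F volume (σ i) (σ (i + 1)) :=
      (intervalIntegrable_iff_integrableOn_Icc_of_le hab).2 (hF.mono_set hsub)
    have h1 : φ (σ (i + 1)) ^ θ - φ (σ i) ^ θ ≤ g (σ i) * (φ (σ (i + 1)) - φ (σ i)) := by
      have := rpow_tangent hθ0 hθ1 (hφpos _ hai) (hφpos _ hbi)
      simp only [hgdef]
      linarith [this]
    have hg0 : 0 ≤ g (σ i) :=
      mul_nonneg hθ0.le (Real.rpow_nonneg (hφpos _ hai).le _)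
    have h2 : g (σ i) * (φ (σ (i + 1)) - φ (σ i)) ≤ g (σ i) * ∫ x in (σ i)..(σ (i + 1)), F x :=
      mul_le_mul_of_nonneg_left (hsuper _ hai _ hbi hab) hg0
    have h3 : g (σ i) * (∫ x in (σ i)..(σ (i + 1)), F x) = ∫ x in (σ i)..(σ (i + 1)), g (σ i) * F x :=
      (intervalIntegral.integral_const_mul _ _).symm
    have h4 : (∫ x in (σ i)..(σ (i + 1)), g (σ i) * F x) ≤
        ∫ x in (σ i)..(σ (i + 1)), (g x * F x + ε₁ * |F x|) := by
      refine intervalIntegral.integral_mono_on hab (hFab.const_mul _) (hpiece i hi) ?_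
      intro x hx
      have hxmem : x ∈ Icc s t := hsub hx
      have hdist : dist (σ i) x < d := by
        rw [Real.dist_eq, abs_sub_comm, abs_of_nonneg (sub_nonneg.2 hx.1)]
        have h := hx.2
        rw [hstep i] at h
        linarith
      have hgd := hdprop (σ i) hai x hxmem hdist
      rw [Real.dist_eq] at hgd
      have h5 : (g (σ i) - g x) * F x ≤ |g (σ i) - g x| * |F x| := by
        calc (g (σ i) - g x) * F x ≤ |(g (σ i) - g x) * F x| := le_abs_self _
          _ = |g (σ i) - g x| * |F x| := abs_mul _ _
      have h6 : |g (σ i) - g x| * |F x| ≤ ε₁ * |F x| :=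
        mul_le_mul_of_nonneg_right hgd.le (abs_nonneg _)
      have hexp : (g (σ i) - g x) * F x = g (σ i) * F x - g x * F x := by ring
      linarith
    linarith [h1, h2, h3 ▸ h2, h4, h3.symm ▸ h4]
  have tele := Finset.sum_range_sub (fun i => φ (σ i) ^ θ) n
  have hsum := intervalIntegral.sum_integral_adjacent_intervals hpiece
  have hgFst : IntervalIntegrable (fun x => g x * F x) volume s t :=
    (intervalIntegrable_iff_integrableOn_Icc_of_le hst).2 hgF
  have habsst : IntervalIntegrable (fun x => |F x|) volume s t :=
    (intervalIntegrable_iff_integrableOn_Icc_of_le hst).2 habs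
  have hfinal : φ t ^ θ - φ s ^ θ ≤ (∫ x in s..t, g x * F x) + ε₁ * C := by
    calc φ t ^ θ - φ s ^ θ
        = ∑ i ∈ Finset.range n, (φ (σ (i + 1)) ^ θ - φ (σ i) ^ θ) := by
          rw [tele, hσ0, hσn]
      _ ≤ ∑ i ∈ Finset.range n, ∫ x in (σ i)..(σ (i + 1)), (g x * F x + ε₁ * |F x|) :=
          Finset.sum_le_sum (fun i hi => step i (Finset.mem_range.1 hi))
      _ = ∫ x in (σ 0)..(σ n), (g x * F x + ε₁ * |F x|) := hsum
      _ = (∫ x in s..t, g x * F x) + ε₁ * C := by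
          rw [hσ0, hσn, intervalIntegral.integral_add hgFst (habsst.const_mul ε₁),
            intervalIntegral.integral_const_mul]
  have hεC : ε₁ * C ≤ ε := by
    have h7 : ε₁ * C ≤ ε₁ * (C + 1) := by nlinarith
    have h8 : ε₁ * (C + 1) = ε := by
      rw [hε₁def]; field_simp
    linarith
  calc φ t ^ θ - φ s ^ θ ≤ (∫ x in s..t, g x * F x) + ε₁ * C := hfinal
    _ ≤ (∫ τ in s..t, (θ * φ τ ^ (θ - 1)) * F τ) + ε := by
        simp only [hgdef]; linarith

private lemma lemB {F y : ℝ → ℝ} {s t δ θ : ℝ} (hst : s ≤ t) (hθ0 : 0 < θ) (hθ1 : θ ≤ 1)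
    (hδ : 0 < δ) (hyδ : ∀ τ ∈ Icc s t, δ ≤ y τ)
    (hyc : ContinuousOn y (Icc s t))
    (hF : IntegrableOn F (Icc s t))
    (hsol : ∀ a ∈ Icc s t, ∀ b ∈ Icc s t, a ≤ b → y b - y a = ∫ τ in a..b, F τ) :
    (∫ τ in s..t, (θ * y τ ^ (θ - 1)) * F τ) ≤ y t ^ θ - y s ^ θ := by
  rcases eq_or_lt_of_le hst with rfl | hst'
  · simp
  set g : ℝ → ℝ := fun τ => θ * y τ ^ (θ - 1) with hgdef
  have hypos : ∀ τ ∈ Icc s t, 0 < y τ := fun τ hτ => lt_of_lt_of_le hδ (hyδ τ hτ)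
  have hgc : ContinuousOn g (Icc s t) :=
    continuousOn_const.mul (hyc.rpow_const (fun τ hτ => Or.inl (ne_of_gt (hypos τ hτ))))
  have hgF : IntegrableOn (fun τ => g τ * F τ) (Icc s t) := integrableOn_cont_mul hgc hF
  have habs : IntegrableOn (fun τ => |F τ|) (Icc s t) := hF.abs
  refine le_of_forall_pos_le_add fun ε hε => ?_
  set C : ℝ := ∫ τ in s..t, |F τ| with hCdef
  have hC : 0 ≤ C := intervalIntegral.integral_nonneg hst (fun u _ => abs_nonneg _)
  set ε₁ : ℝ := ε / (C + 1) with hε₁def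
  have hε₁ : 0 < ε₁ := div_pos hε (by linarith)
  have huc := isCompact_Icc.uniformContinuousOn_of_continuous hgc
  rw [Metric.uniformContinuousOn_iff] at huc
  obtain ⟨d, hd, hdprop⟩ := huc ε₁ hε₁
  obtain ⟨n, hn⟩ := exists_nat_gt ((t - s) / d)
  have hn0 : 0 < (n : ℝ) := lt_of_le_of_lt (div_nonneg (by linarith) hd.le) hn
  set L : ℝ := (t - s) / n with hLdef
  have hL0 : 0 < L := div_pos (by linarith) hn0
  have hLd : L < d := by
    rw [hLdef, div_lt_iff₀ hn0]
    rw [div_lt_iff₀ hd] at hn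
    linarith [hn]
  set σ : ℕ → ℝ := fun i => s + i * L with hσdef
  have hstep : ∀ i : ℕ, σ (i + 1) = σ i + L := by
    intro i; simp only [hσdef]; push_cast; ring
  have hσ0 : σ 0 = s := by simp [hσdef]
  have hσn : σ n = t := by
    simp only [hσdef, hLdef]
    field_simp
    ring
  have hσle : ∀ i : ℕ, i ≤ n → σ i ∈ Icc s t := by
    intro i hi
    constructor
    · simp only [hσdef]; nlinarith [hL0, (Nat.cast_nonneg i : (0:ℝ) ≤ i)]
    · have : (i : ℝ) ≤ n := Nat.cast_le.2 hi
      have h1 : σ i ≤ σ n := by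
        simp only [hσdef]
        nlinarith [hL0]
      rw [hσn] at h1; exact h1
  have hmono : ∀ i : ℕ, σ i ≤ σ (i + 1) := by
    intro i; rw [hstep]; linarith
  have hpiece : ∀ k, k < n →
      IntervalIntegrable (fun x => g x * F x - ε₁ * |F x|) volume (σ k) (σ (k + 1)) := by
    intro k hk
    have hsub : Icc (σ k) (σ (k + 1)) ⊆ Icc s t :=
      Icc_subset_Icc (hσle k hk.le).1 (hσle (k + 1) hk).2
    exact (intervalIntegrable_iff_integrableOn_Icc_of_le (hmono k)).2
      ((hgF.mono_set hsub).sub ((habs.mono_set hsub).const_mul ε₁))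
  have step : ∀ i, i < n → (∫ x in (σ i)..(σ (i + 1)), (g x * F x - ε₁ * |F x|)) ≤
      y (σ (i + 1)) ^ θ - y (σ i) ^ θ := by
    intro i hi
    have hai : σ i ∈ Icc s t := hσle i hi.le
    have hbi : σ (i + 1) ∈ Icc s t := hσle (i + 1) hi
    have hab : σ i ≤ σ (i + 1) := hmono i
    have hsub : Icc (σ i) (σ (i + 1)) ⊆ Icc s t := Icc_subset_Icc hai.1 hbi.2
    have hFab : IntervalIntegrable F volume (σ i) (σ (i + 1)) :=
      (intervalIntegrable_iff_integrableOn_Icc_of_le hab).2 (hF.mono_set hsub)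
    have h1 : g (σ (i + 1)) * (y (σ (i + 1)) - y (σ i)) ≤ y (σ (i + 1)) ^ θ - y (σ i) ^ θ := by
      have := rpow_tangent hθ0 hθ1 (hypos _ hbi) (hypos _ hai)
      simp only [hgdef]
      linarith [this]
    have h2 : g (σ (i + 1)) * (y (σ (i + 1)) - y (σ i)) =
        ∫ x in (σ i)..(σ (i + 1)), g (σ (i + 1)) * F x := by
      rw [hsol _ hai _ hbi hab, intervalIntegral.integral_const_mul]
    have h4 : (∫ x in (σ i)..(σ (i + 1)), (g x * F x - ε₁ * |F x|)) ≤
        ∫ x in (σ i)..(σ (i + 1)), g (σ (i + 1)) * F x := by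
      refine intervalIntegral.integral_mono_on hab (hpiece i hi) (hFab.const_mul _) ?_
      intro x hx
      have hxmem : x ∈ Icc s t := hsub hx
      have hdist : dist (σ (i + 1)) x < d := by
        rw [Real.dist_eq, abs_of_nonneg (sub_nonneg.2 hx.2)]
        have h := hx.1
        rw [hstep i]
        linarith
      have hgd := hdprop (σ (i + 1)) hbi x hxmem hdist
      rw [Real.dist_eq] at hgd
      have h5 : (g x - g (σ (i + 1))) * F x ≤ |g x - g (σ (i + 1))| * |F x| := by
        calc (g x - g (σ (i + 1))) * F x ≤ |(g x - g (σ (i + 1))) * F x| := le_abs_self _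
          _ = |g x - g (σ (i + 1))| * |F x| := abs_mul _ _
      have h6 : |g x - g (σ (i + 1))| * |F x| ≤ ε₁ * |F x| := by
        rw [abs_sub_comm]
        exact mul_le_mul_of_nonneg_right hgd.le (abs_nonneg _)
      have hexp : (g x - g (σ (i + 1))) * F x = g x * F x - g (σ (i + 1)) * F x := by ring
      linarith
    linarith [h4, h2 ▸ h1]
  have tele := Finset.sum_range_sub (fun i => y (σ i) ^ θ) n
  have hsum := intervalIntegral.sum_integral_adjacent_intervals hpiece
  have hgFst : IntervalIntegrable (fun x => g x * F x) volume s t :=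
    (intervalIntegrable_iff_integrableOn_Icc_of_le hst).2 hgF
  have habsst : IntervalIntegrable (fun x => |F x|) volume s t :=
    (intervalIntegrable_iff_integrableOn_Icc_of_le hst).2 habs
  have hfinal : (∫ x in s..t, g x * F x) - ε₁ * C ≤ y t ^ θ - y s ^ θ := by
    calc (∫ x in s..t, g x * F x) - ε₁ * C
        = ∫ x in (σ 0)..(σ n), (g x * F x - ε₁ * |F x|) := by
          rw [hσ0, hσn, intervalIntegral.integral_sub hgFst (habsst.const_mul ε₁),
            intervalIntegral.integral_const_mul]
      _ = ∑ i ∈ Finset.range n, ∫ x in (σ i)..(σ (i + 1)), (g x * F x - ε₁ * |F x|) := hsum.symm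
      _ ≤ ∑ i ∈ Finset.range n, (y (σ (i + 1)) ^ θ - y (σ i) ^ θ) :=
          Finset.sum_le_sum (fun i hi => step i (Finset.mem_range.1 hi))
      _ = y t ^ θ - y s ^ θ := by rw [tele, hσ0, hσn]
  have hεC : ε₁ * C ≤ ε := by
    have h7 : ε₁ * C ≤ ε₁ * (C + 1) := by nlinarith
    have h8 : ε₁ * (C + 1) = ε := by
      rw [hε₁def]; field_simp
    linarith
  have : (∫ x in s..t, g x * F x) ≤ (y t ^ θ - y s ^ θ) + ε := by linarith
  simpa only [hgdef] using this

/-- Comparison with supersolutions: if `y_c` is the positive Carathéodory solution of the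
backward problem `y' = p'[(c - h)(y⁺)^{1/p} - f]`, `y(1) = 0`, and `φ` is absolutely
continuous, positive on `(0,1)`, with `φ(1) ≥ 0` and defect `P_c φ ≤ 0` a.e.
(encoded in integral form), then `y_c ≤ φ` on `[0,1]`. -/
theorem stmt6 (p p' c : ℝ) (hp : 1 < p) (hp' : p' = p / (p - 1))
    (h f y φ : ℝ → ℝ)
    (hhm : Measurable h) (hhb : ∃ M, ∀ t ∈ Set.Ioo (0 : ℝ) 1, |h t| ≤ M)
    (hfint : IntegrableOn f (Set.Ioo 0 1))
    (hfpos : ∀ t ∈ Set.Ioo (0 : ℝ) 1, 0 < f t)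
    (hflsc : LowerSemicontinuousOn f (Set.Ioo 0 1))
    -- y is the Carathéodory solution of the backward IVP, positive on (0,1)
    (hFint : IntegrableOn
      (fun τ => p' * ((c - h τ) * (max (y τ) 0) ^ (1 / p) - f τ)) (Set.Icc 0 1))
    (hy1 : y 1 = 0)
    (hysol : ∀ t ∈ Set.Icc (0 : ℝ) 1,
      y t = -∫ τ in t..1, p' * ((c - h τ) * (max (y τ) 0) ^ (1 / p) - f τ))
    (hypos : ∀ t ∈ Set.Ioo (0 : ℝ) 1, 0 < y t)
    -- φ is an absolutely continuous supersolution: φ > 0 on (0,1), φ(1) ≥ 0, P_c φ ≤ 0 a.e.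
    (hφcont : ContinuousOn φ (Set.Icc 0 1))
    (hφpos : ∀ t ∈ Set.Ioo (0 : ℝ) 1, 0 < φ t)
    (hφ1 : 0 ≤ φ 1)
    (hφint : IntegrableOn
      (fun τ => p' * ((c - h τ) * (max (φ τ) 0) ^ (1 / p) - f τ)) (Set.Icc 0 1))
    (hφsuper : ∀ s ∈ Set.Icc (0 : ℝ) 1, ∀ t ∈ Set.Icc (0 : ℝ) 1, s ≤ t →
      φ t - φ s ≤ ∫ τ in s..t, p' * ((c - h τ) * (max (φ τ) 0) ^ (1 / p) - f τ)) :
    ∀ t ∈ Set.Icc (0 : ℝ) 1, y t ≤ φ t := by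
  -- Notation
  set Fy : ℝ → ℝ := fun τ => p' * ((c - h τ) * (max (y τ) 0) ^ (1 / p) - f τ) with hFydef
  set Fφ : ℝ → ℝ := fun τ => p' * ((c - h τ) * (max (φ τ) 0) ^ (1 / p) - f τ) with hFφdef
  have hp0 : (0:ℝ) < p := by linarith
  have hp1 : (0:ℝ) < p - 1 := by linarith
  set θ : ℝ := 1 - 1 / p with hθdef
  have hθ0 : 0 < θ := by
    have : 1 / p < 1 := by rw [div_lt_one hp0]; linarith
    simp only [hθdef]; linarith
  have hθ1 : θ < 1 := by
    have : 0 < 1 / p := by positivity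
    simp only [hθdef]; linarith
  have hθp' : θ * p' = 1 := by
    rw [hθdef, hp']; field_simp
  -- continuity of y on [0,1]
  have hFyuI : IntegrableOn Fy (uIcc (0:ℝ) 1) := by
    rwa [uIcc_of_le (zero_le_one : (0:ℝ) ≤ 1)]
  have hprim : ContinuousOn (fun x => ∫ τ in x..(1:ℝ), Fy τ) (Icc 0 1) := by
    have := intervalIntegral.continuousOn_primitive_interval_left (a := (0:ℝ)) (b := 1)
      (f := Fy) (μ := volume) hFyuI
    rwa [uIcc_of_le (zero_le_one : (0:ℝ) ≤ 1)] at this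
  have hYc : ContinuousOn y (Icc 0 1) := by
    refine ContinuousOn.congr hprim.neg ?_
    intro x hx
    exact hysol x hx
  -- continuity of w
  set w : ℝ → ℝ := fun t => y t ^ θ - φ t ^ θ with hwdef
  have hwc : ContinuousOn w (Icc 0 1) :=
    (hYc.rpow_const (fun x _ => Or.inr hθ0.le)).sub
      (hφcont.rpow_const (fun x _ => Or.inr hθ0.le))
  -- the comparison lemma on compact subintervals
  have lemM : ∀ a b : ℝ, 0 < a → b < 1 → a ≤ b → (∀ s ∈ Icc a b, φ s ≤ y s) →
      w a ≤ w b := by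
    intro a b ha hb1 hab hyφ
    have hsubo : Icc a b ⊆ Ioo (0:ℝ) 1 :=
      fun x hx => ⟨lt_of_lt_of_le ha hx.1, lt_of_le_of_lt hx.2 hb1⟩
    have hsub01 : Icc a b ⊆ Icc (0:ℝ) 1 :=
      fun x hx => ⟨(ha.trans_le hx.1).le, (hx.2.trans_lt hb1).le⟩
    obtain ⟨z, hz, hzmin⟩ := isCompact_Icc.exists_isMinOn (nonempty_Icc.2 hab)
      (hφcont.mono hsub01)
    set δ : ℝ := φ z with hδdef
    have hδ : 0 < δ := hφpos z (hsubo hz)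
    have hφδ : ∀ τ ∈ Icc a b, δ ≤ φ τ := fun τ hτ => hzmin hτ
    have hyδ : ∀ τ ∈ Icc a b, δ ≤ y τ := fun τ hτ => le_trans (hφδ τ hτ) (hyφ τ hτ)
    have hA := lemA hab hθ0 hθ1.le hδ hφδ (hφcont.mono hsub01) (hφint.mono_set hsub01)
      (fun a' ha' b' hb' h' => hφsuper a' (hsub01 ha') b' (hsub01 hb') h')
    have hsol : ∀ a' ∈ Icc a b, ∀ b' ∈ Icc a b, a' ≤ b' →
        y b' - y a' = ∫ τ in a'..b', Fy τ := by
      intro a' ha' b' hb' h'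
      have ha'01 := hsub01 ha'
      have hb'01 := hsub01 hb'
      have ia : IntervalIntegrable Fy volume a' b' :=
        (intervalIntegrable_iff_integrableOn_Icc_of_le h').2
          (hFint.mono_set (Icc_subset_Icc ha'01.1 hb'01.2))
      have ib : IntervalIntegrable Fy volume b' 1 :=
        (intervalIntegrable_iff_integrableOn_Icc_of_le hb'01.2).2
          (hFint.mono_set (Icc_subset_Icc hb'01.1 le_rfl))
      have hadd := intervalIntegral.integral_add_adjacent_intervals ia ib
      rw [hysol a' ha'01, hysol b' hb'01]
      linarith [hadd]
    have hB := lemB hab hθ0 hθ1.le hδ hyδ (hYc.mono hsub01) (hFint.mono_set hsub01) hsol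
    -- integrability of the two integrands
    have hIy : IntegrableOn (fun τ => (θ * y τ ^ (θ - 1)) * Fy τ) (Icc a b) := by
      refine integrableOn_cont_mul ?_ (hFint.mono_set hsub01)
      exact continuousOn_const.mul (((hYc.mono hsub01)).rpow_const
        (fun τ hτ => Or.inl (ne_of_gt (lt_of_lt_of_le hδ (hyδ τ hτ)))))
    have hIφ : IntegrableOn (fun τ => (θ * φ τ ^ (θ - 1)) * Fφ τ) (Icc a b) := by
      refine integrableOn_cont_mul ?_ (hφint.mono_set hsub01)
      exact continuousOn_const.mul (((hφcont.mono hsub01)).rpow_const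
        (fun τ hτ => Or.inl (ne_of_gt (lt_of_lt_of_le hδ (hφδ τ hτ)))))
    have hIyi : IntervalIntegrable (fun τ => (θ * y τ ^ (θ - 1)) * Fy τ) volume a b :=
      (intervalIntegrable_iff_integrableOn_Icc_of_le hab).2 hIy
    have hIφi : IntervalIntegrable (fun τ => (θ * φ τ ^ (θ - 1)) * Fφ τ) volume a b :=
      (intervalIntegrable_iff_integrableOn_Icc_of_le hab).2 hIφ
    have hdiff : (∫ τ in a..b, ((θ * y τ ^ (θ - 1)) * Fy τ - (θ * φ τ ^ (θ - 1)) * Fφ τ))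
        ≤ w b - w a := by
      rw [intervalIntegral.integral_sub hIyi hIφi]
      simp only [hwdef]
      linarith [hA, hB]
    have heq : (∫ τ in a..b, ((θ * y τ ^ (θ - 1)) * Fy τ - (θ * φ τ ^ (θ - 1)) * Fφ τ))
        = ∫ τ in a..b, f τ * (φ τ ^ (θ - 1) - y τ ^ (θ - 1)) := by
      refine intervalIntegral.integral_congr ?_
      rw [uIcc_of_le hab]
      intro τ hτ
      have hyτ : 0 < y τ := lt_of_lt_of_le hδ (hyδ τ hτ)
      have hφτ : 0 < φ τ := lt_of_lt_of_le hδ (hφδ τ hτ)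
      have hmy : max (y τ) 0 = y τ := max_eq_left hyτ.le
      have hmφ : max (φ τ) 0 = φ τ := max_eq_left hφτ.le
      have hsum : θ - 1 + 1 / p = 0 := by rw [hθdef]; ring
      have ey : y τ ^ (θ - 1) * y τ ^ (1 / p) = 1 := by
        rw [← Real.rpow_add hyτ, hsum, Real.rpow_zero]
      have eφ : φ τ ^ (θ - 1) * φ τ ^ (1 / p) = 1 := by
        rw [← Real.rpow_add hφτ, hsum, Real.rpow_zero]
      simp only [hFydef, hFφdef, hmy, hmφ]
      have c1 : (θ * y τ ^ (θ - 1)) * (p' * ((c - h τ) * y τ ^ (1 / p) - f τ))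
          = (θ * p') * ((c - h τ) * (y τ ^ (θ - 1) * y τ ^ (1 / p)))
            - (θ * p') * (y τ ^ (θ - 1) * f τ) := by ring
      have c2 : (θ * φ τ ^ (θ - 1)) * (p' * ((c - h τ) * φ τ ^ (1 / p) - f τ))
          = (θ * p') * ((c - h τ) * (φ τ ^ (θ - 1) * φ τ ^ (1 / p)))
            - (θ * p') * (φ τ ^ (θ - 1) * f τ) := by ring
      rw [c1, c2, ey, eφ, hθp']
      ring
    have hpos : 0 ≤ ∫ τ in a..b, f τ * (φ τ ^ (θ - 1) - y τ ^ (θ - 1)) := by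
      refine intervalIntegral.integral_nonneg hab ?_
      intro τ hτ
      have hyτ : 0 < y τ := lt_of_lt_of_le hδ (hyδ τ hτ)
      have hφτ : 0 < φ τ := lt_of_lt_of_le hδ (hφδ τ hτ)
      have hfτ : 0 < f τ := hfpos τ (hsubo hτ)
      have hle : y τ ^ (θ - 1) ≤ φ τ ^ (θ - 1) := by
        rw [show θ - 1 = -(1 - θ) by ring, Real.rpow_neg hφτ.le, Real.rpow_neg hyτ.le]
        have hbase := Real.rpow_le_rpow hφτ.le (hyφ τ hτ) (by linarith : (0:ℝ) ≤ 1 - θ)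
        exact inv_anti₀ (Real.rpow_pos_of_pos hφτ _) hbase
      exact mul_nonneg hfτ.le (sub_nonneg.2 hle)
    rw [heq] at hdiff
    linarith
  -- suppose the conclusion fails
  by_contra hcon
  push_neg at hcon
  obtain ⟨t₁, ht₁mem, ht₁⟩ := hcon
  -- find a point in the open interval where φ < y
  obtain ⟨t₀, ht₀mem, ht₀⟩ : ∃ t₀ ∈ Ioo (0:ℝ) 1, φ t₀ < y t₀ := by
    rcases eq_or_lt_of_le ht₁mem.1 with h0 | h0
    · -- t₁ = 0
      have ht₁0 : t₁ = 0 := h0.symm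
      subst ht₁0
      have hw0 : ContinuousWithinAt (fun t => y t - φ t) (Icc 0 1) 0 :=
        (hYc.sub hφcont) 0 (left_mem_Icc.2 zero_le_one)
      have hev : ∀ᶠ x in nhdsWithin 0 (Icc (0:ℝ) 1), 0 < y x - φ x :=
        hw0.eventually (eventually_gt_nhds (sub_pos.2 ht₁))
      have hev2 := hev.filter_mono (nhdsWithin_mono 0 Ioo_subset_Icc_self)
      have hne : (nhdsWithin (0:ℝ) (Ioo (0:ℝ) 1)).NeBot := by
        rw [← mem_closure_iff_nhdsWithin_neBot, closure_Ioo (by norm_num : (0:ℝ) ≠ 1)]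
        exact ⟨le_refl 0, zero_le_one⟩
      obtain ⟨x, hx1, hx2⟩ := (hev2.and eventually_mem_nhdsWithin).exists
      exact ⟨x, hx2, by linarith⟩
    · rcases eq_or_lt_of_le ht₁mem.2 with h1 | h1
      · exfalso
        rw [h1] at ht₁
        rw [hy1] at ht₁
        linarith
      · exact ⟨t₁, ⟨h0, h1⟩, ht₁⟩
  have hφt₀ : 0 < φ t₀ := hφpos t₀ ht₀mem
  have hyt₀ : 0 < y t₀ := hypos t₀ ht₀mem
  set d₀ : ℝ := w t₀ with hd₀def
  have hd₀ : 0 < d₀ := by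
    have := Real.rpow_lt_rpow hφt₀.le ht₀ hθ0
    simp only [hd₀def, hwdef]; linarith
  -- main claim : d₀ ≤ w r for all r ∈ [t₀, 1)
  have main : ∀ r ∈ Ico t₀ 1, d₀ ≤ w r := by
    rintro r ⟨hrt₀, hr1⟩
    set K : Set ℝ := {x | x ∈ Icc t₀ r ∧ ∀ s ∈ Icc t₀ x, d₀ ≤ w s} with hKdef
    have ht₀K : t₀ ∈ K := by
      refine ⟨⟨le_refl _, hrt₀⟩, ?_⟩
      intro s hs
      have : s = t₀ := le_antisymm hs.2 hs.1
      rw [this]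
    have hKne : K.Nonempty := ⟨t₀, ht₀K⟩
    have hKbdd : BddAbove K := ⟨r, fun x hx => hx.1.2⟩
    set T : ℝ := sSup K with hTdef
    have hTmem : T ∈ Icc t₀ r := ⟨le_csSup hKbdd ht₀K, csSup_le hKne (fun x hx => hx.1.2)⟩
    have hT01 : T ∈ Icc (0:ℝ) 1 :=
      ⟨ht₀mem.1.le.trans hTmem.1, (hTmem.2.trans_lt hr1).le⟩
    have hCT : ∀ s ∈ Icc t₀ T, d₀ ≤ w s := by
      rintro s ⟨hs1, hs2⟩
      rcases lt_or_eq_of_le hs2 with hlt | heq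
      · obtain ⟨k, hkK, hk⟩ := exists_lt_of_lt_csSup hKne hlt
        exact hkK.2 s ⟨hs1, hk.le⟩
      · by_contra hcon2
        push_neg at hcon2
        have hwT : ContinuousWithinAt w (Icc 0 1) s := hwc s (heq ▸ hT01)
        have hev : ∀ᶠ x in nhdsWithin s (Icc (0:ℝ) 1), w x < d₀ :=
          hwT.eventually (eventually_lt_nhds hcon2)
        obtain ⟨ε, hε, hsubball⟩ := Metric.mem_nhdsWithin_iff.mp hev
        obtain ⟨k, hkK, hk⟩ := exists_lt_of_lt_csSup hKne
          (by have hTs : T = sSup K := rfl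
              rw [← hTs, ← heq]; linarith : s - ε < sSup K)
        have hkT : k ≤ T := le_csSup hKbdd hkK
        have hk01 : k ∈ Icc (0:ℝ) 1 :=
          ⟨ht₀mem.1.le.trans hkK.1.1, (hkK.1.2.trans_lt hr1).le⟩
        have hkball : k ∈ Metric.ball s ε := by
          rw [Metric.mem_ball, Real.dist_eq, abs_of_nonpos (by rw [← heq] at hkT; linarith)]
          rw [← heq] at hkT
          linarith
        have := hsubball ⟨hkball, hk01⟩
        have h9 : d₀ ≤ w k := hkK.2 k ⟨hkK.1.1, le_refl k⟩
        simp only [Set.mem_setOf_eq] at this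
        linarith
    rcases eq_or_lt_of_le hTmem.2 with hTr | hTr
    · exact hCT r ⟨hrt₀, le_of_eq hTr.symm⟩
    · exfalso
      have hstrict : ∀ s ∈ Icc t₀ T, φ s < y s := by
        intro s hs
        have hws := hCT s hs
        have hsIoo : s ∈ Ioo (0:ℝ) 1 :=
          ⟨ht₀mem.1.trans_le hs.1, lt_of_le_of_lt (hs.2.trans hTmem.2) hr1⟩
        by_contra hc
        push_neg at hc
        have := Real.rpow_le_rpow (hypos s hsIoo).le hc hθ0.le
        simp only [hwdef] at hws
        linarith
      have hyφTpos : 0 < y T - φ T := sub_pos.2 (hstrict T ⟨hTmem.1, le_refl T⟩)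
      have hcw : ContinuousWithinAt (fun x => y x - φ x) (Icc 0 1) T :=
        (hYc.sub hφcont) T hT01
      have hev : ∀ᶠ x in nhdsWithin T (Icc (0:ℝ) 1), 0 < y x - φ x :=
        hcw.eventually (eventually_gt_nhds hyφTpos)
      obtain ⟨ε, hε, hsubball⟩ := Metric.mem_nhdsWithin_iff.mp hev
      set T' : ℝ := min (T + ε / 2) r with hT'def
      have hT'T : T < T' := lt_min (by linarith) hTr
      have hT'r : T' ≤ r := min_le_right _ _
      have hT'ε : T' ≤ T + ε / 2 := min_le_left _ _
      have hT'K : T' ∈ K := by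
        refine ⟨⟨hTmem.1.trans hT'T.le, hT'r⟩, ?_⟩
        intro s hs
        have hs1' : s < 1 := lt_of_le_of_lt (hs.2.trans hT'r) hr1
        have hyφext : ∀ u ∈ Icc t₀ s, φ u ≤ y u := by
          intro u hu
          rcases le_or_gt u T with huT | huT
          · exact (hstrict u ⟨hu.1, huT⟩).le
          · have hu01 : u ∈ Icc (0:ℝ) 1 :=
              ⟨ht₀mem.1.le.trans hu.1, ((hu.2.trans hs.2).trans hT'r).trans hr1.le⟩
            have huball : u ∈ Metric.ball T ε := by
              rw [Metric.mem_ball, Real.dist_eq,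
                abs_of_pos (by linarith : (0:ℝ) < u - T)]
              have : u ≤ T' := hu.2.trans hs.2
              linarith
            have := hsubball ⟨huball, hu01⟩
            simp only [Set.mem_setOf_eq] at this
            linarith
        have := lemM t₀ s ht₀mem.1 hs1' hs.1 hyφext
        simp only [← hd₀def] at this ⊢
        linarith
      exact absurd (le_csSup hKbdd hT'K) (not_le.2 hT'T)
  -- final contradiction via continuity of y at 1
  have hfin : ∀ r ∈ Ico t₀ 1, d₀ ≤ y r ^ θ := by
    intro r hr
    have h1 := main r hr
    have hrIoo : r ∈ Ioo (0:ℝ) 1 := ⟨ht₀mem.1.trans_le hr.1, hr.2⟩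
    have h2 : 0 ≤ φ r ^ θ := Real.rpow_nonneg (hφpos r hrIoo).le θ
    simp only [hwdef] at h1
    linarith
  have hc1 : ContinuousWithinAt (fun x => y x ^ θ) (Icc 0 1) 1 :=
    (hYc.rpow_const (fun x _ => Or.inr hθ0.le)) 1 (right_mem_Icc.2 zero_le_one)
  have h10 : y 1 ^ θ = 0 := by rw [hy1, Real.zero_rpow (ne_of_gt hθ0)]
  have hc1' : Filter.Tendsto (fun x => y x ^ θ) (nhdsWithin 1 (Icc (0:ℝ) 1))
      (nhds (y 1 ^ θ)) := hc1
  rw [h10] at hc1'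
  have hev : ∀ᶠ x in nhdsWithin 1 (Icc (0:ℝ) 1), y x ^ θ < d₀ :=
    hc1'.eventually (eventually_lt_nhds hd₀)
  have hev2 := hev.filter_mono (nhdsWithin_mono 1
    (fun x (hx : x ∈ Ico t₀ 1) => (⟨ht₀mem.1.le.trans hx.1, hx.2.le⟩ : x ∈ Icc (0:ℝ) 1)))
  have hne : (nhdsWithin (1:ℝ) (Ico t₀ 1)).NeBot := by
    rw [← mem_closure_iff_nhdsWithin_neBot, closure_Ico (ne_of_lt ht₀mem.2)]
    exact ⟨ht₀mem.2.le, le_refl 1⟩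
  obtain ⟨x, hx1, hx2⟩ := (hev2.and eventually_mem_nhdsWithin).exists
  exact absurd (hfin x hx2) (not_le.2 hx1)
end

section
/- Let p > 1, p' = p/(p-1), h ∈ L^∞(0,1), f ∈ L^1(0,1) with f > 0 lower semicontinuous on (0,1). If c_1 ≤ c_2 and y_{c_1}, y_{c_2} denote the unique solutions of the backward problem y' = p'[(c_i - h)(y^+)^{1/p} - f], y(1) = 0, then y_{c_1}(t) ≥ y_{c_2}(t) for all t ∈ [0,1]. -/
set_option maxHeartbeats 1000000
open MeasureTheory Set Filter

namespace Stmt7Aux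

lemma II {F : ℝ → ℝ} (hF : IntegrableOn F (Icc 0 1)) {u v : ℝ}
    (hu : u ∈ Icc (0:ℝ) 1) (hv : v ∈ Icc (0:ℝ) 1) : IntervalIntegrable F volume u v := by
  rw [intervalIntegrable_iff]
  refine hF.mono_set (fun x hx => ?_)
  rcases hx with ⟨h1, h2⟩
  constructor
  · exact le_trans (le_min hu.1 hv.1) h1.le
  · exact le_trans h2 (max_le hu.2 hv.2)

lemma sol_sub {F y : ℝ → ℝ} (hF : IntegrableOn F (Icc 0 1))
    (hy : ∀ t ∈ Icc (0:ℝ) 1, y t = -∫ τ in t..1, F τ)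
    {u v : ℝ} (hu : u ∈ Icc (0:ℝ) 1) (hv : v ∈ Icc (0:ℝ) 1) :
    y v = y u + ∫ τ in u..v, F τ := by
  have h1 : (1:ℝ) ∈ Icc (0:ℝ) 1 := ⟨zero_le_one, le_rfl⟩
  have hadd := intervalIntegral.integral_add_adjacent_intervals (II hF hu hv) (II hF hv h1)
  rw [hy u hu, hy v hv]
  linarith

lemma sol_continuousOn {F y : ℝ → ℝ} (hF : IntegrableOn F (Icc 0 1))
    (hy : ∀ t ∈ Icc (0:ℝ) 1, y t = -∫ τ in t..1, F τ) :
    ContinuousOn y (Icc 0 1) := by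
  have h0 : uIcc (0:ℝ) 1 = Icc 0 1 := uIcc_of_le zero_le_one
  have hc : ContinuousOn (fun t => ∫ τ in t..1, F τ) (Icc 0 1) := by
    rw [← h0]
    exact intervalIntegral.continuousOn_primitive_interval_left (h0 ▸ hF)
  exact (hc.neg).congr (fun t ht => hy t ht)

lemma sol_nonneg {p p' c : ℝ} (hp : 1 < p) (hp'pos : 0 < p') {h f y : ℝ → ℝ}
    (hfpos : ∀ t ∈ Ioo (0:ℝ) 1, 0 < f t)
    (hFint : IntegrableOn (fun τ => p' * ((c - h τ) * (max (y τ) 0) ^ (1/p) - f τ)) (Icc 0 1))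
    (hcont : ContinuousOn y (Icc 0 1))
    (hysol : ∀ t ∈ Icc (0:ℝ) 1,
      y t = -∫ τ in t..1, p' * ((c - h τ) * (max (y τ) 0) ^ (1/p) - f τ)) :
    ∀ t ∈ Icc (0:ℝ) 1, 0 ≤ y t := by
  set F : ℝ → ℝ := fun τ => p' * ((c - h τ) * (max (y τ) 0) ^ (1/p) - f τ) with hFdef
  intro t₀ ht₀
  by_contra hneg
  push_neg at hneg
  have hy1 : y 1 = 0 := by
    have := hysol 1 ⟨zero_le_one, le_rfl⟩
    simpa using this
  set B : Set ℝ := Icc t₀ 1 ∩ y ⁻¹' (Ici 0) with hBdef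
  have hBclosed : IsClosed B :=
    (hcont.mono (Icc_subset_Icc ht₀.1 le_rfl)).preimage_isClosed_of_isClosed
      isClosed_Icc isClosed_Ici
  have hne : B.Nonempty := ⟨1, ⟨ht₀.2, le_rfl⟩, by simp [hy1]⟩
  have hbdd : BddBelow B := ⟨t₀, fun x hx => hx.1.1⟩
  set T := sInf B with hTdef
  have hTB : T ∈ B := hBclosed.csInf_mem hne hbdd
  have hTt₀ : t₀ ≤ T := hTB.1.1
  have hT1 : T ≤ 1 := hTB.1.2
  have hyT : 0 ≤ y T := hTB.2
  have hTmem : T ∈ Icc (0:ℝ) 1 := ⟨le_trans ht₀.1 hTt₀, hT1⟩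
  have hmax : ∀ τ ∈ Ioo t₀ T, F τ = -(p' * f τ) := by
    intro τ hτ
    have hτB : τ ∉ B := by
      intro hmem
      exact absurd (csInf_le hbdd hmem) (not_le.2 hτ.2)
    have hyτ : y τ < 0 := by
      by_contra hy'
      push_neg at hy'
      exact hτB ⟨⟨hτ.1.le, le_trans hτ.2.le hT1⟩, hy'⟩
    have : max (y τ) 0 = 0 := max_eq_right hyτ.le
    rw [hFdef]
    simp only [this]
    rw [Real.zero_rpow (by positivity)]
    ring
  have heq : y T = y t₀ + ∫ τ in t₀..T, F τ := sol_sub hFint hysol ht₀ hTmem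
  have hival : ∫ τ in t₀..T, F τ ≤ 0 := by
    rw [intervalIntegral.integral_of_le hTt₀,
      setIntegral_congr_set Ioo_ae_eq_Ioc.symm,
      setIntegral_congr_fun measurableSet_Ioo hmax]
    rw [integral_neg]
    simp only [neg_nonpos]
    refine setIntegral_nonneg measurableSet_Ioo (fun τ hτ => ?_)
    have : τ ∈ Ioo (0:ℝ) 1 := ⟨lt_of_le_of_lt ht₀.1 hτ.1, lt_of_lt_of_le hτ.2 hT1⟩
    exact mul_nonneg hp'pos.le (hfpos τ this).le
  linarith

lemma sol_pos {p p' c M : ℝ} (hp : 1 < p) (hp' : p' = p / (p-1)) {h f y : ℝ → ℝ}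
    (hfpos : ∀ t ∈ Ioo (0:ℝ) 1, 0 < f t)
    (hflsc : LowerSemicontinuousOn f (Ioo 0 1))
    (hfint : IntegrableOn f (Ioo 0 1))
    (hhb : ∀ t ∈ Ioo (0:ℝ) 1, |h t| ≤ M)
    (hFint : IntegrableOn (fun τ => p' * ((c - h τ) * (max (y τ) 0) ^ (1/p) - f τ)) (Icc 0 1))
    (hcont : ContinuousOn y (Icc 0 1))
    (hnn : ∀ t ∈ Icc (0:ℝ) 1, 0 ≤ y t)
    (hysol : ∀ t ∈ Icc (0:ℝ) 1,
      y t = -∫ τ in t..1, p' * ((c - h τ) * (max (y τ) 0) ^ (1/p) - f τ)) :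
    ∀ t ∈ Ioo (0:ℝ) 1, 0 < y t := by
  have hppos : 0 < p := lt_trans zero_lt_one hp
  have hp'pos : 0 < p' := by rw [hp']; exact div_pos hppos (by linarith)
  have hpne : p ≠ 0 := ne_of_gt hppos
  have hpp : 1/p' + 1/p = 1 := by
    rw [hp', one_div_div, ← add_div, sub_add_cancel, div_self hpne]
  set F : ℝ → ℝ := fun τ => p' * ((c - h τ) * (max (y τ) 0) ^ (1/p) - f τ) with hFdef
  set g : ℝ → ℝ := fun τ => (c - h τ) * (max (y τ) 0) ^ (1/p) with hgdef
  intro t₀ ht₀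
  by_contra hncontra
  push_neg at hncontra
  have ht₀' : t₀ ∈ Icc (0:ℝ) 1 := ⟨ht₀.1.le, ht₀.2.le⟩
  have hy0 : y t₀ = 0 := le_antisymm hncontra (hnn t₀ ht₀')
  -- constants
  set K : ℝ := |c| + M + 1 with hKdef
  have hM0 : 0 ≤ M := le_trans (abs_nonneg _) (hhb t₀ ht₀)
  have hKpos : 0 < K := by positivity
  have hKb : ∀ τ ∈ Ioo (0:ℝ) 1, |c - h τ| ≤ K := by
    intro τ hτ
    have h1 : |c - h τ| ≤ |c| + |h τ| := by
      rw [sub_eq_add_neg]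
      exact (abs_add_le _ _).trans (by rw [abs_neg])
    have := hhb τ hτ
    rw [hKdef]; linarith
  set μ : ℝ := f t₀ / 2 with hμdef
  have hμpos : 0 < μ := half_pos (hfpos t₀ ht₀)
  -- lsc neighbourhood
  have hlsc := hflsc t₀ ht₀ μ (half_lt_self (hfpos t₀ ht₀))
  rw [nhdsWithin_eq_nhds.2 (isOpen_Ioo.mem_nhds ht₀)] at hlsc
  rcases Metric.eventually_nhds_iff.1 hlsc with ⟨δ, hδpos, hδ⟩
  -- integrability of g and f on Icc 0 1
  have hfIcc : IntegrableOn f (Icc 0 1) := by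
    have hres : volume.restrict (Icc (0:ℝ) 1) = volume.restrict (Ioo 0 1) :=
      (Measure.restrict_congr_set Ioo_ae_eq_Icc).symm
    rw [IntegrableOn, hres]; exact hfint
  have hgF : g = fun τ => (1/p') * F τ + f τ := by
    funext τ; rw [hgdef, hFdef]; field_simp; ring
  have hg_int : IntegrableOn g (Icc 0 1) := by
    rw [hgF]; exact (hFint.const_mul _).add hfIcc
  -- choice of ε
  obtain ⟨X, hXdef⟩ : ∃ X : ℝ, X = (μ/K) ^ p := ⟨_, rfl⟩
  have hXpos : 0 < X := hXdef ▸ Real.rpow_pos_of_pos (div_pos hμpos hKpos) _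
  obtain ⟨ε₀, hε₀def⟩ : ∃ e : ℝ, e = X ^ (1/p') / (2 * p' * K) := ⟨_, rfl⟩
  have hε₀pos : 0 < ε₀ := by
    rw [hε₀def]
    apply div_pos (Real.rpow_pos_of_pos hXpos _); positivity
  obtain ⟨ε, hεdef⟩ : ∃ e : ℝ, e = min (min (δ/2) ((1 - t₀)/2)) ε₀ := ⟨_, rfl⟩
  have hεpos : 0 < ε := by
    rw [hεdef]
    apply lt_min (lt_min (half_pos hδpos) _) hε₀pos
    have := ht₀.2; linarith
  have hεδ : ε < δ := by
    rw [hεdef]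
    exact lt_of_le_of_lt (le_trans (min_le_left _ _) (min_le_left _ _)) (by linarith)
  have hεt1 : t₀ + ε < 1 := by
    have h1 : ε ≤ (1 - t₀)/2 := by
      rw [hεdef]; exact le_trans (min_le_left _ _) (min_le_right _ _)
    have := ht₀.2; linarith
  have hεε₀ : ε ≤ ε₀ := by rw [hεdef]; exact min_le_right _ _
  obtain ⟨t, htdef⟩ : ∃ e : ℝ, e = t₀ + ε := ⟨_, rfl⟩
  have ht₀t : t₀ < t := by rw [htdef]; linarith
  have hsub : Icc t₀ t ⊆ Icc (0:ℝ) 1 := Icc_subset_Icc ht₀.1.le (by rw [htdef]; linarith)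
  have hsubIoo : Ioc t₀ t ⊆ Ioo (0:ℝ) 1 := fun τ hτ =>
    ⟨lt_of_le_of_lt ht₀.1.le hτ.1, lt_of_le_of_lt hτ.2 (by rw [htdef]; exact hεt1)⟩
  -- max of y on [t₀, t]
  obtain ⟨s, hsmem, hsmax⟩ :=
    isCompact_Icc.exists_isMaxOn (nonempty_Icc.2 ht₀t.le) (hcont.mono hsub)
  rw [isMaxOn_iff] at hsmax
  set Mv : ℝ := y s with hMvdef
  have hMnn : 0 ≤ Mv := hnn s (hsub hsmem)
  -- integral bounds
  have hIg : ∀ u ∈ Icc t₀ t, ∫ τ in Ioc t₀ u, g τ ≤ ε * (K * Mv ^ (1/p)) := by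
    intro u hu
    have hsubu : Ioc t₀ u ⊆ Ioc t₀ t := Ioc_subset_Ioc le_rfl hu.2
    have hbd : ∀ τ ∈ Ioc t₀ u, g τ ≤ K * Mv ^ (1/p) := by
      intro τ hτ
      have hτIoo : τ ∈ Ioo (0:ℝ) 1 := hsubIoo (hsubu hτ)
      have hXnn : (0:ℝ) ≤ max (y τ) 0 := le_max_right _ _
      have hrnn : (0:ℝ) ≤ (max (y τ) 0) ^ (1/p) := Real.rpow_nonneg hXnn _
      have h1 : g τ ≤ |c - h τ| * (max (y τ) 0) ^ (1/p) :=
        mul_le_mul_of_nonneg_right (le_abs_self _) hrnn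
      refine le_trans h1 (mul_le_mul (hKb τ hτIoo) ?_ hrnn hKpos.le)
      refine Real.rpow_le_rpow hXnn (max_le ?_ hMnn) (by positivity)
      exact hsmax τ ⟨hτ.1.le, le_trans hτ.2 hu.2⟩
    have hconst : IntegrableOn (fun _ : ℝ => K * Mv ^ (1/p)) (Ioc t₀ u) :=
      integrableOn_const measure_Ioc_lt_top.ne
    have hgi : IntegrableOn g (Ioc t₀ u) :=
      hg_int.mono_set (fun τ hτ => Ioo_subset_Icc_self (hsubIoo (hsubu hτ)))
    have hmono := setIntegral_mono_on hgi hconst measurableSet_Ioc hbd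
    refine le_trans hmono ?_
    rw [setIntegral_const, measureReal_def, Real.volume_Ioc, smul_eq_mul,
      ENNReal.toReal_ofReal (by linarith [hu.1])]
    have hu2 : u - t₀ ≤ ε := by have := hu.2; rw [htdef] at this; linarith
    have hC : 0 ≤ K * Mv ^ (1/p) := mul_nonneg hKpos.le (Real.rpow_nonneg hMnn _)
    exact mul_le_mul_of_nonneg_right hu2 hC
  have hIf0 : ∀ u ∈ Icc t₀ t, 0 ≤ ∫ τ in Ioc t₀ u, f τ := by
    intro u hu
    exact setIntegral_nonneg measurableSet_Ioc
      (fun τ hτ => (hfpos τ (hsubIoo (Ioc_subset_Ioc le_rfl hu.2 hτ))).le)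
  have hIf : μ * ε ≤ ∫ τ in Ioc t₀ t, f τ := by
    have hconst : IntegrableOn (fun _ : ℝ => μ) (Ioc t₀ t) :=
      integrableOn_const measure_Ioc_lt_top.ne
    have hfInt' : IntegrableOn f (Ioc t₀ t) := hfint.mono_set hsubIoo
    have hbd : ∀ τ ∈ Ioc t₀ t, μ ≤ f τ := by
      intro τ hτ
      refine (hδ ?_).le
      rw [Real.dist_eq, abs_of_pos (by linarith [hτ.1] : (0:ℝ) < τ - t₀)]
      have := hτ.2; rw [htdef] at this; linarith
    have hmono := setIntegral_mono_on hconst hfInt' measurableSet_Ioc hbd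
    refine le_trans ?_ hmono
    rw [setIntegral_const, measureReal_def, Real.volume_Ioc, smul_eq_mul,
      ENNReal.toReal_ofReal (by rw [htdef]; linarith)]
    rw [htdef]; ring_nf; exact le_rfl
  -- the equation
  have hyu : ∀ u ∈ Icc t₀ t,
      y u = p' * ((∫ τ in Ioc t₀ u, g τ) - ∫ τ in Ioc t₀ u, f τ) := by
    intro u hu
    have h1 := sol_sub hFint hysol ht₀' (hsub hu)
    rw [hy0, zero_add] at h1
    have hsubu : Ioc t₀ u ⊆ Ioo (0:ℝ) 1 := fun τ hτ =>
      hsubIoo (Ioc_subset_Ioc le_rfl hu.2 hτ)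
    have hgi : IntegrableOn g (Ioc t₀ u) :=
      hg_int.mono_set (fun τ hτ => Ioo_subset_Icc_self (hsubu hτ))
    have hfi : IntegrableOn f (Ioc t₀ u) := hfint.mono_set hsubu
    rw [h1, intervalIntegral.integral_of_le hu.1]
    have hFgf : ∀ τ, F τ = p' * (g τ - f τ) := fun τ => rfl
    calc ∫ τ in Ioc t₀ u, F τ = ∫ τ in Ioc t₀ u, p' * (g τ - f τ) := by
          simp only [hFgf]
    _ = p' * ∫ τ in Ioc t₀ u, (g τ - f τ) := integral_const_mul _ _
    _ = p' * ((∫ τ in Ioc t₀ u, g τ) - ∫ τ in Ioc t₀ u, f τ) := by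
          rw [integral_sub hgi hfi]
  -- at the max point s
  have hMle : Mv ≤ p' * (ε * (K * Mv ^ (1/p))) := by
    have heq := hyu s hsmem
    rw [← hMvdef] at heq
    refine le_trans (le_of_eq heq) ?_
    refine mul_le_mul_of_nonneg_left ?_ hp'pos.le
    linarith [hIg s hsmem, hIf0 s hsmem]
  -- at t
  have htmem : t ∈ Icc t₀ t := ⟨ht₀t.le, le_rfl⟩
  have h0le : 0 ≤ y t := hnn t (hsub htmem)
  have hKM : μ ≤ K * Mv ^ (1/p) := by
    have heq := hyu t htmem
    rw [heq] at h0le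
    have hz : 0 ≤ (∫ τ in Ioc t₀ t, g τ) - ∫ τ in Ioc t₀ t, f τ :=
      (mul_nonneg_iff_of_pos_left hp'pos).1 h0le
    have h2 : μ * ε ≤ ε * (K * Mv ^ (1/p)) := by
      have := hIg t htmem
      linarith [hIf]
    nlinarith [hεpos]
  have hXrpos : 0 < Mv ^ (1/p) :=
    lt_of_lt_of_le (div_pos hμpos hKpos) ((div_le_iff₀' hKpos).2 hKM)
  have hMvpos : 0 < Mv := by
    rcases hMnn.lt_or_eq with hlt | heq
    · exact hlt
    · exfalso
      rw [← heq, Real.zero_rpow (by positivity)] at hXrpos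
      exact lt_irrefl 0 hXrpos
  -- upper bound for Mv
  have hfrac : Mv ^ (1/p') ≤ p' * K * ε := by
    have hsplit : Mv = Mv ^ (1/p') * Mv ^ (1/p) := by
      rw [← Real.rpow_add hMvpos, hpp, Real.rpow_one]
    have hstep : Mv ^ (1/p') * Mv ^ (1/p) ≤ (p' * K * ε) * Mv ^ (1/p) := by
      rw [← hsplit]; nlinarith [hMle]
    exact le_of_mul_le_mul_right hstep hXrpos
  have hMup : Mv ≤ (p' * K * ε) ^ p' := by
    have h1 := Real.rpow_le_rpow (Real.rpow_nonneg hMnn _) hfrac hp'pos.le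
    have hid : (Mv ^ (1/p')) ^ p' = Mv := by
      rw [← Real.rpow_mul hMnn, one_div_mul_cancel (ne_of_gt hp'pos), Real.rpow_one]
    rwa [hid] at h1
  -- lower bound for Mv
  have hXle : X ≤ Mv := by
    have h1 := Real.rpow_le_rpow (div_pos hμpos hKpos).le
      ((div_le_iff₀' hKpos).2 hKM) hppos.le
    have hid : (Mv ^ (1/p)) ^ p = Mv := by
      rw [← Real.rpow_mul hMnn, one_div_mul_cancel (ne_of_gt hppos), Real.rpow_one]
    calc X = (μ/K) ^ p := hXdef
    _ ≤ (Mv ^ (1/p)) ^ p := h1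
    _ = Mv := hid
  -- contradiction
  have hfinal : (p' * K * ε) ^ p' < X := by
    have hb : 0 ≤ p' * K * ε := by positivity
    have hmono : (p' * K * ε) ^ p' ≤ (p' * K * ε₀) ^ p' :=
      Real.rpow_le_rpow hb (mul_le_mul_of_nonneg_left hεε₀ (by positivity)) hp'pos.le
    have hval : p' * K * ε₀ = X ^ (1/p') / 2 := by
      rw [hε₀def]
      have hK0 : K ≠ 0 := ne_of_gt hKpos
      have hp'0 : p' ≠ 0 := ne_of_gt hp'pos
      field_simp
    have hcube : (X ^ (1/p') / 2) ^ p' = X / 2 ^ p' := by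
      rw [Real.div_rpow (Real.rpow_nonneg hXpos.le _) (by norm_num : (0:ℝ) ≤ 2)]
      congr 1
      rw [← Real.rpow_mul hXpos.le, one_div_mul_cancel (ne_of_gt hp'pos), Real.rpow_one]
    have h2p : 1 < (2:ℝ) ^ p' :=
      (Real.one_lt_rpow_iff_of_pos (by norm_num)).2 (Or.inl ⟨by norm_num, hp'pos⟩)
    have hlt : X / 2 ^ p' < X := div_lt_self hXpos h2p
    calc (p' * K * ε) ^ p' ≤ (p' * K * ε₀) ^ p' := hmono
    _ = X / 2 ^ p' := by rw [hval, hcube]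
    _ < X := hlt
  linarith

lemma mul3_le {q X C B : ℝ} (hq : 0 ≤ q) (hX : X ≤ C) (hX0 : 0 ≤ X) (hB : 0 ≤ B) :
    q * X * B ≤ q * C * B := by nlinarith [mul_nonneg (mul_nonneg hq hB) (sub_nonneg.2 hX)]

lemma chain_eq {F z : ℝ → ℝ} {a d m q : ℝ} (had : a < d) (hm : 0 < m)
    (hq : 0 < q) (hq1 : q ≤ 1)
    (hF : IntegrableOn F (Ioc a d))
    (hz : ∀ t ∈ Icc a d, z t = z a + ∫ τ in a..t, F τ)
    (hzm : ∀ t ∈ Icc a d, m ≤ z t) :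
    IntegrableOn (fun τ => q * (z τ) ^ (q - 1) * F τ) (Ioc a d) ∧
    (z d) ^ q = (z a) ^ q + ∫ τ in Ioc a d, q * (z τ) ^ (q - 1) * F τ := by
  have hq1' : q - 1 ≤ 0 := by linarith
  have huIcc : uIcc a d = Icc a d := uIcc_of_le had.le
  have hFIcc : IntegrableOn F (Icc a d) := by
    rw [IntegrableOn, ← Measure.restrict_congr_set Ioc_ae_eq_Icc]; exact hF
  have hFII : ∀ t ∈ Icc a d, IntervalIntegrable F volume a t := by
    intro t ht
    rw [intervalIntegrable_iff]
    refine hF.mono_set ?_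
    rw [uIoc_of_le ht.1]
    exact Ioc_subset_Ioc le_rfl ht.2
  -- continuity of z on [a,d]
  have hzc : ContinuousOn z (Icc a d) := by
    have hprim : ContinuousOn (fun t => z a + ∫ τ in a..t, F τ) (Icc a d) := by
      refine continuousOn_const.add ?_
      have h2 := intervalIntegral.continuousOn_primitive_interval
        (μ := volume) (a := a) (b := d) (f := F) (by rwa [huIcc])
      rwa [huIcc] at h2
    exact hprim.congr hz
  -- constants
  obtain ⟨C2, hC2⟩ : ∃ C2 : ℝ, C2 = (m/2) ^ (q - 1) := ⟨_, rfl⟩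
  have hC2pos : 0 < C2 := hC2 ▸ Real.rpow_pos_of_pos (half_pos hm) _
  have hrpow_le : ∀ x : ℝ, m/2 ≤ x → x ^ (q-1) ≤ C2 := by
    intro x hx
    rw [hC2]
    exact Real.rpow_le_rpow_of_nonpos (half_pos hm) hx hq1'
  -- approximations
  obtain ⟨δ, hδdef⟩ : ∃ δf : ℕ → ℝ, δf = fun n : ℕ => min (m/2) (1/((n:ℝ)+1)) := ⟨_, rfl⟩
  have hδpos : ∀ n, 0 < δ n := by
    intro n; rw [hδdef]; exact lt_min (half_pos hm) (by positivity)
  have hδm : ∀ n, δ n ≤ m/2 := by intro n; rw [hδdef]; exact min_le_left _ _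
  have hδlim : Tendsto δ atTop (nhds 0) := by
    apply squeeze_zero (fun n => (hδpos n).le) (fun n => ?_)
    · exact tendsto_one_div_add_atTop_nhds_zero_nat
    · rw [hδdef]; exact min_le_right _ _
  have hFind : Integrable ((Ioc a d).indicator F) volume :=
    hF.integrable_indicator measurableSet_Ioc
  have hGex : ∀ n : ℕ, ∃ G : ℝ → ℝ, Continuous G ∧
      (∫ τ in Ioc a d, |F τ - G τ|) ≤ δ n ∧ Integrable G volume := by
    intro n
    obtain ⟨G, _, hGle, hGcont, hGint⟩ :=
      hFind.exists_hasCompactSupport_integral_sub_le (hδpos n)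
    refine ⟨G, hGcont, ?_, hGint⟩
    have h1 : ∀ τ ∈ Ioc a d, |F τ - G τ| = ‖(Ioc a d).indicator F τ - G τ‖ := by
      intro τ hτ; rw [indicator_of_mem hτ]; rfl
    calc (∫ τ in Ioc a d, |F τ - G τ|)
        = ∫ τ in Ioc a d, ‖(Ioc a d).indicator F τ - G τ‖ :=
          setIntegral_congr_fun measurableSet_Ioc h1
    _ ≤ ∫ τ, ‖(Ioc a d).indicator F τ - G τ‖ :=
          setIntegral_le_integral ((hFind.sub hGint).norm)
            (Eventually.of_forall (fun x => norm_nonneg _))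
    _ ≤ δ n := hGle
  choose G hGcont hGle hGint using hGex
  -- the approximating primitives
  obtain ⟨w, hwdef⟩ : ∃ w : ℕ → ℝ → ℝ, w = fun n t => z a + ∫ τ in a..t, G n τ := ⟨_, rfl⟩
  have hwderiv : ∀ n t, HasDerivAt (w n) (G n t) t := by
    intro n t
    rw [hwdef]
    exact (((hGcont n).integral_hasStrictDerivAt a t).hasDerivAt).const_add (z a)
  have hwcont : ∀ n, Continuous (w n) := fun n =>
    continuous_iff_continuousAt.2 (fun t => (hwderiv n t).continuousAt)
  have habsint : ∀ n, IntegrableOn (fun τ => |F τ - G n τ|) (Ioc a d) :=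
    fun n => (hF.sub ((hGint n).integrableOn)).norm
  have hwclose : ∀ n, ∀ t ∈ Icc a d, |w n t - z t| ≤ δ n := by
    intro n t ht
    have h1 : w n t - z t = ∫ τ in a..t, (G n τ - F τ) := by
      rw [hwdef, hz t ht,
        intervalIntegral.integral_sub ((hGcont n).intervalIntegrable _ _) (hFII t ht)]
      ring
    rw [h1, intervalIntegral.integral_of_le ht.1]
    calc |∫ τ in Ioc a t, (G n τ - F τ)| ≤ ∫ τ in Ioc a t, |G n τ - F τ| := by
          simpa [Real.norm_eq_abs] using
            norm_integral_le_integral_norm (μ := volume.restrict (Ioc a t))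
              (f := fun τ => G n τ - F τ)
    _ = ∫ τ in Ioc a t, |F τ - G n τ| := by
          refine setIntegral_congr_fun measurableSet_Ioc (fun τ _ => abs_sub_comm _ _)
    _ ≤ ∫ τ in Ioc a d, |F τ - G n τ| := by
          refine setIntegral_mono_set (habsint n)
            (Eventually.of_forall (fun τ => abs_nonneg _)) ?_
          exact HasSubset.Subset.eventuallyLE (Ioc_subset_Ioc le_rfl ht.2)
    _ ≤ δ n := hGle n
  have hwm : ∀ n, ∀ t ∈ Icc a d, m/2 ≤ w n t := by
    intro n t ht
    have h1 := (abs_le.1 (hwclose n t ht)).1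
    have h2 := hzm t ht
    have h3 := hδm n
    linarith
  have hwpos : ∀ n, ∀ t ∈ Icc a d, (0:ℝ) < w n t :=
    fun n t ht => lt_of_lt_of_le (half_pos hm) (hwm n t ht)
  -- FTC for each n
  have hFTC : ∀ n, (w n d) ^ q
      = (z a) ^ q + ∫ τ in Ioc a d, q * (w n τ) ^ (q-1) * (G n τ) := by
    intro n
    have hderiv : ∀ t ∈ uIcc a d,
        HasDerivAt (fun u => (w n u) ^ q) (q * (w n t) ^ (q-1) * G n t) t := by
      intro t ht
      rw [huIcc] at ht
      have h1 : HasDerivAt (fun x : ℝ => x ^ q) (q * (w n t) ^ (q - 1)) (w n t) :=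
        Real.hasDerivAt_rpow_const (Or.inl (ne_of_gt (hwpos n t ht)))
      exact h1.comp t (hwderiv n t)
    have hInt : IntervalIntegrable (fun t => q * (w n t) ^ (q-1) * G n t) volume a d := by
      apply ContinuousOn.intervalIntegrable
      rw [huIcc]
      refine (continuousOn_const.mul ?_).mul (hGcont n).continuousOn
      exact ((hwcont n).continuousOn.rpow_const
        (fun t ht => Or.inl (ne_of_gt (hwpos n t ht))))
    have hmain := intervalIntegral.integral_eq_sub_of_hasDerivAt hderiv hInt
    have hwa : w n a = z a := by rw [hwdef]; simp
    rw [intervalIntegral.integral_of_le had.le, hwa] at hmain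
    linarith
  -- limit of LHS
  have hdmem : d ∈ Icc a d := ⟨had.le, le_rfl⟩
  have hwd : Tendsto (fun n => w n d) atTop (nhds (z d)) := by
    rw [tendsto_iff_dist_tendsto_zero]
    apply squeeze_zero (fun n => dist_nonneg) (fun n => ?_) hδlim
    rw [Real.dist_eq]; exact hwclose n d hdmem
  have hzdpos : 0 < z d := lt_of_lt_of_le hm (hzm d hdmem)
  have hLHS : Tendsto (fun n => (w n d) ^ q) atTop (nhds ((z d) ^ q)) := by
    have hcq : ContinuousAt (fun x : ℝ => x ^ q) (z d) :=
      Real.continuousAt_rpow_const _ _ (Or.inl (ne_of_gt hzdpos))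
    exact hcq.tendsto.comp hwd
  -- measurability helpers
  have hzrp : AEStronglyMeasurable (fun τ => (z τ) ^ (q-1)) (volume.restrict (Ioc a d)) := by
    refine ContinuousOn.aestronglyMeasurable ?_ measurableSet_Ioc
    exact (hzc.mono Ioc_subset_Icc_self).rpow_const
      (fun t ht => Or.inl (ne_of_gt (lt_of_lt_of_le hm (hzm t (Ioc_subset_Icc_self ht)))))
  have hwrp : ∀ n, AEStronglyMeasurable (fun τ => (w n τ) ^ (q-1))
      (volume.restrict (Ioc a d)) := by
    intro n
    refine ContinuousOn.aestronglyMeasurable ?_ measurableSet_Ioc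
    exact ((hwcont n).continuousOn.rpow_const
      (fun t ht => Or.inl (ne_of_gt (hwpos n t (Ioc_subset_Icc_self ht)))))
  have hzrb : ∀ τ ∈ Ioc a d, 0 ≤ (z τ) ^ (q-1) ∧ (z τ) ^ (q-1) ≤ C2 := by
    intro τ hτ
    have h1 : m ≤ z τ := hzm τ (Ioc_subset_Icc_self hτ)
    constructor
    · exact (Real.rpow_pos_of_pos (lt_of_lt_of_le hm h1) _).le
    · exact hrpow_le _ (by linarith)
  have hwrb : ∀ n, ∀ τ ∈ Ioc a d, 0 ≤ (w n τ) ^ (q-1) ∧ (w n τ) ^ (q-1) ≤ C2 := by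
    intro n τ hτ
    have h1 := hwm n τ (Ioc_subset_Icc_self hτ)
    exact ⟨(Real.rpow_pos_of_pos (hwpos n τ (Ioc_subset_Icc_self hτ)) _).le, hrpow_le _ h1⟩
  -- integrability of the three pieces
  have hIint : IntegrableOn (fun τ => q * (z τ) ^ (q-1) * F τ) (Ioc a d) := by
    refine Integrable.mono' ((hF.norm).const_mul (q * C2))
      ((aestronglyMeasurable_const.mul hzrp).mul hF.1) ?_
    filter_upwards [ae_restrict_mem measurableSet_Ioc] with τ hτ
    simp only [Real.norm_eq_abs]
    rw [abs_mul, abs_mul, abs_of_pos hq, abs_of_nonneg (hzrb τ hτ).1]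
    exact mul3_le hq.le (hzrb τ hτ).2 (hzrb τ hτ).1 (abs_nonneg _)
  have hi1 : ∀ n, IntegrableOn (fun τ => q * (w n τ) ^ (q-1) * (G n τ - F τ)) (Ioc a d) := by
    intro n
    refine Integrable.mono' (((habsint n)).const_mul (q * C2))
      ((aestronglyMeasurable_const.mul (hwrp n)).mul
        (((hGcont n).aestronglyMeasurable).sub hF.1)) ?_
    filter_upwards [ae_restrict_mem measurableSet_Ioc] with τ hτ
    rw [Real.norm_eq_abs, abs_mul, abs_mul, abs_of_pos hq,
      abs_of_nonneg (hwrb n τ hτ).1, abs_sub_comm (G n τ)]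
    exact mul3_le hq.le (hwrb n τ hτ).2 (hwrb n τ hτ).1 (abs_nonneg _)
  have hi2 : ∀ n, IntegrableOn
      (fun τ => q * ((w n τ) ^ (q-1) - (z τ) ^ (q-1)) * F τ) (Ioc a d) := by
    intro n
    refine Integrable.mono' ((hF.norm).const_mul (q * (2*C2)))
      ((aestronglyMeasurable_const.mul ((hwrp n).sub hzrp)).mul hF.1) ?_
    filter_upwards [ae_restrict_mem measurableSet_Ioc] with τ hτ
    simp only [Real.norm_eq_abs]
    rw [abs_mul, abs_mul, abs_of_pos hq]
    refine mul3_le hq.le ?_ (abs_nonneg _) (abs_nonneg _)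
    rw [abs_le]
    constructor
    · have := (hwrb n τ hτ).1; have := (hzrb τ hτ).2; linarith
    · have := (hwrb n τ hτ).2; have := (hzrb τ hτ).1; linarith
  -- A_n → 0
  have hA : Tendsto (fun n => ∫ τ in Ioc a d, q * (w n τ) ^ (q-1) * (G n τ - F τ))
      atTop (nhds 0) := by
    refine squeeze_zero_norm (a := fun n => (q * C2) * δ n) (fun n => ?_) ?_
    · have hb : ‖∫ τ in Ioc a d, q * (w n τ) ^ (q-1) * (G n τ - F τ)‖
          ≤ ∫ τ in Ioc a d, (q * C2) * |F τ - G n τ| := by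
        refine norm_integral_le_of_norm_le ((habsint n).const_mul (q * C2)) ?_
        filter_upwards [ae_restrict_mem measurableSet_Ioc] with τ hτ
        rw [Real.norm_eq_abs, abs_mul, abs_mul, abs_of_pos hq,
          abs_of_nonneg (hwrb n τ hτ).1, abs_sub_comm (G n τ)]
        exact mul3_le hq.le (hwrb n τ hτ).2 (hwrb n τ hτ).1 (abs_nonneg _)
      refine le_trans hb ?_
      rw [integral_const_mul]
      refine mul_le_mul_of_nonneg_left (hGle n) (by positivity)
    · have := hδlim.const_mul (q * C2)
      simpa using this
  -- B_n → 0
  have hB : Tendsto (fun n => ∫ τ in Ioc a d, q * ((w n τ) ^ (q-1) - (z τ) ^ (q-1)) * F τ)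
      atTop (nhds 0) := by
    have h0 : (0:ℝ) = ∫ τ in Ioc a d, (0:ℝ) := by simp
    rw [h0]
    refine tendsto_integral_of_dominated_convergence
      (fun τ => (q * (2*C2)) * |F τ|)
      (fun n => ((aestronglyMeasurable_const.mul ((hwrp n).sub hzrp)).mul hF.1))
      ((hF.norm).const_mul (q * (2*C2))) ?_ ?_
    · intro n
      filter_upwards [ae_restrict_mem measurableSet_Ioc] with τ hτ
      simp only [Real.norm_eq_abs]
      rw [abs_mul, abs_mul, abs_of_pos hq]
      refine mul3_le hq.le ?_ (abs_nonneg _) (abs_nonneg _)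
      rw [abs_le]
      constructor
      · have := (hwrb n τ hτ).1; have := (hzrb τ hτ).2; linarith
      · have := (hwrb n τ hτ).2; have := (hzrb τ hτ).1; linarith
    · filter_upwards [ae_restrict_mem measurableSet_Ioc] with τ hτ
      have hwτ : Tendsto (fun n => w n τ) atTop (nhds (z τ)) := by
        rw [tendsto_iff_dist_tendsto_zero]
        apply squeeze_zero (fun n => dist_nonneg) (fun n => ?_) hδlim
        rw [Real.dist_eq]; exact hwclose n τ (Ioc_subset_Icc_self hτ)
      have hzτpos : 0 < z τ := lt_of_lt_of_le hm (hzm τ (Ioc_subset_Icc_self hτ))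
      have h1 : Tendsto (fun n => (w n τ) ^ (q-1)) atTop (nhds ((z τ) ^ (q-1))) :=
        ((Real.continuousAt_rpow_const _ _ (Or.inl (ne_of_gt hzτpos))).tendsto).comp hwτ
      have h2 : Tendsto (fun n => q * ((w n τ) ^ (q-1) - (z τ) ^ (q-1)) * F τ) atTop
          (nhds (q * ((z τ) ^ (q-1) - (z τ) ^ (q-1)) * F τ)) :=
        ((h1.sub (tendsto_const_nhds (x := (z τ) ^ (q-1)))).const_mul q).mul_const (F τ)
      simpa using h2
  -- decomposition
  have hdecomp : ∀ n, (∫ τ in Ioc a d, q * (w n τ) ^ (q-1) * (G n τ))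
      = (∫ τ in Ioc a d, q * (w n τ) ^ (q-1) * (G n τ - F τ))
        + ((∫ τ in Ioc a d, q * ((w n τ) ^ (q-1) - (z τ) ^ (q-1)) * F τ)
          + ∫ τ in Ioc a d, q * (z τ) ^ (q-1) * F τ) := by
    intro n
    have hfun : (fun τ => q * (w n τ) ^ (q-1) * (G n τ)) = fun τ =>
        (q * (w n τ) ^ (q-1) * (G n τ - F τ)
          + q * ((w n τ) ^ (q-1) - (z τ) ^ (q-1)) * F τ)
          + q * (z τ) ^ (q-1) * F τ := by
      funext τ; ring
    have h12 : IntegrableOn (fun τ => q * (w n τ) ^ (q-1) * (G n τ - F τ)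
        + q * ((w n τ) ^ (q-1) - (z τ) ^ (q-1)) * F τ) (Ioc a d) := (hi1 n).add (hi2 n)
    rw [hfun, integral_add h12 hIint, integral_add (hi1 n) (hi2 n), add_assoc]
  -- limit of RHS
  have hRHS : Tendsto (fun n => ∫ τ in Ioc a d, q * (w n τ) ^ (q-1) * (G n τ))
      atTop (nhds (∫ τ in Ioc a d, q * (z τ) ^ (q-1) * F τ)) := by
    have h1 := (hA.add hB).add
      (tendsto_const_nhds (x := ∫ τ in Ioc a d, q * (z τ) ^ (q-1) * F τ))
    have h2 : (fun n => (∫ τ in Ioc a d, q * (w n τ) ^ (q-1) * (G n τ))) = fun n =>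
        ((∫ τ in Ioc a d, q * (w n τ) ^ (q-1) * (G n τ - F τ))
          + (∫ τ in Ioc a d, q * ((w n τ) ^ (q-1) - (z τ) ^ (q-1)) * F τ))
          + ∫ τ in Ioc a d, q * (z τ) ^ (q-1) * F τ := by
      funext n; rw [hdecomp n]; ring
    rw [h2]
    simpa using h1
  -- combine
  have hseq : (fun n => (w n d) ^ q) = fun n =>
      (z a) ^ q + ∫ τ in Ioc a d, q * (w n τ) ^ (q-1) * (G n τ) := funext hFTC
  rw [hseq] at hLHS
  have := tendsto_nhds_unique hLHS ((hRHS.const_add ((z a) ^ q)))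
  exact ⟨hIint, by linarith⟩

end Stmt7Aux
open Stmt7Aux in
/-- Monotone dependence on the wave speed: if `c₁ ≤ c₂` and `y₁, y₂` are the Carathéodory
solutions of the backward problems `y' = p'[(cᵢ - h)(y⁺)^{1/p} - f]`, `y(1) = 0`,
then `y₁ ≥ y₂` on `[0,1]`. -/
theorem stmt7 (p p' c₁ c₂ : ℝ) (hp : 1 < p) (hp' : p' = p / (p - 1)) (hc : c₁ ≤ c₂)
    (h f y₁ y₂ : ℝ → ℝ)
    (hhm : Measurable h) (hhb : ∃ M, ∀ t ∈ Set.Ioo (0 : ℝ) 1, |h t| ≤ M)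
    (hfint : IntegrableOn f (Set.Ioo 0 1))
    (hfpos : ∀ t ∈ Set.Ioo (0 : ℝ) 1, 0 < f t)
    (hflsc : LowerSemicontinuousOn f (Set.Ioo 0 1))
    (hF₁int : IntegrableOn
      (fun τ => p' * ((c₁ - h τ) * (max (y₁ τ) 0) ^ (1 / p) - f τ)) (Set.Icc 0 1))
    (hF₂int : IntegrableOn
      (fun τ => p' * ((c₂ - h τ) * (max (y₂ τ) 0) ^ (1 / p) - f τ)) (Set.Icc 0 1))
    (hy₁1 : y₁ 1 = 0) (hy₂1 : y₂ 1 = 0)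
    (hy₁sol : ∀ t ∈ Set.Icc (0 : ℝ) 1,
      y₁ t = -∫ τ in t..1, p' * ((c₁ - h τ) * (max (y₁ τ) 0) ^ (1 / p) - f τ))
    (hy₂sol : ∀ t ∈ Set.Icc (0 : ℝ) 1,
      y₂ t = -∫ τ in t..1, p' * ((c₂ - h τ) * (max (y₂ τ) 0) ^ (1 / p) - f τ)) :
    ∀ t ∈ Set.Icc (0 : ℝ) 1, y₂ t ≤ y₁ t := by
  have hppos : 0 < p := lt_trans zero_lt_one hp
  have hpne : p ≠ 0 := ne_of_gt hppos
  have hp1ne : p - 1 ≠ 0 := by intro hh; rw [sub_eq_zero] at hh; linarith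
  have hp'pos : 0 < p' := by rw [hp']; exact div_pos hppos (by linarith)
  obtain ⟨M, hhb⟩ := hhb
  set F₁ : ℝ → ℝ := fun τ => p' * ((c₁ - h τ) * (max (y₁ τ) 0) ^ (1 / p) - f τ) with hF₁def
  set F₂ : ℝ → ℝ := fun τ => p' * ((c₂ - h τ) * (max (y₂ τ) 0) ^ (1 / p) - f τ) with hF₂def
  have hcont₁ : ContinuousOn y₁ (Icc 0 1) := sol_continuousOn hF₁int hy₁sol
  have hcont₂ : ContinuousOn y₂ (Icc 0 1) := sol_continuousOn hF₂int hy₂sol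
  have hnn₁ : ∀ t ∈ Icc (0:ℝ) 1, 0 ≤ y₁ t :=
    sol_nonneg hp hp'pos hfpos hF₁int hcont₁ hy₁sol
  have hnn₂ : ∀ t ∈ Icc (0:ℝ) 1, 0 ≤ y₂ t :=
    sol_nonneg hp hp'pos hfpos hF₂int hcont₂ hy₂sol
  have hpos₁ : ∀ t ∈ Ioo (0:ℝ) 1, 0 < y₁ t :=
    sol_pos hp hp' hfpos hflsc hfint hhb hF₁int hcont₁ hnn₁ hy₁sol
  -- the exponent
  obtain ⟨q, hqdef⟩ : ∃ q : ℝ, q = 1 - 1/p := ⟨_, rfl⟩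
  have hinvp : 1/p < 1 := by rw [div_lt_one hppos]; exact hp
  have hinvppos : 0 < 1/p := by positivity
  have hq : 0 < q := by rw [hqdef]; linarith
  have hq1 : q ≤ 1 := by rw [hqdef]; linarith
  have hqp' : q * p' = 1 := by
    rw [hqdef, hp']; field_simp
  -- key claim on the open interval
  have key : ∀ t₀ ∈ Ioo (0:ℝ) 1, y₂ t₀ ≤ y₁ t₀ := by
    intro t₀ ht₀
    by_contra hlt
    push_neg at hlt
    have ht₀' : t₀ ∈ Icc (0:ℝ) 1 := ⟨ht₀.1.le, ht₀.2.le⟩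
    -- first crossing point
    set B : Set ℝ := Icc t₀ 1 ∩ (fun t => y₂ t - y₁ t) ⁻¹' (Iic 0) with hBdef
    have hBclosed : IsClosed B :=
      ((hcont₂.sub hcont₁).mono (Icc_subset_Icc ht₀.1.le le_rfl)).preimage_isClosed_of_isClosed
        isClosed_Icc isClosed_Iic
    have hBne : B.Nonempty := ⟨1, ⟨ht₀.2.le, le_rfl⟩, by simp [hy₁1, hy₂1]⟩
    have hBbdd : BddBelow B := ⟨t₀, fun x hx => hx.1.1⟩
    obtain ⟨b, hbdef⟩ : ∃ b : ℝ, b = sInf B := ⟨_, rfl⟩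
    have hbB : b ∈ B := hbdef ▸ hBclosed.csInf_mem hBne hBbdd
    have hbt₀ : t₀ ≤ b := hbB.1.1
    have hb1 : b ≤ 1 := hbB.1.2
    have hble : y₂ b ≤ y₁ b := by
      have := hbB.2
      simpa using this
    have hbmem : b ∈ Icc (0:ℝ) 1 := ⟨le_trans ht₀.1.le hbt₀, hb1⟩
    have hbgt : t₀ < b := by
      rcases lt_or_eq_of_le hbt₀ with hlt' | heq
      · exact hlt'
      · exfalso; rw [← heq] at hble; linarith
    have hIco : ∀ τ ∈ Ico t₀ b, y₁ τ < y₂ τ := by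
      intro τ hτ
      by_contra hge
      push_neg at hge
      have hτB : τ ∈ B := ⟨⟨hτ.1, le_trans hτ.2.le hb1⟩, by simpa using sub_nonpos.2 hge⟩
      have := csInf_le hBbdd hτB
      rw [← hbdef] at this
      exact absurd this (not_le.2 hτ.2)
    -- φ
    have hφt₀ : (y₁ t₀) ^ q < (y₂ t₀) ^ q :=
      Real.rpow_lt_rpow (hnn₁ t₀ ht₀') hlt hq
    have hφb : (y₂ b) ^ q ≤ (y₁ b) ^ q :=
      Real.rpow_le_rpow (hnn₂ b hbmem) hble hq.le
    -- monotonicity of φ on [t₀, b)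
    have hmono : ∀ d ∈ Ioo t₀ b,
        (y₂ t₀) ^ q - (y₁ t₀) ^ q ≤ (y₂ d) ^ q - (y₁ d) ^ q := by
      intro d hd
      have hdIcc : d ∈ Icc (0:ℝ) 1 := ⟨le_trans ht₀.1.le hd.1.le, le_trans hd.2.le hb1⟩
      have hsubIcc : Icc t₀ d ⊆ Icc (0:ℝ) 1 := Icc_subset_Icc ht₀.1.le hdIcc.2
      have hsubIoo : Icc t₀ d ⊆ Ioo (0:ℝ) 1 := fun τ hτ =>
        ⟨lt_of_lt_of_le ht₀.1 hτ.1, lt_of_le_of_lt hτ.2 (lt_of_lt_of_le hd.2 hb1)⟩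
      have hsubIco : Icc t₀ d ⊆ Ico t₀ b := fun τ hτ =>
        ⟨hτ.1, lt_of_le_of_lt hτ.2 hd.2⟩
      -- min of y₁ on [t₀, d]
      obtain ⟨sm, hsmmem, hsmmin⟩ :=
        isCompact_Icc.exists_isMinOn (nonempty_Icc.2 hd.1.le) (hcont₁.mono hsubIcc)
      rw [isMinOn_iff] at hsmmin
      obtain ⟨m, hmdef⟩ : ∃ m : ℝ, m = y₁ sm := ⟨_, rfl⟩
      have hmpos : 0 < m := hmdef ▸ hpos₁ sm (hsubIoo hsmmem)
      have hm₁ : ∀ t ∈ Icc t₀ d, m ≤ y₁ t := fun t ht => hmdef ▸ hsmmin t ht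
      have hm₂ : ∀ t ∈ Icc t₀ d, m ≤ y₂ t := fun t ht =>
        le_trans (hm₁ t ht) (hIco t (hsubIco ht)).le
      have hIocsub : Ioc t₀ d ⊆ Icc (0:ℝ) 1 := fun τ hτ =>
        hsubIcc ⟨hτ.1.le, hτ.2⟩
      -- chain rule identities
      have hchain₁ : IntegrableOn (fun τ => q * (y₁ τ) ^ (q - 1) * F₁ τ) (Ioc t₀ d) ∧
          (y₁ d) ^ q = (y₁ t₀) ^ q + ∫ τ in Ioc t₀ d, q * (y₁ τ) ^ (q - 1) * F₁ τ :=
        chain_eq hd.1 hmpos hq hq1 (hF₁int.mono_set hIocsub)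
          (fun t ht => sol_sub hF₁int hy₁sol ht₀' (hsubIcc ht)) hm₁
      have hchain₂ : IntegrableOn (fun τ => q * (y₂ τ) ^ (q - 1) * F₂ τ) (Ioc t₀ d) ∧
          (y₂ d) ^ q = (y₂ t₀) ^ q + ∫ τ in Ioc t₀ d, q * (y₂ τ) ^ (q - 1) * F₂ τ :=
        chain_eq hd.1 hmpos hq hq1 (hF₂int.mono_set hIocsub)
          (fun t ht => sol_sub hF₂int hy₂sol ht₀' (hsubIcc ht)) hm₂
      -- comparison of the integrands
      have hcmp : (∫ τ in Ioc t₀ d, q * (y₁ τ) ^ (q-1) * F₁ τ)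
          ≤ ∫ τ in Ioc t₀ d, q * (y₂ τ) ^ (q-1) * F₂ τ := by
        refine setIntegral_mono_on hchain₁.1 hchain₂.1 measurableSet_Ioc ?_
        intro τ hτ
        have hτIcc : τ ∈ Icc t₀ d := ⟨hτ.1.le, hτ.2⟩
        have hτIoo : τ ∈ Ioo (0:ℝ) 1 := hsubIoo hτIcc
        have hy₁pos : 0 < y₁ τ := lt_of_lt_of_le hmpos (hm₁ τ hτIcc)
        have hy₁₂ : y₁ τ ≤ y₂ τ := (hIco τ (hsubIco hτIcc)).le
        have hy₂pos : 0 < y₂ τ := lt_of_lt_of_le hy₁pos hy₁₂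
        have hmax₁ : max (y₁ τ) 0 = y₁ τ := max_eq_left hy₁pos.le
        have hmax₂ : max (y₂ τ) 0 = y₂ τ := max_eq_left hy₂pos.le
        have hexp : q - 1 + 1/p = 0 := by rw [hqdef]; ring
        have he₁ : (y₁ τ) ^ (q-1) * (y₁ τ) ^ (1/p) = 1 := by
          rw [← Real.rpow_add hy₁pos, hexp, Real.rpow_zero]
        have he₂ : (y₂ τ) ^ (q-1) * (y₂ τ) ^ (1/p) = 1 := by
          rw [← Real.rpow_add hy₂pos, hexp, Real.rpow_zero]
        have hL : q * (y₁ τ) ^ (q-1) * F₁ τ = (c₁ - h τ) - f τ * (y₁ τ) ^ (q-1) := by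
          rw [hF₁def]
          simp only [hmax₁]
          calc q * (y₁ τ) ^ (q-1) * (p' * ((c₁ - h τ) * (y₁ τ) ^ (1/p) - f τ))
              = (q * p') * ((c₁ - h τ) * ((y₁ τ) ^ (q-1) * (y₁ τ) ^ (1/p))
                - f τ * (y₁ τ) ^ (q-1)) := by ring
          _ = (c₁ - h τ) - f τ * (y₁ τ) ^ (q-1) := by rw [he₁, hqp']; ring
        have hR : q * (y₂ τ) ^ (q-1) * F₂ τ = (c₂ - h τ) - f τ * (y₂ τ) ^ (q-1) := by
          rw [hF₂def]
          simp only [hmax₂]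
          calc q * (y₂ τ) ^ (q-1) * (p' * ((c₂ - h τ) * (y₂ τ) ^ (1/p) - f τ))
              = (q * p') * ((c₂ - h τ) * ((y₂ τ) ^ (q-1) * (y₂ τ) ^ (1/p))
                - f τ * (y₂ τ) ^ (q-1)) := by ring
          _ = (c₂ - h τ) - f τ * (y₂ τ) ^ (q-1) := by rw [he₂, hqp']; ring
        rw [hL, hR]
        have hfτ : 0 ≤ f τ := (hfpos τ hτIoo).le
        have hanti : (y₂ τ) ^ (q-1) ≤ (y₁ τ) ^ (q-1) :=
          Real.rpow_le_rpow_of_nonpos hy₁pos hy₁₂ (by linarith)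
        nlinarith [mul_nonneg hfτ (sub_nonneg.2 hanti)]
      have e₁ := hchain₁.2
      have e₂ := hchain₂.2
      linarith
    -- pass to the limit d → b⁻
    have hlimit : (y₂ t₀) ^ q - (y₁ t₀) ^ q ≤ (y₂ b) ^ q - (y₁ b) ^ q := by
      have hne : (nhdsWithin b (Ioo t₀ b)).NeBot := by
        rw [← mem_closure_iff_nhdsWithin_neBot, closure_Ioo (ne_of_lt hbgt)]
        exact ⟨hbgt.le, le_rfl⟩
      have hsub : Ioo t₀ b ⊆ Icc (0:ℝ) 1 := fun τ hτ =>
        ⟨le_trans ht₀.1.le hτ.1.le, le_trans hτ.2.le hb1⟩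
      have hc2 : ContinuousWithinAt (fun t => (y₂ t) ^ q) (Ioo t₀ b) b :=
        (Real.continuousAt_rpow_const _ _ (Or.inr hq.le)).comp_continuousWithinAt
          ((hcont₂ b hbmem).mono hsub)
      have hc1 : ContinuousWithinAt (fun t => (y₁ t) ^ q) (Ioo t₀ b) b :=
        (Real.continuousAt_rpow_const _ _ (Or.inr hq.le)).comp_continuousWithinAt
          ((hcont₁ b hbmem).mono hsub)
      exact ge_of_tendsto (hc2.sub hc1) (eventually_nhdsWithin_of_forall hmono)
    linarith
  -- conclude on the closed interval
  intro t ht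
  by_contra hcon
  push_neg at hcon
  have ht1 : t ≠ 1 := by
    intro hteq; rw [hteq, hy₁1, hy₂1] at hcon; exact lt_irrefl _ hcon
  rcases eq_or_lt_of_le ht.1 with h0 | h0
  · -- t = 0 : use continuity to move inside
    have h0t : t = 0 := h0.symm
    have hcw : ContinuousWithinAt (fun τ => y₂ τ - y₁ τ) (Ioo (0:ℝ) 1) t := by
      refine ((hcont₂.sub hcont₁) t ht).mono Ioo_subset_Icc_self
    have hne : (nhdsWithin t (Ioo (0:ℝ) 1)).NeBot := by
      rw [← mem_closure_iff_nhdsWithin_neBot, h0t, closure_Ioo one_ne_zero.symm]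
      exact ⟨le_rfl, zero_le_one⟩
    have hev : ∀ᶠ τ in nhdsWithin t (Ioo (0:ℝ) 1), 0 < y₂ τ - y₁ τ :=
      hcw.eventually (lt_mem_nhds (by linarith : (0:ℝ) < y₂ t - y₁ t))
    obtain ⟨τ, hτpos, hτmem⟩ := (hev.and eventually_mem_nhdsWithin).exists
    exact absurd (key τ hτmem) (not_le.2 (by linarith))
  · exact absurd (key t ⟨h0, lt_of_le_of_ne ht.2 ht1⟩) (not_le.2 hcon)
end

section
/- Let p > 1, p' = p/(p-1), h : [0,1] → ℝ bounded and continuous at 0, f ∈ L^1(0,1) with f > 0 on (0,1). If y : [0,1] → ℝ is a positive (on (0,1)) absolutely continuous solution of y'(t) = p'[(c - h(t)) y(t)^{1/p} - f(t)] a.e. in (0,1) with y(0) = y(1) = 0, then c ≥ h(0). -/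
open MeasureTheory Set

/-- Necessary condition `c ≥ h(0)` for the existence of a positive solution of the
boundary value problem `y' = p'[(c - h) y^{1/p} - f]`, `y(0) = 0 = y(1)`, with `h`
bounded measurable and continuous at `0` and `f > 0` integrable. -/
theorem stmt8 (p p' c : ℝ) (hp : 1 < p) (hp' : p' = p / (p - 1))
    (h f y : ℝ → ℝ)
    (hhm : Measurable h) (hhb : ∃ M, ∀ t ∈ Set.Icc (0 : ℝ) 1, |h t| ≤ M)
    (hh0 : ContinuousWithinAt h (Set.Icc 0 1) 0)
    (hfint : IntegrableOn f (Set.Ioo 0 1))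
    (hfpos : ∀ t ∈ Set.Ioo (0 : ℝ) 1, 0 < f t)
    (hFint : IntegrableOn
      (fun τ => p' * ((c - h τ) * (y τ) ^ (1 / p) - f τ)) (Set.Icc 0 1))
    (hy0 : y 0 = 0) (hy1 : y 1 = 0)
    (hypos : ∀ t ∈ Set.Ioo (0 : ℝ) 1, 0 < y t)
    (hysol : ∀ t ∈ Set.Icc (0 : ℝ) 1,
      y t = ∫ τ in (0 : ℝ)..t, p' * ((c - h τ) * (y τ) ^ (1 / p) - f τ)) :
    h 0 ≤ c := by
  by_contra hc
  push_neg at hc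
  have hp'pos : 0 < p' := by
    rw [hp']; apply div_pos <;> linarith
  have hεpos : 0 < h 0 - c := by linarith
  obtain ⟨δ, hδpos, hδ⟩ := Metric.tendsto_nhdsWithin_nhds.mp hh0 (h 0 - c) hεpos
  set t := min δ 1 / 2 with htdef
  have htpos : 0 < t := by positivity
  have ht1 : t < 1 := by
    have : min δ 1 ≤ 1 := min_le_right _ _
    simp only [htdef]; linarith
  have htδ : t < δ := by
    have := min_le_left δ 1
    simp only [htdef]; linarith
  set F := fun τ => p' * ((c - h τ) * (y τ) ^ (1 / p) - f τ) with hFdef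
  have hFneg : ∀ τ ∈ Set.Ioo (0:ℝ) t, F τ < 0 := by
    intro τ hτ
    have hτ1 : τ ∈ Set.Icc (0:ℝ) 1 := ⟨hτ.1.le, by linarith [hτ.2]⟩
    have hdist : dist τ 0 < δ := by
      rw [Real.dist_eq, sub_zero, abs_of_pos hτ.1]; linarith [hτ.2]
    have hd := hδ hτ1 hdist
    rw [Real.dist_eq] at hd
    have hhτ : c < h τ := by
      rcases abs_lt.mp hd with ⟨h1, h2⟩; linarith
    have hyp : 0 < y τ := hypos τ ⟨hτ.1, by linarith [hτ.2]⟩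
    have hrp : 0 < (y τ) ^ (1/p) := Real.rpow_pos_of_pos hyp _
    have hfτ : 0 < f τ := hfpos τ ⟨hτ.1, by linarith [hτ.2]⟩
    have : (c - h τ) * (y τ) ^ (1/p) - f τ < 0 := by nlinarith
    exact mul_neg_of_pos_of_neg hp'pos this
  have hint : IntervalIntegrable F volume 0 t := by
    rw [intervalIntegrable_iff_integrableOn_Ioc_of_le htpos.le]
    exact hFint.mono_set (fun x hx => ⟨hx.1.le, hx.2.trans ht1.le⟩)
  have hneg : ∫ τ in (0:ℝ)..t, F τ < 0 := by
    have hpos := intervalIntegral.intervalIntegral_pos_of_pos_on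
      (f := fun τ => -F τ) hint.neg
      (fun x hx => by simpa using hFneg x hx) htpos
    rw [intervalIntegral.integral_neg] at hpos
    linarith
  have hyt := hysol t ⟨htpos.le, ht1.le⟩
  have := hypos t ⟨htpos, ht1⟩
  rw [hyt] at this
  exact absurd this (not_lt.mpr hneg.le)
end

section
/- Let p > 1, p' = p/(p-1), h ∈ L^∞(0,1), f ∈ L^1(0,1) with f > 0 on (0,1). If y is a positive (on (0,1)) absolutely continuous solution of y'(t) = p'[(c - h(t)) y(t)^{1/p} - f(t)] a.e. on (0,1) with y(0) = y(1) = 0, then c - H(1) = ∫_0^1 f(t) y(t)^{-1/p} dt > 0, where H(1) = ∫_0^1 h(s) ds. In particular c > H(1). -/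
open MeasureTheory Set

namespace Stmt9Aux

open Filter Topology intervalIntegral


lemma subst_rpow (F : ℝ → ℝ) (a b : ℝ) (hab : a ≤ b)
    (hF : IntegrableOn F (Icc a b)) (w : ℝ → ℝ)
    (hw : ∀ t ∈ Icc a b, w t = w a + ∫ τ in a..t, F τ)
    (m : ℝ) (hm : 0 < m) (hwm : ∀ t ∈ Icc a b, m ≤ w t)
    (q : ℝ) (hq : 0 < q) (hq1 : q < 1) :
    (w b) ^ (1 - q) - (w a) ^ (1 - q)
      = ∫ τ in a..b, (1 - q) * (w τ) ^ (-q) * F τ := by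
  -- continuous approximations of F
  have hFind : Integrable ((Icc a b).indicator F) volume :=
    (integrable_indicator_iff measurableSet_Icc).2 hF
  have H : ∀ n : ℕ, ∃ g : ℝ → ℝ, Continuous g ∧
      ∫ x in Icc a b, ‖F x - g x‖ ≤ 1 / (n + 1) := by
    intro n
    obtain ⟨g, -, hg2, hg3, hg4⟩ :=
      hFind.exists_hasCompactSupport_integral_sub_le (ε := 1 / (n + 1 : ℝ)) (by positivity)
    refine ⟨g, hg3, le_trans ?_ hg2⟩
    have h1 : ∫ x in Icc a b, ‖F x - g x‖ = ∫ x in Icc a b, ‖(Icc a b).indicator F x - g x‖ := by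
      refine setIntegral_congr_fun measurableSet_Icc fun x hx => ?_
      rw [indicator_of_mem hx]
    rw [h1]
    exact setIntegral_le_integral ((hFind.sub hg4).norm)
      (ae_of_all _ fun x => norm_nonneg _)
  choose g hgc hgd using H
  set d : ℕ → ℝ := fun n => ∫ x in Icc a b, ‖F x - g n x‖ with hd
  have hdnn : ∀ n, 0 ≤ d n := fun n => setIntegral_nonneg measurableSet_Icc
    (fun x _ => norm_nonneg _)
  have hd0 : Tendsto d atTop (𝓝 0) := by
    refine squeeze_zero hdnn hgd ?_
    exact tendsto_one_div_add_atTop_nhds_zero_nat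
  -- approximate primitives
  set W : ℕ → ℝ → ℝ := fun n t => w a + ∫ τ in a..t, g n τ with hW
  have hFii : ∀ t ∈ Icc a b, IntervalIntegrable F volume a t := by
    intro t ht
    rw [intervalIntegrable_iff_integrableOn_Ioc_of_le ht.1]
    exact hF.mono_set ((Ioc_subset_Icc_self).trans (Icc_subset_Icc le_rfl ht.2))
  have hgii : ∀ n (s t : ℝ), IntervalIntegrable (g n) volume s t :=
    fun n s t => (hgc n).intervalIntegrable s t
  have hWd : ∀ n, ∀ t ∈ Icc a b, |W n t - w t| ≤ d n := by
    intro n t ht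
    have h1 : W n t - w t = ∫ τ in a..t, (g n τ - F τ) := by
      rw [hw t ht, intervalIntegral.integral_sub (hgii n a t) (hFii t ht)]
      ring
    rw [h1]
    calc |∫ τ in a..t, (g n τ - F τ)| ≤ ∫ τ in a..t, |g n τ - F τ| :=
          intervalIntegral.abs_integral_le_integral_abs ht.1
      _ = ∫ τ in Ioc a t, |g n τ - F τ| := intervalIntegral.integral_of_le ht.1
      _ ≤ ∫ τ in Icc a b, |g n τ - F τ| := by
          refine setIntegral_mono_set ?_ ?_ ?_
          · exact ((hgc n).integrableOn_Icc.sub hF).abs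
          · exact ae_of_all _ fun x => abs_nonneg _
          · exact HasSubset.Subset.eventuallyLE (Ioc_subset_Icc_self.trans
              (Icc_subset_Icc le_rfl ht.2))
      _ = d n := by
          simp only [hd]
          refine setIntegral_congr_fun measurableSet_Icc fun x _ => ?_
          rw [Real.norm_eq_abs, abs_sub_comm]
  -- derivative of approximations
  have hWder : ∀ n t, HasDerivAt (W n) (g n t) t := by
    intro n t
    exact (intervalIntegral.integral_hasDerivAt_right (hgii n a t)
      ((hgc n).stronglyMeasurable.stronglyMeasurableAtFilter)
      (hgc n).continuousAt).const_add (w a)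
  have hWcont : ∀ n, Continuous (W n) := fun n =>
    continuous_iff_continuousAt.2 fun t => (hWder n t).continuousAt
  have hWa : ∀ n, W n a = w a := by intro n; simp [hW]
  have hm2 : (0:ℝ) < m / 2 := by linarith
  clear_value W d
  -- lower bound on W n when d n is small
  have hWpos : ∀ n, d n < m / 2 → ∀ t ∈ Icc a b, m / 2 ≤ W n t := by
    intro n hn t ht
    obtain ⟨hl, -⟩ := abs_le.1 (hWd n t ht)
    have h2 := hwm t ht
    linarith
  -- FTC for approximations
  have key : ∀ n, d n < m / 2 →
      (W n b) ^ (1 - q) - (w a) ^ (1 - q)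
        = ∫ τ in a..b, (1 - q) * (W n τ) ^ (-q) * g n τ := by
    intro n hn
    have hpos := hWpos n hn
    have hderiv : ∀ t ∈ uIcc a b,
        HasDerivAt (fun u => (W n u) ^ (1 - q)) ((1 - q) * (W n t) ^ (-q) * g n t) t := by
      intro t ht
      rw [uIcc_of_le hab] at ht
      have hWt : W n t ≠ 0 := ne_of_gt (lt_of_lt_of_le hm2 (hpos t ht))
      have h1 := (Real.hasDerivAt_rpow_const (x := W n t) (p := 1 - q)
        (Or.inl hWt)).comp t (hWder n t)
      have h2 : (1:ℝ) - q - 1 = -q := by ring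
      simp only [Function.comp_def] at h1
      rw [h2] at h1
      exact h1
    have hcont : ContinuousOn (fun τ => (1 - q) * (W n τ) ^ (-q) * g n τ) (uIcc a b) := by
      rw [uIcc_of_le hab]
      refine (continuousOn_const.mul ((hWcont n).continuousOn.rpow_const ?_)).mul
        (hgc n).continuousOn
      intro t ht
      exact Or.inl (ne_of_gt (lt_of_lt_of_le hm2 (hpos t ht)))
    have := intervalIntegral.integral_eq_sub_of_hasDerivAt hderiv hcont.intervalIntegrable
    rw [this, hWa]
  -- eventual smallness
  have hev : ∀ᶠ n in atTop, d n < m / 2 := hd0.eventually_lt_const hm2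
  -- limit of LHS
  have hWb : Tendsto (fun n => W n b) atTop (𝓝 (w b)) := by
    rw [← tendsto_sub_nhds_zero_iff]
    refine squeeze_zero_norm (fun n => ?_) hd0
    rw [Real.norm_eq_abs]
    exact hWd n b ⟨hab, le_rfl⟩
  have hwbpos : (0:ℝ) < w b := lt_of_lt_of_le hm (hwm b ⟨hab, le_rfl⟩)
  have hLlim : Tendsto (fun n => (W n b) ^ (1 - q) - (w a) ^ (1 - q)) atTop
      (𝓝 ((w b) ^ (1 - q) - (w a) ^ (1 - q))) := by
    refine Tendsto.sub_const ?_ _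
    exact ((Real.continuousAt_rpow_const _ _ (Or.inl hwbpos.ne')).tendsto.comp hWb)
  -- continuity of w
  have hwcont : ContinuousOn w (Icc a b) := by
    have h1 : ContinuousOn (fun t => w a + ∫ τ in a..t, F τ) (Icc a b) := by
      refine continuousOn_const.add ?_
      have := intervalIntegral.continuousOn_primitive_interval
        (a := a) (b := b) (f := F) (μ := volume) ?_
      · rwa [uIcc_of_le hab] at this
      · rwa [uIcc_of_le hab]
    exact h1.congr fun t ht => hw t ht
  -- Lipschitz bound for u ↦ u ^ (-q) on [m/2, ∞)
  set K : ℝ := q * (m / 2) ^ (-q - 1) with hK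
  have hKnn : 0 ≤ K := by
    have : (0:ℝ) < (m / 2) ^ (-q - 1) := Real.rpow_pos_of_pos hm2 _
    positivity
  have hlip : ∀ u v : ℝ, m / 2 ≤ u → m / 2 ≤ v →
      |u ^ (-q) - v ^ (-q)| ≤ K * |u - v| := by
    intro u v hu hv
    have hdiff : ∀ x ∈ Ici (m / 2), DifferentiableAt ℝ (fun x : ℝ => x ^ (-q)) x := by
      intro x hx
      exact (Real.hasDerivAt_rpow_const
        (Or.inl (ne_of_gt (lt_of_lt_of_le hm2 hx)))).differentiableAt
    have hbound : ∀ x ∈ Ici (m / 2), ‖deriv (fun x : ℝ => x ^ (-q)) x‖ ≤ K := by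
      intro x hx
      have hxpos : (0:ℝ) < x := lt_of_lt_of_le hm2 hx
      rw [(Real.hasDerivAt_rpow_const (p := -q) (Or.inl hxpos.ne')).deriv]
      rw [Real.norm_eq_abs, abs_mul, abs_neg, abs_of_pos hq,
        abs_of_pos (Real.rpow_pos_of_pos hxpos _)]
      refine mul_le_mul_of_nonneg_left ?_ hq.le
      exact Real.rpow_le_rpow_of_nonpos hm2 hx (by linarith)
    have := (convex_Ici (m / 2)).norm_image_sub_le_of_norm_deriv_le hdiff hbound hv hu
    simpa [Real.norm_eq_abs] using this
  -- integrability facts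
  have hwpos' : ∀ t ∈ Icc a b, (0:ℝ) < w t := fun t ht => lt_of_lt_of_le hm (hwm t ht)
  have hwq : ContinuousOn (fun τ => (1 - q) * (w τ) ^ (-q)) (Icc a b) :=
    continuousOn_const.mul (hwcont.rpow_const fun t ht => Or.inl (hwpos' t ht).ne')
  have hRint : IntegrableOn (fun τ => (1 - q) * (w τ) ^ (-q) * F τ) (Icc a b) :=
    IntegrableOn.continuousOn_mul hwq hF isCompact_Icc
  have habs : ∀ X : ℝ → ℝ, IntegrableOn X (Icc a b) volume →
      |∫ τ in a..b, X τ| ≤ ∫ τ in Icc a b, |X τ| := by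
    intro X hX
    calc |∫ τ in a..b, X τ| ≤ ∫ τ in a..b, |X τ| :=
          intervalIntegral.abs_integral_le_integral_abs hab
      _ = ∫ τ in Ioc a b, |X τ| := intervalIntegral.integral_of_le hab
      _ ≤ ∫ τ in Icc a b, |X τ| := setIntegral_mono_set hX.abs
          (ae_of_all _ fun x => abs_nonneg _)
          (HasSubset.Subset.eventuallyLE Ioc_subset_Icc_self)
  set CF : ℝ := ∫ τ in Icc a b, |F τ| with hCF
  set C1 : ℝ := (1 - q) * (m / 2) ^ (-q) with hC1
  have hC1nn : 0 ≤ C1 := by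
    have : (0:ℝ) < (m / 2) ^ (-q) := Real.rpow_pos_of_pos hm2 _
    rw [hC1]; nlinarith
  set C : ℝ := C1 + (1 - q) * K * CF with hC
  set R : ℝ := ∫ τ in a..b, (1 - q) * (w τ) ^ (-q) * F τ with hR
  clear_value K CF C1 C R
  -- eventual norm bound for RHS difference
  have hbnd : ∀ᶠ n in atTop,
      ‖(∫ τ in a..b, (1 - q) * (W n τ) ^ (-q) * g n τ) - R‖ ≤ C * d n := by
    filter_upwards [hev] with n hn
    have hpos := hWpos n hn
    have hWq : ContinuousOn (fun τ => (1 - q) * (W n τ) ^ (-q)) (Icc a b) :=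
      continuousOn_const.mul ((hWcont n).continuousOn.rpow_const fun t ht =>
        Or.inl (ne_of_gt (lt_of_lt_of_le hm2 (hpos t ht))))
    have hsub : IntegrableOn (fun τ => g n τ - F τ) (Icc a b) :=
      (hgc n).integrableOn_Icc.sub hF
    have hAint : IntegrableOn
        (fun τ => (1 - q) * (W n τ) ^ (-q) * (g n τ - F τ)) (Icc a b) :=
      IntegrableOn.continuousOn_mul hWq hsub isCompact_Icc
    have hBint : IntegrableOn
        (fun τ => ((1 - q) * (W n τ) ^ (-q) - (1 - q) * (w τ) ^ (-q)) * F τ) (Icc a b) :=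
      IntegrableOn.continuousOn_mul (hWq.sub hwq) hF isCompact_Icc
    have hXint : IntegrableOn
        (fun τ => (1 - q) * (W n τ) ^ (-q) * g n τ) (Icc a b) :=
      IntegrableOn.continuousOn_mul hWq (hgc n).integrableOn_Icc isCompact_Icc
    have ii : ∀ X : ℝ → ℝ, IntegrableOn X (Icc a b) volume →
        IntervalIntegrable X volume a b := fun X hX =>
      (intervalIntegrable_iff_integrableOn_Ioc_of_le hab).2 (hX.mono_set Ioc_subset_Icc_self)
    have hsplit : (∫ τ in a..b, (1 - q) * (W n τ) ^ (-q) * g n τ) - R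
        = (∫ τ in a..b, (1 - q) * (W n τ) ^ (-q) * (g n τ - F τ))
          + ∫ τ in a..b, ((1 - q) * (W n τ) ^ (-q) - (1 - q) * (w τ) ^ (-q)) * F τ := by
      rw [hR, ← intervalIntegral.integral_add (ii _ hAint) (ii _ hBint),
        ← intervalIntegral.integral_sub (ii _ hXint) (ii _ hRint)]
      congr 1; funext τ; ring
    have hA : |∫ τ in a..b, (1 - q) * (W n τ) ^ (-q) * (g n τ - F τ)| ≤ C1 * d n := by
      refine le_trans (habs _ hAint) ?_
      have hmono : ∫ τ in Icc a b, |(1 - q) * (W n τ) ^ (-q) * (g n τ - F τ)|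
          ≤ ∫ τ in Icc a b, C1 * ‖F τ - g n τ‖ := by
        refine setIntegral_mono_on hAint.abs ((hF.sub (hgc n).integrableOn_Icc).norm.const_mul C1)
          measurableSet_Icc ?_
        intro x hx
        have h1 : |(1:ℝ) - q| = 1 - q := abs_of_pos (by linarith)
        have h2 : |(W n x) ^ (-q)| ≤ (m / 2) ^ (-q) := by
          rw [abs_of_pos (Real.rpow_pos_of_pos (lt_of_lt_of_le hm2 (hpos x hx)) _)]
          exact Real.rpow_le_rpow_of_nonpos hm2 (hpos x hx) (by linarith)
        rw [abs_mul, abs_mul, Real.norm_eq_abs, abs_sub_comm (F x), h1, hC1]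
        have h3 : (0:ℝ) ≤ 1 - q := by linarith
        calc (1 - q) * |(W n x) ^ (-q)| * |g n x - F x|
            ≤ (1 - q) * ((m / 2) ^ (-q)) * |g n x - F x| := by
              refine mul_le_mul_of_nonneg_right ?_ (abs_nonneg _)
              exact mul_le_mul_of_nonneg_left h2 h3
          _ = (1 - q) * (m / 2) ^ (-q) * |g n x - F x| := by ring
      refine hmono.trans ?_
      rw [MeasureTheory.integral_const_mul]
      refine mul_le_mul_of_nonneg_left ?_ hC1nn
      rw [hd]
    have hB : |∫ τ in a..b, ((1 - q) * (W n τ) ^ (-q) - (1 - q) * (w τ) ^ (-q)) * F τ|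
        ≤ (1 - q) * K * d n * CF := by
      refine le_trans (habs _ hBint) ?_
      have hmono : ∫ τ in Icc a b, |((1 - q) * (W n τ) ^ (-q) - (1 - q) * (w τ) ^ (-q)) * F τ|
          ≤ ∫ τ in Icc a b, ((1 - q) * K * d n) * |F τ| := by
        refine setIntegral_mono_on hBint.abs (hF.abs.const_mul _) measurableSet_Icc ?_
        intro x hx
        rw [abs_mul]
        refine mul_le_mul_of_nonneg_right ?_ (abs_nonneg _)
        have h1 : (1 - q) * (W n x) ^ (-q) - (1 - q) * (w x) ^ (-q)
            = (1 - q) * ((W n x) ^ (-q) - (w x) ^ (-q)) := by ring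
        rw [h1, abs_mul, abs_of_pos (show (0:ℝ) < 1 - q by linarith)]
        rw [mul_assoc]
        refine mul_le_mul_of_nonneg_left ?_ (by linarith)
        refine le_trans (hlip _ _ (hpos x hx) (by linarith [hwm x hx])) ?_
        exact mul_le_mul_of_nonneg_left (hWd n x hx) hKnn
      refine hmono.trans ?_
      rw [MeasureTheory.integral_const_mul, ← hCF]
    rw [hsplit, Real.norm_eq_abs]
    calc |_ + _| ≤ _ := abs_add_le _ _
      _ ≤ C1 * d n + (1 - q) * K * d n * CF := add_le_add hA hB
      _ = C * d n := by rw [hC]; ring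
  have hRlim : Tendsto (fun n => ∫ τ in a..b, (1 - q) * (W n τ) ^ (-q) * g n τ)
      atTop (𝓝 R) := by
    rw [← tendsto_sub_nhds_zero_iff]
    refine squeeze_zero_norm' hbnd ?_
    have := hd0.const_mul C
    simpa using this
  exact tendsto_nhds_unique (hLlim.congr' (hev.mono fun n hn => key n hn)) hRlim

end Stmt9Aux

open Stmt9Aux Filter Topology intervalIntegral in
/-- For a positive solution `y` of the boundary value problem
`y' = p'[(c - h) y^{1/p} - f]`, `y(0) = 0 = y(1)`, one has
`c - H(1) = ∫_0^1 f(t) y(t)^{-1/p} dt > 0` where `H(1) = ∫_0^1 h`; in particular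
`c > H(1)`. -/
theorem stmt9 (p p' c : ℝ) (hp : 1 < p) (hp' : p' = p / (p - 1))
    (h f y : ℝ → ℝ)
    (hhm : Measurable h) (hhb : ∃ M, ∀ t ∈ Set.Ioo (0 : ℝ) 1, |h t| ≤ M)
    (hfint : IntegrableOn f (Set.Ioo 0 1))
    (hfpos : ∀ t ∈ Set.Ioo (0 : ℝ) 1, 0 < f t)
    (hFint : IntegrableOn
      (fun τ => p' * ((c - h τ) * (y τ) ^ (1 / p) - f τ)) (Set.Icc 0 1))
    (hy0 : y 0 = 0) (hy1 : y 1 = 0)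
    (hypos : ∀ t ∈ Set.Ioo (0 : ℝ) 1, 0 < y t)
    (hysol : ∀ t ∈ Set.Icc (0 : ℝ) 1,
      y t = ∫ τ in (0 : ℝ)..t, p' * ((c - h τ) * (y τ) ^ (1 / p) - f τ)) :
    c - (∫ s in (0 : ℝ)..1, h s) = (∫ t in (0 : ℝ)..1, f t / (y t) ^ (1 / p)) ∧
    (0 < ∫ t in (0 : ℝ)..1, f t / (y t) ^ (1 / p)) ∧
    (∫ s in (0 : ℝ)..1, h s) < c := by
  have hp0 : (0:ℝ) < p := by linarith
  have hpm1 : (0:ℝ) < p - 1 := by linarith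
  set q : ℝ := 1 / p with hqdef
  have hq : 0 < q := by positivity
  have hq1 : q < 1 := by rw [hqdef, div_lt_one hp0]; linarith
  have hq1' : (0:ℝ) < 1 - q := by linarith
  have hp'pos : 0 < p' := by rw [hp']; positivity
  have hqp' : (1 - q) * p' = 1 := by rw [hqdef, hp']; field_simp
  set F : ℝ → ℝ := fun τ => p' * ((c - h τ) * (y τ) ^ q - f τ) with hFdef
  -- h is integrable on (0,1)
  have hhint : IntegrableOn h (Ioo 0 1) := by
    obtain ⟨M, hM⟩ := hhb
    refine Integrable.mono' (g := fun _ => M)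
      (integrableOn_const (by simp [Real.volume_Ioo]))
      hhm.aestronglyMeasurable.restrict ?_
    rw [ae_restrict_iff' measurableSet_Ioo]
    exact ae_of_all _ fun t ht => by simpa using hM t ht
  -- continuity of y
  have hycont : ContinuousOn y (Icc 0 1) := by
    have h1 : ContinuousOn (fun t => ∫ τ in (0:ℝ)..t, F τ) (Icc 0 1) := by
      have h2 := intervalIntegral.continuousOn_primitive_interval
        (a := 0) (b := 1) (f := F) (μ := volume) (by rwa [uIcc_of_le zero_le_one])
      rwa [uIcc_of_le zero_le_one] at h2
    exact h1.congr hysol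
  -- sequences of cut-off points
  set a : ℕ → ℝ := fun n => 1 / (n + 2) with hadef
  set b : ℕ → ℝ := fun n => 1 - 1 / (n + 2) with hbdef
  have hapos : ∀ n, 0 < a n := fun n => by rw [hadef]; positivity
  have hahalf : ∀ n, a n ≤ 1 / 2 := by
    intro n
    rw [hadef]
    simp only
    rw [div_le_div_iff₀ (by positivity) (by norm_num)]
    have : (0:ℝ) ≤ n := Nat.cast_nonneg n
    linarith
  have hab : ∀ n, a n ≤ b n := by
    intro n
    have := hahalf n
    rw [hbdef]
    simp only
    linarith
  have hblt : ∀ n, b n < 1 := by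
    intro n
    rw [hbdef]
    simp only
    linarith [hapos n]
  have hsub : ∀ n, Icc (a n) (b n) ⊆ Ioo 0 1 := fun n t ht =>
    ⟨lt_of_lt_of_le (hapos n) ht.1, lt_of_le_of_lt ht.2 (hblt n)⟩
  have hsub' : ∀ n, Icc (a n) (b n) ⊆ Icc 0 1 := fun n =>
    (hsub n).trans Ioo_subset_Icc_self
  have hamono : Antitone a := by
    intro i j hij
    rw [hadef]
    simp only
    apply one_div_le_one_div_of_le (by positivity)
    have : (i:ℝ) ≤ j := Nat.cast_le.2 hij
    linarith
  have hbmono : Monotone b := by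
    intro i j hij
    have := hamono hij
    rw [hbdef]; simp only
    rw [hadef] at this; simp only at this
    linarith
  have ha0 : Tendsto a atTop (𝓝 0) := by
    rw [hadef]
    have h1 : Tendsto (fun n : ℕ => ((n:ℝ) + 2)) atTop atTop := by
      apply tendsto_atTop_add_const_right
      exact tendsto_natCast_atTop_atTop
    refine h1.inv_tendsto_atTop.congr fun n => ?_
    simp
  have hb1 : Tendsto b atTop (𝓝 1) := by
    rw [hbdef]
    have h2 := (tendsto_const_nhds (x := (1:ℝ)) (f := atTop (α := ℕ))).sub ha0
    rw [sub_zero] at h2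
    refine h2.congr fun n => ?_
    rw [hadef]
  -- y as primitive based at a n
  have hFii0 : ∀ t ∈ Icc (0:ℝ) 1, IntervalIntegrable F volume 0 t := by
    intro t ht
    rw [intervalIntegrable_iff_integrableOn_Ioc_of_le ht.1]
    exact hFint.mono_set (Ioc_subset_Icc_self.trans (Icc_subset_Icc le_rfl ht.2))
  have hwIdent : ∀ n, ∀ t ∈ Icc (a n) (b n), y t = y (a n) + ∫ τ in (a n)..t, F τ := by
    intro n t ht
    have hta : t ∈ Icc (0:ℝ) 1 := Ioo_subset_Icc_self (hsub n ht)
    have haa : a n ∈ Icc (0:ℝ) 1 := Ioo_subset_Icc_self (hsub n ⟨le_rfl, hab n⟩)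
    rw [hysol t hta, hysol (a n) haa,
      ← intervalIntegral.integral_interval_sub_left (hFii0 t hta) (hFii0 (a n) haa)]
    ring
  -- positive minimum on compact subintervals
  have hmin : ∀ n, ∃ m, 0 < m ∧ ∀ t ∈ Icc (a n) (b n), m ≤ y t := by
    intro n
    obtain ⟨t₀, ht₀, hmin⟩ := isCompact_Icc.exists_isMinOn (nonempty_Icc.2 (hab n))
      (hycont.mono (hsub' n))
    exact ⟨y t₀, hypos t₀ (hsub n ht₀), fun t ht => hmin ht⟩
  -- the substitution identity
  have keyA : ∀ n, (y (b n)) ^ (1-q) - (y (a n)) ^ (1-q)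
      = ∫ τ in (a n)..(b n), (1-q) * (y τ) ^ (-q) * F τ := by
    intro n
    obtain ⟨m, hm, hwm⟩ := hmin n
    exact subst_rpow F (a n) (b n) (hab n) (hFint.mono_set (hsub' n)) y
      (hwIdent n) m hm hwm q hq hq1
  -- pointwise simplification of the integrand
  have hptwise : ∀ n, ∀ τ ∈ uIcc (a n) (b n),
      (1-q) * (y τ) ^ (-q) * F τ = (c - h τ) - f τ / (y τ) ^ q := by
    intro n τ hτ
    rw [uIcc_of_le (hab n)] at hτ
    have hyτ : 0 < y τ := hypos τ (hsub n hτ)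
    have h4 : (y τ) ^ (-q) * (y τ) ^ q = 1 := by
      rw [← Real.rpow_add hyτ]; simp
    have h5 : f τ / (y τ) ^ q = f τ * (y τ) ^ (-q) := by
      rw [Real.rpow_neg hyτ.le, div_eq_mul_inv]
    rw [hFdef, h5]
    have h6 : (1-q) * (y τ) ^ (-q) * (p' * ((c - h τ) * (y τ) ^ q - f τ))
        = ((1-q) * p') * ((c - h τ) * ((y τ) ^ (-q) * (y τ) ^ q))
          - ((1-q) * p') * (f τ * (y τ) ^ (-q)) := by ring
    rw [h6, h4, hqp']
    ring
  -- integrability of the pieces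
  have hIocsub : ∀ n, Ioc (a n) (b n) ⊆ Ioo 0 1 := fun n =>
    Ioc_subset_Icc_self.trans (hsub n)
  have hchii : ∀ n, IntervalIntegrable (fun t => c - h t) volume (a n) (b n) := by
    intro n
    rw [intervalIntegrable_iff_integrableOn_Ioc_of_le (hab n)]
    exact ((integrableOn_const measure_Ioc_lt_top.ne).sub
      (hhint.mono_set (hIocsub n)))
  have hGonIcc : ∀ n, IntegrableOn (fun t => f t / (y t) ^ q) (Icc (a n) (b n)) := by
    intro n
    have hcont : ContinuousOn (fun t => ((y t) ^ q)⁻¹) (Icc (a n) (b n)) := by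
      refine ContinuousOn.inv₀ ((hycont.mono (hsub' n)).rpow_const
        fun t ht => Or.inl (hypos t (hsub n ht)).ne') ?_
      exact fun t ht => ne_of_gt (Real.rpow_pos_of_pos (hypos t (hsub n ht)) _)
    have := IntegrableOn.mul_continuousOn
      (hfint.mono_set ((hsub n))) hcont isCompact_Icc
    exact this.congr_fun (fun x _ => (div_eq_mul_inv _ _).symm) measurableSet_Icc
  have hGii : ∀ n, IntervalIntegrable (fun t => f t / (y t) ^ q) volume (a n) (b n) := by
    intro n
    rw [intervalIntegrable_iff_integrableOn_Ioc_of_le (hab n)]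
    exact (hGonIcc n).mono_set Ioc_subset_Icc_self
  -- main identity on subintervals
  have key : ∀ n, ∫ t in (a n)..(b n), f t / (y t) ^ q
      = (∫ t in (a n)..(b n), (c - h t)) - ((y (b n)) ^ (1-q) - (y (a n)) ^ (1-q)) := by
    intro n
    have h1 : ∫ τ in (a n)..(b n), (1-q) * (y τ) ^ (-q) * F τ
        = ∫ t in (a n)..(b n), ((c - h t) - f t / (y t) ^ q) :=
      intervalIntegral.integral_congr (hptwise n)
    rw [intervalIntegral.integral_sub (hchii n) (hGii n)] at h1
    have h2 := keyA n
    rw [h1] at h2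
    linarith
  set G : ℝ → ℝ := fun t => f t / (y t) ^ q with hGdef
  -- boundary limits
  have haIcc : ∀ n, a n ∈ Icc (0:ℝ) 1 := fun n => Ioo_subset_Icc_self (hsub n ⟨le_rfl, hab n⟩)
  have hbIcc : ∀ n, b n ∈ Icc (0:ℝ) 1 := fun n => Ioo_subset_Icc_self (hsub n ⟨hab n, le_rfl⟩)
  have hya : Tendsto (fun n => y (a n)) atTop (𝓝 0) := by
    have h1 : Tendsto a atTop (𝓝[Icc (0:ℝ) 1] 0) :=
      tendsto_nhdsWithin_iff.2 ⟨ha0, Eventually.of_forall haIcc⟩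
    have h2 := (hycont 0 ⟨le_rfl, zero_le_one⟩).tendsto.comp h1
    rwa [hy0] at h2
  have hyb : Tendsto (fun n => y (b n)) atTop (𝓝 0) := by
    have h1 : Tendsto b atTop (𝓝[Icc (0:ℝ) 1] 1) :=
      tendsto_nhdsWithin_iff.2 ⟨hb1, Eventually.of_forall hbIcc⟩
    have h2 := (hycont 1 ⟨zero_le_one, le_rfl⟩).tendsto.comp h1
    rwa [hy1] at h2
  have hrp : ∀ u : ℕ → ℝ, Tendsto u atTop (𝓝 0) →
      Tendsto (fun n => (u n) ^ (1-q)) atTop (𝓝 0) := by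
    intro u hu
    have hc : ContinuousAt (fun x : ℝ => x ^ (1-q)) 0 :=
      Real.continuousAt_rpow_const 0 _ (Or.inr hq1'.le)
    have h2 := hc.tendsto.comp hu
    simpa [Function.comp_def, Real.zero_rpow (ne_of_gt hq1')] using h2
  have hbdry : Tendsto (fun n => (y (b n)) ^ (1-q) - (y (a n)) ^ (1-q)) atTop (𝓝 0) := by
    simpa using (hrp _ hyb).sub (hrp _ hya)
  -- monotone family of sets
  set s : ℕ → Set ℝ := fun n => Ioc (a n) (b n) with hsdef
  have hsm : ∀ n, MeasurableSet (s n) := fun n => measurableSet_Ioc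
  have hsmono : Monotone s := fun i j hij => Ioc_subset_Ioc (hamono hij) (hbmono hij)
  have hunion : ⋃ n, s n = Ioo 0 1 := by
    apply Subset.antisymm
    · exact iUnion_subset fun n => hIocsub n
    · intro x hx
      obtain ⟨n, hn⟩ := exists_nat_gt (max (1/x) (1/(1-x)))
      have hx1 : (0:ℝ) < x := hx.1
      have hx2 : (0:ℝ) < 1 - x := by have := hx.2; linarith
      have hn1 : 1/x < (n:ℝ) + 2 := by
        have := le_max_left (1/x) (1/(1-x)); linarith
      have hn2 : 1/(1-x) < (n:ℝ) + 2 := by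
        have := le_max_right (1/x) (1/(1-x)); linarith
      refine mem_iUnion.2 ⟨n, ?_, ?_⟩
      · show a n < x
        rw [hadef]
        have h3 := one_div_lt_one_div_of_lt (by positivity : (0:ℝ) < 1/x) hn1
        rwa [one_div_one_div] at h3
      · show x ≤ b n
        rw [hbdef]
        have h3 := one_div_lt_one_div_of_lt (by positivity : (0:ℝ) < 1/(1-x)) hn2
        rw [one_div_one_div] at h3
        simp only
        linarith
  -- limit of ∫ (c - h)
  have hchint : IntegrableOn (fun t => c - h t) (Ioo 0 1) :=
    (integrableOn_const (by simp [Real.volume_Ioo])).sub hhint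
  have hl3 : Tendsto (fun n => ∫ t in s n, (c - h t)) atTop
      (𝓝 (∫ t in Ioo 0 1, (c - h t))) := by
    have h1 := tendsto_setIntegral_of_monotone hsm hsmono
      (by rw [hunion]; exact hchint)
    rwa [hunion] at h1
  have tendsto_r : Tendsto (fun n => ∫ t in s n, G t) atTop
      (𝓝 (∫ t in Ioo 0 1, (c - h t))) := by
    have heq : (fun n => ∫ t in s n, G t)
        = fun n => (∫ t in s n, (c - h t))
          - ((y (b n)) ^ (1-q) - (y (a n)) ^ (1-q)) := by
      funext n
      rw [← intervalIntegral.integral_of_le (hab n), key n,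
        intervalIntegral.integral_of_le (hab n)]
    rw [heq]
    simpa using hl3.sub hbdry
  -- integrability of G on (0,1)
  have hGpos : ∀ t ∈ Ioo (0:ℝ) 1, 0 < G t := fun t ht =>
    div_pos (hfpos t ht) (Real.rpow_pos_of_pos (hypos t ht) _)
  have hGaesm : AEStronglyMeasurable G (volume.restrict (Ioo 0 1)) := by
    have h1 : AEStronglyMeasurable f (volume.restrict (Ioo 0 1)) :=
      hfint.aestronglyMeasurable
    have h2 : AEStronglyMeasurable (fun t => ((y t) ^ q)⁻¹)
        (volume.restrict (Ioo 0 1)) := by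
      refine ContinuousOn.aestronglyMeasurable ?_ measurableSet_Ioo
      refine ContinuousOn.inv₀ ((hycont.mono Ioo_subset_Icc_self).rpow_const
        fun t ht => Or.inl (hypos t ht).ne') ?_
      exact fun t ht => ne_of_gt (Real.rpow_pos_of_pos (hypos t ht) _)
    exact (h1.mul h2).congr (ae_of_all _ fun x => (div_eq_mul_inv _ _).symm)
  have hGonIoc : ∀ n, IntegrableOn G (s n) := fun n =>
    (hGonIcc n).mono_set Ioc_subset_Icc_self
  have hofReal : ∀ n, ∫⁻ t in s n, ENNReal.ofReal (G t)
      = ENNReal.ofReal (∫ t in s n, G t) := by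
    intro n
    exact (ofReal_integral_eq_lintegral_ofReal (hGonIoc n)
      ((ae_restrict_iff' (hsm n)).2
        (ae_of_all _ fun t ht => (hGpos t (hIocsub n ht)).le))).symm
  obtain ⟨Cb, hCb⟩ : ∃ Cb, ∀ n, ∫ t in s n, G t ≤ Cb := by
    obtain ⟨Cb, hCb⟩ := tendsto_r.bddAbove_range
    exact ⟨Cb, fun n => hCb ⟨n, rfl⟩⟩
  have hfin : ∫⁻ t in Ioo (0:ℝ) 1, ENNReal.ofReal (G t) < ⊤ := by
    set φ : ℕ → ℝ → ENNReal := fun n t =>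
      (s n).indicator (fun t => ENNReal.ofReal (G t)) t with hφ
    have hφm : ∀ n, AEMeasurable (φ n) volume := by
      intro n
      rw [hφ]
      refine (aemeasurable_indicator_iff (hsm n)).2 ?_
      exact ENNReal.measurable_ofReal.comp_aemeasurable (hGonIoc n).aemeasurable
    have hφmono : ∀ᵐ t, Monotone fun n => φ n t := by
      refine ae_of_all _ fun t i j hij => ?_
      exact indicator_le_indicator_of_subset (hsmono hij) (fun _ => zero_le) t
    have hsup : (fun t => ⨆ n, φ n t)
        =ᵐ[volume] (Ioo 0 1).indicator (fun t => ENNReal.ofReal (G t)) := by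
      refine ae_of_all _ fun t => ?_
      by_cases ht : t ∈ Ioo (0:ℝ) 1
      · rw [indicator_of_mem ht]
        obtain ⟨n0, hn0⟩ := mem_iUnion.1 (hunion ▸ ht : t ∈ ⋃ n, s n)
        refine le_antisymm (iSup_le fun n => ?_) ?_
        · exact Set.indicator_le_self _ _ t
        · refine le_iSup_of_le n0 ?_
          rw [hφ]; simp only [indicator_of_mem hn0]; exact le_rfl
      · rw [indicator_of_notMem ht]
        refine le_antisymm (iSup_le fun n => ?_) zero_le
        rw [hφ]; simp only [indicator_of_notMem (fun hmem => ht (hIocsub n hmem))]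
        exact (indicator_of_notMem (fun hmem => ht (hIocsub n hmem)) _).le
    calc ∫⁻ t in Ioo (0:ℝ) 1, ENNReal.ofReal (G t)
        = ∫⁻ t, (Ioo (0:ℝ) 1).indicator (fun t => ENNReal.ofReal (G t)) t :=
          (lintegral_indicator measurableSet_Ioo _).symm
      _ = ∫⁻ t, ⨆ n, φ n t := (lintegral_congr_ae hsup).symm
      _ = ⨆ n, ∫⁻ t, φ n t := lintegral_iSup' hφm hφmono
      _ = ⨆ n, ∫⁻ t in s n, ENNReal.ofReal (G t) := by
          refine iSup_congr fun n => ?_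
          rw [hφ]; exact lintegral_indicator (hsm n) _
      _ ≤ ENNReal.ofReal Cb := iSup_le fun n => by
          rw [hofReal n]; exact ENNReal.ofReal_le_ofReal (hCb n)
      _ < ⊤ := ENNReal.ofReal_lt_top
  have hGint : IntegrableOn G (Ioo 0 1) := by
    refine ⟨hGaesm, ?_⟩
    rw [hasFiniteIntegral_iff_ofReal ((ae_restrict_iff' measurableSet_Ioo).2
      (ae_of_all _ fun t ht => (hGpos t ht).le))]
    exact hfin
  have hGlim : Tendsto (fun n => ∫ t in s n, G t) atTop
      (𝓝 (∫ t in Ioo 0 1, G t)) := by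
    have h1 := tendsto_setIntegral_of_monotone hsm hsmono (by rw [hunion]; exact hGint)
    rwa [hunion] at h1
  have hmainIoo : ∫ t in Ioo (0:ℝ) 1, G t = ∫ t in Ioo (0:ℝ) 1, (c - h t) :=
    tendsto_nhds_unique hGlim tendsto_r
  -- back to interval integrals
  have hIoc1 : ∫ t in (0:ℝ)..1, G t = ∫ t in Ioo (0:ℝ) 1, G t := by
    rw [intervalIntegral.integral_of_le zero_le_one,
      MeasureTheory.integral_Ioc_eq_integral_Ioo]
  have hhii : IntervalIntegrable h volume 0 1 := by
    rw [intervalIntegrable_iff_integrableOn_Ioc_of_le zero_le_one,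
      integrableOn_Ioc_iff_integrableOn_Ioo]
    exact hhint
  have hch1 : ∫ t in (0:ℝ)..1, (c - h t) = c - ∫ t in (0:ℝ)..1, h t := by
    rw [intervalIntegral.integral_sub intervalIntegrable_const hhii]
    simp
  have hmain : c - (∫ t in (0:ℝ)..1, h t) = ∫ t in (0:ℝ)..1, G t := by
    rw [hIoc1, hmainIoo, ← MeasureTheory.integral_Ioc_eq_integral_Ioo,
      ← intervalIntegral.integral_of_le zero_le_one, hch1]
  have hposG : 0 < ∫ t in (0:ℝ)..1, G t := by
    refine intervalIntegral_pos_of_pos_on ?_ hGpos zero_lt_one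
    rw [intervalIntegrable_iff_integrableOn_Ioc_of_le zero_le_one,
      integrableOn_Ioc_iff_integrableOn_Ioo]
    exact hGint
  refine ⟨hmain, hposG, by linarith⟩
end

section
/- Let p > 1, p' = p/(p-1), c ∈ ℝ with c ≥ h_M + (p')^{1/p'} p^{1/p} μ^{1/p'}, where h_M = ess sup h and μ = sup_{t∈(0,1)} f(t)/t^{p'-1} ∈ (0,∞). Set k = ((c - h_M)/p)^{p'} and φ(t) = k t^{p'}. Then φ(1) > 0, φ > 0 on (0,1), and φ'(t) ≤ p'[(c - h(t)) φ(t)^{1/p} - f(t)] for a.e. t ∈ [0,1]; i.e., φ is a supersolution (P_c φ ≤ 0) of the backward problem. -/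
open Set

/-- For `c ≥ h_M + (p')^{1/p'} p^{1/p} μ^{1/p'}` the function `φ(t) = k t^{p'}` with
`k = ((c - h_M)/p)^{p'}` is a positive supersolution of the backward problem:
`φ(1) > 0`, `φ > 0` on `(0,1)` and `φ'(t) ≤ p'[(c - h(t)) φ(t)^{1/p} - f(t)]`
on `(0,1)`. -/
theorem stmt12 (p p' c hM μ : ℝ) (hp : 1 < p) (hp' : p' = p / (p - 1))
    (h f : ℝ → ℝ)
    (hhb : ∀ t ∈ Set.Ioo (0 : ℝ) 1, h t ≤ hM)
    (hfpos : ∀ t ∈ Set.Ioo (0 : ℝ) 1, 0 < f t)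
    (hμ0 : 0 < μ)
    (hμ : ∀ t ∈ Set.Ioo (0 : ℝ) 1, f t ≤ μ * t ^ (p' - 1))
    (hc : hM + p' ^ (1 / p') * p ^ (1 / p) * μ ^ (1 / p') ≤ c) :
    (0 < ((c - hM) / p) ^ p' * (1 : ℝ) ^ p') ∧
    (∀ t ∈ Set.Ioo (0 : ℝ) 1, 0 < ((c - hM) / p) ^ p' * t ^ p') ∧
    (∀ t ∈ Set.Ioo (0 : ℝ) 1,
      ((c - hM) / p) ^ p' * p' * t ^ (p' - 1)
        ≤ p' * ((c - h t) * (((c - hM) / p) ^ p' * t ^ p') ^ (1 / p) - f t)) := by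
  have hpp : (0:ℝ) < p := by linarith
  have hp1 : (0:ℝ) < p - 1 := by linarith
  have hp'pos : 0 < p' := by rw [hp']; positivity
  have hp'1 : 1 < p' := by rw [hp', lt_div_iff₀ hp1]; linarith
  have hA : 0 < p' ^ (1 / p') * p ^ (1 / p) * μ ^ (1 / p') := by
    have h1 := Real.rpow_pos_of_pos hp'pos (1 / p')
    have h2 := Real.rpow_pos_of_pos hpp (1 / p)
    have h3 := Real.rpow_pos_of_pos hμ0 (1 / p')
    positivity
  have ha : 0 < c - hM := by linarith
  set a := c - hM with ha_def
  have hap : 0 < a / p := by positivity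
  have hK : 0 < (a / p) ^ p' := Real.rpow_pos_of_pos hap _
  have hK1 : 0 < (a / p) ^ (p' - 1) := Real.rpow_pos_of_pos hap _
  have hpp' : p' * (1 / p) = p' - 1 := by
    rw [hp']; field_simp; ring
  -- key: p' * p^(p'-1) * μ ≤ a^p'
  have hkey : p' * p ^ (p' - 1) * μ ≤ a ^ p' := by
    have h1 : (p' ^ (1 / p') * p ^ (1 / p) * μ ^ (1 / p')) ^ p' ≤ a ^ p' :=
      Real.rpow_le_rpow hA.le (by linarith) hp'pos.le
    have e1 : (p' ^ (1 / p') * p ^ (1 / p) * μ ^ (1 / p')) ^ p'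
        = p' * p ^ (p' - 1) * μ := by
      rw [Real.mul_rpow (by positivity) (by positivity),
        Real.mul_rpow (by positivity) (by positivity)]
      rw [← Real.rpow_mul hp'pos.le, ← Real.rpow_mul hpp.le, ← Real.rpow_mul hμ0.le]
      rw [one_div_mul_cancel (ne_of_gt hp'pos)]
      have : 1 / p * p' = p' - 1 := by rw [mul_comm]; exact hpp'
      rw [this, Real.rpow_one]
      norm_num
    linarith [e1 ▸ h1]
  -- a * (a/p)^(p'-1) - (a/p)^p' ≥ μ
  have e2 : a * (a / p) ^ (p' - 1) = a ^ p' / p ^ (p' - 1) := by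
    rw [Real.div_rpow ha.le hpp.le, ← mul_div_assoc]
    congr 1
    rw [← Real.rpow_one_add' ha.le (by intro hh; nlinarith)]
    ring_nf
  have e3 : (a / p) ^ p' = a ^ p' / (p ^ (p' - 1) * p) := by
    rw [Real.div_rpow ha.le hpp.le]
    congr 1
    rw [← Real.rpow_add_one (ne_of_gt hpp) (p' - 1)]
    ring_nf
  have hμk : μ ≤ a * (a / p) ^ (p' - 1) - (a / p) ^ p' := by
    rw [e2, e3]
    have hPp : 0 < p ^ (p' - 1) := Real.rpow_pos_of_pos hpp _
    have hp'p : p' * (p - 1) = p := by rw [hp']; field_simp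
    rw [div_sub_div _ _ hPp.ne' (by positivity), le_div_iff₀ (by positivity)]
    nlinarith [mul_le_mul_of_nonneg_right hkey (mul_nonneg hPp.le hp1.le),
      (by linear_combination (-(μ * (p ^ (p' - 1) * p ^ (p' - 1)))) * hp'p :
        μ * (p ^ (p' - 1) * (p ^ (p' - 1) * p))
          = p' * p ^ (p' - 1) * μ * (p ^ (p' - 1) * (p - 1)))]
  refine ⟨by rw [Real.one_rpow]; simpa using hK, fun t ht => ?_, fun t ht => ?_⟩
  · exact mul_pos hK (Real.rpow_pos_of_pos ht.1 _)
  · obtain ⟨ht0, ht1⟩ := ht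
    have hT : 0 < t ^ (p' - 1) := Real.rpow_pos_of_pos ht0 _
    have ePhi : (((a) / p) ^ p' * t ^ p') ^ (1 / p)
        = (a / p) ^ (p' - 1) * t ^ (p' - 1) := by
      rw [Real.mul_rpow hK.le (Real.rpow_pos_of_pos ht0 _).le,
        ← Real.rpow_mul hap.le, ← Real.rpow_mul ht0.le, hpp']
    rw [ePhi]
    have hht := hhb t ⟨ht0, ht1⟩
    have hft := hμ t ⟨ht0, ht1⟩
    have hcht : a ≤ c - h t := by simp only [ha_def]; linarith
    have step1 : a * ((a / p) ^ (p' - 1) * t ^ (p' - 1))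
        ≤ (c - h t) * ((a / p) ^ (p' - 1) * t ^ (p' - 1)) := by
      apply mul_le_mul_of_nonneg_right hcht (by positivity)
    have step2 : ((a / p) ^ p' + μ) * t ^ (p' - 1)
        ≤ a * (a / p) ^ (p' - 1) * t ^ (p' - 1) := by
      apply mul_le_mul_of_nonneg_right (by linarith) hT.le
    nlinarith [mul_le_mul_of_nonneg_left (sub_le_sub step1 hft) hp'pos.le]
end

section
/- Let p > 1, p' = p/(p-1), and suppose h : [0,1] → ℝ is bounded measurable with h(0) > h(t) for all t ∈ (0,1), and f satisfies 0 < f(t) ≤ (1/(p' p^{p'/p})) (h(0) - h(t)) [∫_0^t (h(0) - h(τ)) dτ]^{p'/p} for t ∈ [0,1]. Define K(t) = [(1/p) ∫_0^t (h(0) - h(τ)) dτ]^{p'}. Then K(0) = 0, K > 0 on (0,1), K(1) ≥ 0, and K'(t) ≤ p'[(h(0) - h(t)) K(t)^{1/p} - f(t)] for a.e. t ∈ [0,1]; i.e., K is a supersolution of the backward problem at c = h(0). -/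
open MeasureTheory Set Filter Metric Topology

lemma ae_hasDerivAt_intervalIntegral (g : ℝ → ℝ) (hg : Integrable g) :
    ∀ᵐ x ∂(volume : Measure ℝ),
      HasDerivAt (fun s => ∫ τ in (0:ℝ)..s, g τ) (g x) x := by
  have hloc : LocallyIntegrable g volume := hg.locallyIntegrable
  filter_upwards [IsUnifLocDoublingMeasure.ae_tendsto_average_norm_sub volume hloc 1] with x hx
  rw [hasDerivAt_iff_tendsto_slope]
  set F := fun s => ∫ τ in (0:ℝ)..s, g τ with hF
  have hA : Tendsto (fun y => ⨍ τ in closedBall ((x+y)/2) (|y-x|/2), ‖g τ - g x‖)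
      (𝓝[≠] x) (𝓝 0) := by
    apply hx (fun y => (x+y)/2) (fun y => |y-x|/2)
    · rw [tendsto_nhdsWithin_iff]
      constructor
      · have : Tendsto (fun y : ℝ => |y - x|/2) (𝓝 x) (𝓝 (|x - x|/2)) :=
          ((continuous_abs.comp (continuous_id.sub continuous_const)).div_const 2).tendsto x
        simpa using this.mono_left nhdsWithin_le_nhds
      · filter_upwards [self_mem_nhdsWithin] with y hy
        have hxy : y - x ≠ 0 := sub_ne_zero.2 (Set.mem_compl_singleton_iff.1 hy)
        rw [Set.mem_Ioi]
        positivity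
    · filter_upwards with y
      simp only [Metric.mem_closedBall, Real.dist_eq, one_mul]
      have h1 : x - (x+y)/2 = (x - y)/2 := by ring
      rw [h1, abs_div, abs_sub_comm x y]
      simp
  have key : ∀ᶠ y in 𝓝[≠] x, ‖slope F x y - g x‖ ≤
      ⨍ τ in closedBall ((x+y)/2) (|y-x|/2), ‖g τ - g x‖ := by
    filter_upwards [self_mem_nhdsWithin] with y hy
    have hyx : y - x ≠ 0 := sub_ne_zero.2 (Set.mem_compl_singleton_iff.1 hy)
    have h1 : F y - F x = ∫ τ in x..y, g τ :=
      intervalIntegral.integral_interval_sub_left hg.intervalIntegrable hg.intervalIntegrable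
    have h2 : (∫ τ in x..y, (g τ - g x)) = (∫ τ in x..y, g τ) - (y - x) * g x := by
      rw [intervalIntegral.integral_sub hg.intervalIntegrable intervalIntegrable_const,
        intervalIntegral.integral_const]
      simp [smul_eq_mul]
    have hslope : slope F x y - g x = (y - x)⁻¹ * (∫ τ in x..y, (g τ - g x)) := by
      rw [slope_def_field, h2, ← h1]
      field_simp
    have hsub : Set.uIoc x y ⊆ closedBall ((x+y)/2) (|y-x|/2) := by
      intro τ hτ
      rw [Set.mem_uIoc] at hτ
      simp only [Metric.mem_closedBall, Real.dist_eq]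
      have h3 := le_abs_self (y - x)
      have h4 := neg_abs_le (y - x)
      rw [abs_le]
      rcases hτ with ⟨h5, h6⟩ | ⟨h5, h6⟩ <;> constructor <;> linarith
    have hint : IntegrableOn (fun τ => ‖g τ - g x‖) (closedBall ((x+y)/2) (|y-x|/2)) volume :=
      ((hg.integrableOn.sub (integrableOn_const (measure_closedBall_lt_top).ne)).norm)
    have hvol : (volume (closedBall ((x+y)/2) (|y-x|/2))).toReal = |y - x| := by
      rw [Real.volume_closedBall, ENNReal.toReal_ofReal (by positivity)]
      rw [abs_sub_comm]
      ring
    rw [hslope, setAverage_eq, measureReal_def, hvol, smul_eq_mul, norm_mul, norm_inv, Real.norm_eq_abs,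
      Real.norm_eq_abs]
    refine mul_le_mul_of_nonneg_left ?_ (inv_nonneg.2 (abs_nonneg _))
    calc ‖∫ τ in x..y, (g τ - g x)‖ ≤ ∫ τ in Set.uIoc x y, ‖g τ - g x‖ :=
          intervalIntegral.norm_integral_le_integral_norm_uIoc
      _ ≤ ∫ τ in closedBall ((x+y)/2) (|y-x|/2), ‖g τ - g x‖ := by
          apply setIntegral_mono_set hint
          · filter_upwards with τ using norm_nonneg _
          · exact HasSubset.Subset.eventuallyLE hsub
  have h0 := squeeze_zero_norm' key hA
  have h2 : Tendsto (fun y => (slope F x y - g x) + g x) (𝓝[≠] x) (𝓝 (0 + g x)) :=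
    h0.add tendsto_const_nhds
  simpa using h2

/-- In the threshold case `c = h(0)`: if `h(0) > h(t)` on `(0,1)` and
`0 < f(t) ≤ (1/(p' p^{p'/p}))(h(0)-h(t))[∫_0^t (h(0)-h(τ))dτ]^{p'/p}`, then
`K(t) = [(1/p)∫_0^t (h(0)-h(τ))dτ]^{p'}` satisfies `K(0) = 0`, `K > 0` on `(0,1)`,
`K(1) ≥ 0` and `K'(t) ≤ p'[(h(0)-h(t)) K(t)^{1/p} - f(t)]` a.e. on `(0,1)`. -/
theorem stmt13 (p p' : ℝ) (hp : 1 < p) (hp' : p' = p / (p - 1))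
    (h f : ℝ → ℝ)
    (hhm : Measurable h) (hhb : ∃ M, ∀ t ∈ Set.Icc (0 : ℝ) 1, |h t| ≤ M)
    (hhlt : ∀ t ∈ Set.Ioo (0 : ℝ) 1, h t < h 0)
    (hfpos : ∀ t ∈ Set.Ioo (0 : ℝ) 1, 0 < f t)
    (hfbd : ∀ t ∈ Set.Icc (0 : ℝ) 1,
      f t ≤ (1 / (p' * p ^ (p' / p))) * (h 0 - h t) *
        (∫ τ in (0 : ℝ)..t, (h 0 - h τ)) ^ (p' / p)) :
    (((1 / p) * ∫ τ in (0 : ℝ)..(0 : ℝ), (h 0 - h τ)) ^ p' = 0) ∧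
    (∀ t ∈ Set.Ioo (0 : ℝ) 1,
      0 < ((1 / p) * ∫ τ in (0 : ℝ)..t, (h 0 - h τ)) ^ p') ∧
    (0 ≤ ((1 / p) * ∫ τ in (0 : ℝ)..(1 : ℝ), (h 0 - h τ)) ^ p') ∧
    (∀ᵐ t ∂(volume.restrict (Set.Ioo (0 : ℝ) 1)), ∃ K',
      HasDerivAt (fun s => ((1 / p) * ∫ τ in (0 : ℝ)..s, (h 0 - h τ)) ^ p') K' t ∧
      K' ≤ p' * ((h 0 - h t) *
        (((1 / p) * ∫ τ in (0 : ℝ)..t, (h 0 - h τ)) ^ p') ^ (1 / p) - f t)) := by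
  have hp0 : 0 < p := lt_trans one_pos hp
  have hp1 : 0 < p - 1 := by linarith
  have hp'1 : 1 < p' := by rw [hp']; rw [lt_div_iff₀ hp1]; linarith
  have hp'0 : 0 < p' := lt_trans one_pos hp'1
  -- the density g and its truncation
  set g : ℝ → ℝ := fun t => h 0 - h t with hg_def
  have hgm : Measurable g := measurable_const.sub hhm
  obtain ⟨M, hM⟩ := hhb
  have hgint : IntegrableOn g (Icc (0:ℝ) 1) volume := by
    apply Measure.integrableOn_of_bounded (M := |h 0| + M)
    · exact (measure_Icc_lt_top).ne
    · exact hgm.aestronglyMeasurable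
    · rw [ae_restrict_iff' measurableSet_Icc]
      filter_upwards with t ht
      have h1 := hM t ht
      have h2 := abs_sub (h 0) (h t)
      calc ‖g t‖ = |h 0 - h t| := rfl
        _ ≤ |h 0| + |h t| := abs_sub _ _
        _ ≤ |h 0| + M := by linarith
  set g₁ : ℝ → ℝ := (Icc (0:ℝ) 1).indicator g with hg₁_def
  have hg₁int : Integrable g₁ volume := by
    rw [hg₁_def, integrable_indicator_iff measurableSet_Icc]
    exact hgint
  -- F agrees with the truncated primitive on [0,1]
  have hFeq : ∀ s ∈ Icc (0:ℝ) 1, (∫ τ in (0:ℝ)..s, g τ) = ∫ τ in (0:ℝ)..s, g₁ τ := by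
    intro s hs
    apply intervalIntegral.integral_congr
    intro τ hτ
    rw [Set.uIcc_of_le hs.1] at hτ
    have : τ ∈ Icc (0:ℝ) 1 := ⟨hτ.1, le_trans hτ.2 hs.2⟩
    rw [hg₁_def, Set.indicator_of_mem this]
  -- positivity of F on (0,1)
  have hFpos : ∀ t ∈ Ioo (0:ℝ) 1, 0 < ∫ τ in (0:ℝ)..t, g τ := by
    intro t ht
    apply intervalIntegral.intervalIntegral_pos_of_pos_on
    · rw [intervalIntegrable_iff, uIoc_of_le ht.1.le]
      exact hgint.mono_set (Ioc_subset_Icc_self.trans (Icc_subset_Icc le_rfl ht.2.le))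
    · intro x hx
      have : x ∈ Ioo (0:ℝ) 1 := ⟨hx.1, lt_trans hx.2 ht.2⟩
      have := hhlt x this
      simp only [hg_def]
      linarith
    · exact ht.1
  refine ⟨?_, ?_, ?_, ?_⟩
  · rw [intervalIntegral.integral_same, mul_zero, Real.zero_rpow (ne_of_gt hp'0)]
  · intro t ht
    exact Real.rpow_pos_of_pos (mul_pos (by positivity) (hFpos t ht)) _
  · apply Real.rpow_nonneg
    have hre : volume.restrict (Ioo (0:ℝ) 1) = volume.restrict (Icc (0:ℝ) 1) :=
      Measure.restrict_congr_set Ioo_ae_eq_Icc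
    have hg0 : 0 ≤ ∫ τ in (0:ℝ)..(1:ℝ), g τ := by
      apply intervalIntegral.integral_nonneg_of_ae_restrict zero_le_one
      rw [← hre, EventuallyLE, ae_restrict_iff' measurableSet_Ioo]
      filter_upwards with x hx
      have := hhlt x hx
      simp only [hg_def, Pi.zero_apply]
      linarith
    positivity
  · have hae := ae_restrict_of_ae (μ := volume) (s := Ioo (0:ℝ) 1)
      (ae_hasDerivAt_intervalIntegral g₁ hg₁int)
    filter_upwards [hae, ae_restrict_mem measurableSet_Ioo] with t hder ht
    -- transfer derivative from g₁-primitive to g-primitive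
    have htmem : t ∈ Icc (0:ℝ) 1 := Ioo_subset_Icc_self ht
    have hg₁t : g₁ t = g t := Set.indicator_of_mem htmem g
    have heq : (fun s => ∫ τ in (0:ℝ)..s, g τ) =ᶠ[𝓝 t] (fun s => ∫ τ in (0:ℝ)..s, g₁ τ) := by
      filter_upwards [isOpen_Ioo.mem_nhds ht] with s hs
      exact hFeq s (Ioo_subset_Icc_self hs)
    have hderF : HasDerivAt (fun s => ∫ τ in (0:ℝ)..s, g τ) (g t) t := by
      rw [← hg₁t]
      exact hder.congr_of_eventuallyEq heq
    have hFt := hFpos t ht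
    set Ft : ℝ := ∫ τ in (0:ℝ)..t, g τ with hFt_def
    -- chain rule
    have h2 : HasDerivAt (fun s => (1/p) * ∫ τ in (0:ℝ)..s, g τ) ((1/p) * g t) t :=
      hderF.const_mul (1/p)
    have h3 := h2.rpow_const (p := p') (Or.inr hp'1.le)
    refine ⟨_, h3, ?_⟩
    -- the inequality
    have hbase : 0 < (1/p) * Ft := by positivity
    have hexp : p' - 1 = p' / p := by
      rw [hp']
      field_simp
      ring
    have hKp : (((1/p) * Ft) ^ p') ^ (1/p) = ((1/p) * Ft) ^ (p' / p) := by
      rw [← Real.rpow_mul hbase.le]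
      congr 1
      field_simp
    have hsplit : ((1/p) * Ft) ^ (p' / p) = (p ^ (p' / p))⁻¹ * Ft ^ (p' / p) := by
      rw [Real.mul_rpow (by positivity) hFt.le, one_div, Real.inv_rpow hp0.le]
    have hgt : 0 < g t := by
      have := hhlt t ht
      simp only [hg_def]
      linarith
    have hfb' : f t ≤ (1 / (p' * p ^ (p' / p))) * g t * Ft ^ (p' / p) := hfbd t htmem
    show (1 / p * g t * p' * (1 / p * Ft) ^ (p' - 1)) ≤
      p' * (g t * (((1/p) * Ft) ^ p') ^ (1/p) - f t)
    rw [hKp, hsplit, hexp, hsplit]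
    have h5 : p' * f t ≤ g t * ((p ^ (p' / p))⁻¹ * Ft ^ (p' / p)) := by
      have := mul_le_mul_of_nonneg_left hfb' hp'0.le
      calc p' * f t ≤ p' * ((1 / (p' * p ^ (p' / p))) * g t * Ft ^ (p' / p)) := this
        _ = g t * ((p ^ (p' / p))⁻¹ * Ft ^ (p' / p)) := by
            field_simp
    have hZ : (1 / p * g t * p' * ((p ^ (p' / p))⁻¹ * Ft ^ (p' / p))) =
        (p' / p) * (g t * ((p ^ (p' / p))⁻¹ * Ft ^ (p' / p))) := by ring
    rw [hZ]
    have hfinal : (p' / p) * (g t * ((p ^ (p' / p))⁻¹ * Ft ^ (p' / p))) =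
        p' * (g t * ((p ^ (p' / p))⁻¹ * Ft ^ (p' / p))) -
        (g t * ((p ^ (p' / p))⁻¹ * Ft ^ (p' / p))) := by
      rw [← hexp]
      ring
    nlinarith [h5, hfinal]
end

section
/- Let p > 1, p' = p/(p-1), L > 0, t_0 ∈ (0,1], and suppose h : [0,t_0] → ℝ and c ∈ ℝ satisfy 0 < c - h(t) < L for all t ∈ [0,t_0], and f ≥ 0 on [0,t_0]. Define the operator T on C[0,t_0] by T(u)(t) = p' ∫_0^t [(c - h(τ))(max(u(τ),0))^{1/p} - f(τ)] dτ. Then T is monotone increasing (u_1 ≤ u_2 pointwise implies T(u_1) ≤ T(u_2) pointwise), and the function ỹ_0(t) = L^{p'} t^{p'} satisfies T(ỹ_0)(t) ≤ ỹ_0(t) for all t ∈ [0,t_0]. -/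
open MeasureTheory Set

/-- The operator `T(u)(t) = p' ∫_0^t [(c - h(τ))(u⁺(τ))^{1/p} - f(τ)] dτ` is monotone
increasing on continuous functions, and `ỹ₀(t) = L^{p'} t^{p'}` satisfies
`T(ỹ₀) ≤ ỹ₀` on `[0,t₀]`, provided `0 < c - h < L` on `[0,t₀]` and `f ≥ 0`. -/
theorem stmt14 (p p' c L t₀ : ℝ) (hp : 1 < p) (hp' : p' = p / (p - 1))
    (hL : 0 < L) (ht₀ : t₀ ∈ Set.Ioc (0 : ℝ) 1)
    (h f : ℝ → ℝ)
    (hhm : Measurable h)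
    (hch : ∀ t ∈ Set.Icc 0 t₀, 0 < c - h t ∧ c - h t < L)
    (hfint : IntegrableOn f (Set.Icc 0 t₀))
    (hfnn : ∀ t ∈ Set.Icc 0 t₀, 0 ≤ f t) :
    (∀ u₁ u₂ : ℝ → ℝ, Continuous u₁ → Continuous u₂ →
      (∀ t ∈ Set.Icc 0 t₀, u₁ t ≤ u₂ t) →
      ∀ t ∈ Set.Icc 0 t₀,
        (p' * ∫ τ in (0 : ℝ)..t, ((c - h τ) * (max (u₁ τ) 0) ^ (1 / p) - f τ))
          ≤ p' * ∫ τ in (0 : ℝ)..t, ((c - h τ) * (max (u₂ τ) 0) ^ (1 / p) - f τ)) ∧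
    (∀ t ∈ Set.Icc 0 t₀,
      (p' * ∫ τ in (0 : ℝ)..t,
          ((c - h τ) * (max (L ^ p' * τ ^ p') 0) ^ (1 / p) - f τ))
        ≤ L ^ p' * t ^ p') := by
  obtain ⟨ht₀0, ht₀1⟩ := ht₀
  have hp0 : (0:ℝ) < p := lt_trans one_pos hp
  have hp1 : (0:ℝ) < p - 1 := by linarith
  have hp'pos : 0 < p' := by rw [hp']; positivity
  have hpa : p' / p = p' - 1 := by
    rw [hp']; field_simp; ring
  have hpa1 : 0 < p' - 1 := by
    rw [← hpa, hp']; rw [div_div]; positivity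
  -- integrability of the integrand
  have hfint' : ∀ t ∈ Icc (0:ℝ) t₀, IntervalIntegrable f volume 0 t := by
    intro t ht
    rw [intervalIntegrable_iff_integrableOn_Icc_of_le ht.1]
    exact hfint.mono_set (Icc_subset_Icc le_rfl ht.2)
  have hint : ∀ (u : ℝ → ℝ), Continuous u → ∀ t ∈ Icc (0:ℝ) t₀,
      IntervalIntegrable (fun τ => (c - h τ) * (max (u τ) 0) ^ (1/p) - f τ) volume 0 t := by
    intro u hu t ht
    have hg1 : Continuous (fun τ => (max (u τ) 0) ^ (1/p)) :=
      (hu.max continuous_const).rpow_const (fun x => Or.inr (by positivity))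
    obtain ⟨M, hM⟩ := isCompact_Icc.exists_bound_of_continuousOn
      (s := Icc (0:ℝ) t₀) hg1.continuousOn
    apply IntervalIntegrable.sub _ (hfint' t ht)
    rw [intervalIntegrable_iff_integrableOn_Icc_of_le ht.1]
    apply IntegrableOn.mono_set _ (Icc_subset_Icc le_rfl ht.2)
    apply Measure.integrableOn_of_bounded (M := L * M)
    · simp [measure_Icc_lt_top.ne]
    · exact (((measurable_const.sub hhm).mul hg1.measurable)).aestronglyMeasurable
    · rw [ae_restrict_iff' measurableSet_Icc]
      refine ae_of_all _ fun x hx => ?_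
      have h1 := hch x hx
      have h2 := hM x hx
      rw [norm_mul]
      have hMnn : 0 ≤ M := le_trans (norm_nonneg _) h2
      apply mul_le_mul _ h2 (norm_nonneg _) (le_of_lt hL)
      rw [Real.norm_eq_abs, abs_of_pos h1.1]; exact le_of_lt h1.2
  constructor
  · intro u₁ u₂ hu₁ hu₂ hle t ht
    apply mul_le_mul_of_nonneg_left _ (le_of_lt hp'pos)
    apply intervalIntegral.integral_mono_on ht.1 (hint u₁ hu₁ t ht) (hint u₂ hu₂ t ht)
    intro x hx
    have hx' : x ∈ Icc (0:ℝ) t₀ := Icc_subset_Icc le_rfl ht.2 hx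
    have h1 := hch x hx'
    apply sub_le_sub_right
    apply mul_le_mul_of_nonneg_left _ (le_of_lt h1.1)
    exact Real.rpow_le_rpow (le_max_right _ _)
      (max_le_max (hle x hx') le_rfl) (by positivity)
  · intro t ht
    have hy : Continuous (fun τ : ℝ => L ^ p' * τ ^ p') :=
      continuous_const.mul (continuous_id.rpow_const fun x => Or.inr (le_of_lt hp'pos))
    have hbound : ∀ x ∈ Icc (0:ℝ) t,
        (c - h x) * (max (L ^ p' * x ^ p') 0) ^ (1/p) - f x ≤ L ^ p' * x ^ (p' - 1) := by
      intro x hx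
      have hx' : x ∈ Icc (0:ℝ) t₀ := Icc_subset_Icc le_rfl ht.2 hx
      have h1 := hch x hx'
      have hx0 : 0 ≤ x := hx.1
      have hynn : (0:ℝ) ≤ L ^ p' * x ^ p' := by positivity
      rw [max_eq_left hynn]
      have hmul : (L ^ p' * x ^ p') ^ (1/p) = L ^ (p' - 1) * x ^ (p' - 1) := by
        rw [Real.mul_rpow (by positivity) (by positivity),
          ← Real.rpow_mul hL.le, ← Real.rpow_mul hx0, mul_one_div, hpa]
      rw [hmul]
      have hA : (0:ℝ) ≤ L ^ (p'-1) * x ^ (p'-1) := by positivity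
      have h2 : (c - h x) * (L ^ (p'-1) * x ^ (p'-1)) ≤ L * (L ^ (p'-1) * x ^ (p'-1)) :=
        mul_le_mul_of_nonneg_right h1.2.le hA
      have hLL : L ^ (1:ℝ) * L ^ (p'-1) = L ^ p' := by
        rw [← Real.rpow_add hL]; norm_num
      rw [Real.rpow_one] at hLL
      have hfx := hfnn x hx'
      calc (c - h x) * (L ^ (p'-1) * x ^ (p'-1)) - f x
          ≤ L * (L ^ (p'-1) * x ^ (p'-1)) - 0 := by linarith
        _ = L ^ p' * x ^ (p' - 1) := by rw [sub_zero, ← mul_assoc, hLL]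
    calc p' * ∫ τ in (0:ℝ)..t, ((c - h τ) * (max (L ^ p' * τ ^ p') 0) ^ (1/p) - f τ)
        ≤ p' * ∫ τ in (0:ℝ)..t, L ^ p' * τ ^ (p' - 1) := by
          apply mul_le_mul_of_nonneg_left _ hp'pos.le
          exact intervalIntegral.integral_mono_on ht.1 (hint _ hy t ht)
            ((intervalIntegral.intervalIntegrable_rpow' (by linarith)).const_mul _) hbound
      _ = L ^ p' * t ^ p' := by
          rw [intervalIntegral.integral_const_mul, integral_rpow (Or.inl (by linarith))]
          have he : p' - 1 + 1 = p' := by ring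
          rw [he, Real.zero_rpow hp'pos.ne']
          field_simp
          simp
end

section
/- Let p > 1, p' = p/(p-1), L > 0, δ > 0, ν̃ > 0, and suppose 0 < c - h(t) < L on [0,δ] and f(t) ≥ ν̃ L^{p'} t^{p'-1} on (0,δ). With T(u)(t) = p' ∫_0^t [(c - h(τ))(u^+(τ))^{1/p} - f(τ)] dτ and ỹ_0(t) = L^{p'}t^{p'}, define ỹ_{n+1} = T(ỹ_n). Then for each n ≥ 0, ỹ_n(t) ≤ a_n L^{p'} t^{p'} for t ∈ (0,δ), where a_0 = 1 and a_{n+1} = (max(a_n,0))^{1/p} - ν̃. -/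
open MeasureTheory Set

/-- Iteration bound: with `T(u)(t) = p' ∫_0^t [(c - h)(u⁺)^{1/p} - f]`,
`ỹ₀(t) = L^{p'}t^{p'}` and `ỹ_{n+1} = T(ỹ_n)`, if `0 < c - h < L` on `[0,δ]` and
`f(t) ≥ ν̃ L^{p'} t^{p'-1}` on `(0,δ)`, then `ỹ_n(t) ≤ a_n L^{p'} t^{p'}` on `(0,δ)`
for each `n`, where `a₀ = 1` and `a_{n+1} = (a_n⁺)^{1/p} - ν̃`. -/
theorem stmt15 (p p' c L δ ν : ℝ) (hp : 1 < p) (hp' : p' = p / (p - 1))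
    (hL : 0 < L) (hδ : 0 < δ) (hν : 0 < ν)
    (h f : ℝ → ℝ)
    (hhm : Measurable h)
    (hch : ∀ t ∈ Set.Icc 0 δ, 0 < c - h t ∧ c - h t < L)
    (hfint : IntegrableOn f (Set.Icc 0 δ))
    (hflb : ∀ t ∈ Set.Ioo 0 δ, ν * L ^ p' * t ^ (p' - 1) ≤ f t)
    (ytil : ℕ → ℝ → ℝ)
    (hy0 : ∀ t, ytil 0 t = L ^ p' * t ^ p')
    (hyrec : ∀ n, ∀ t, ytil (n + 1) t =
      p' * ∫ τ in (0 : ℝ)..t, ((c - h τ) * (max (ytil n τ) 0) ^ (1 / p) - f τ))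
    (a : ℕ → ℝ) (ha0 : a 0 = 1)
    (harec : ∀ n, a (n + 1) = (max (a n) 0) ^ (1 / p) - ν) :
    ∀ n, ∀ t ∈ Set.Ioo 0 δ, ytil n t ≤ a n * L ^ p' * t ^ p' := by
  have hp0 : (0:ℝ) < p := lt_trans one_pos hp
  have hpm1 : (0:ℝ) < p - 1 := by linarith
  have hp'1 : 1 < p' := by rw [hp', lt_div_iff₀ hpm1]; linarith
  have hp'pos : (0:ℝ) < p' := by linarith
  have hexp : p' * (1/p) = p' - 1 := by rw [hp']; field_simp; ring
  have hLm : L ^ (1:ℝ) * L ^ (p' - 1) = L ^ p' := by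
    rw [← Real.rpow_add hL]; ring_nf
  have main : ∀ n, ContinuousOn (ytil n) (Icc 0 δ) ∧
      ∀ t ∈ Ioo 0 δ, ytil n t ≤ a n * L ^ p' * t ^ p' := by
    intro n
    induction n with
    | zero =>
      have hy0' : ytil 0 = fun t => L ^ p' * t ^ p' := funext hy0
      constructor
      · rw [hy0']
        exact continuousOn_const.mul (Real.continuous_rpow_const hp'pos.le).continuousOn
      · intro t _
        rw [hy0 t, ha0, one_mul]
    | succ n ih =>
      obtain ⟨hcont, hbd⟩ := ih
      have hφcont : ContinuousOn (fun τ => (max (ytil n τ) 0) ^ (1/p)) (Icc 0 δ) :=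
        ContinuousOn.rpow_const
          (fun x hx => (hcont x hx).max continuousWithinAt_const)
          (fun x _ => Or.inr (by positivity))
      obtain ⟨C, hC⟩ := isCompact_Icc.exists_bound_of_continuousOn hφcont
      have hprodm : AEStronglyMeasurable (fun τ => (c - h τ) * (max (ytil n τ) 0) ^ (1/p))
          (volume.restrict (Icc 0 δ)) :=
        ((measurable_const.sub hhm).aestronglyMeasurable).mul
          (hφcont.aestronglyMeasurable measurableSet_Icc)
      have hprodint : IntegrableOn (fun τ => (c - h τ) * (max (ytil n τ) 0) ^ (1/p))
          (Icc 0 δ) := by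
        refine Integrable.mono' (integrable_const (L * C)) hprodm ?_
        rw [ae_restrict_iff' measurableSet_Icc]
        filter_upwards with τ hτ
        have h1 := hch τ hτ
        have h2 := hC τ hτ
        have h3 : (0:ℝ) ≤ (max (ytil n τ) 0) ^ (1/p) := by positivity
        rw [Real.norm_eq_abs, abs_of_nonneg (mul_nonneg h1.1.le h3)]
        have h4 : (max (ytil n τ) 0) ^ (1/p) ≤ C := by
          rwa [Real.norm_eq_abs, abs_of_nonneg h3] at h2
        nlinarith
      have hgint : IntegrableOn
          (fun τ => (c - h τ) * (max (ytil n τ) 0) ^ (1/p) - f τ) (Icc 0 δ) :=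
        hprodint.sub hfint
      constructor
      · have hcont' : ContinuousOn
            (fun x => p' * ∫ t in Ioc 0 x, ((c - h t) * (max (ytil n t) 0) ^ (1/p) - f t))
            (Icc 0 δ) :=
          continuousOn_const.mul (intervalIntegral.continuousOn_primitive hgint)
        exact hcont'.congr fun x hx => by
          rw [hyrec, intervalIntegral.integral_of_le hx.1]
      · intro t ht
        rw [hyrec, intervalIntegral.integral_of_le ht.1.le]
        have hIoc : Ioc 0 t ⊆ Ioo 0 δ := fun x hx => ⟨hx.1, lt_of_le_of_lt hx.2 ht.2⟩
        have hIcc : Ioc 0 t ⊆ Icc 0 δ := hIoc.trans Ioo_subset_Icc_self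
        set A := (max (a n) 0) ^ (1/p) with hA
        -- pointwise bound on Ioc 0 t
        have hpt : ∀ τ ∈ Ioc 0 t,
            (c - h τ) * (max (ytil n τ) 0) ^ (1/p) - f τ
              ≤ ((A - ν) * L ^ p') * τ ^ (p' - 1) := by
          intro τ hτ
          have hτδ : τ ∈ Ioo 0 δ := hIoc hτ
          have hτ0 : 0 < τ := hτδ.1
          have hcτ := hch τ (hIcc hτ)
          have hyb := hbd τ hτδ
          have hX : (0:ℝ) ≤ L ^ p' * τ ^ p' := by positivity
          have step1 : max (ytil n τ) 0 ≤ max (a n) 0 * (L ^ p' * τ ^ p') := by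
            apply max_le
            · calc ytil n τ ≤ a n * L ^ p' * τ ^ p' := hyb
                _ ≤ max (a n) 0 * (L ^ p' * τ ^ p') := by
                    rw [← mul_assoc]
                    exact mul_le_mul_of_nonneg_right
                      (mul_le_mul_of_nonneg_right (le_max_left _ _)
                        (Real.rpow_nonneg hL.le _)) (Real.rpow_nonneg hτ0.le _)
            · positivity
          have step2 : (max (ytil n τ) 0) ^ (1/p)
              ≤ A * (L ^ (p'-1) * τ ^ (p'-1)) := by
            calc (max (ytil n τ) 0) ^ (1/p)
                ≤ (max (a n) 0 * (L ^ p' * τ ^ p')) ^ (1/p) :=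
                  Real.rpow_le_rpow (le_max_right _ _) step1 (by positivity)
              _ = A * (L ^ (p'-1) * τ ^ (p'-1)) := by
                  rw [Real.mul_rpow (le_max_right _ _) hX,
                    Real.mul_rpow (Real.rpow_nonneg hL.le _) (Real.rpow_nonneg hτ0.le _),
                    ← Real.rpow_mul hL.le, ← Real.rpow_mul hτ0.le, hexp]
          have step3 : (c - h τ) * (max (ytil n τ) 0) ^ (1/p)
              ≤ A * L ^ p' * τ ^ (p'-1) := by
            have h3 : (0:ℝ) ≤ (max (ytil n τ) 0) ^ (1/p) := by positivity
            calc (c - h τ) * (max (ytil n τ) 0) ^ (1/p)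
                ≤ L * (A * (L ^ (p'-1) * τ ^ (p'-1))) :=
                  mul_le_mul hcτ.2.le step2 h3 hL.le
              _ = A * (L ^ (1:ℝ) * L ^ (p'-1)) * τ ^ (p'-1) := by
                  rw [Real.rpow_one]; ring
              _ = A * L ^ p' * τ ^ (p'-1) := by rw [hLm]
          have hf' := hflb τ hτδ
          have heq : ((A - ν) * L ^ p') * τ ^ (p'-1)
              = A * L ^ p' * τ ^ (p'-1) - ν * L ^ p' * τ ^ (p'-1) := by ring
          linarith
        have hψcont : Continuous (fun τ : ℝ => ((A - ν) * L ^ p') * τ ^ (p'-1)) :=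
          continuous_const.mul (Real.continuous_rpow_const (by linarith))
        have hψint : IntegrableOn (fun τ : ℝ => ((A - ν) * L ^ p') * τ ^ (p'-1))
            (Ioc 0 t) :=
          (hψcont.integrableOn_Icc).mono_set Ioc_subset_Icc_self
        have hmono := setIntegral_mono_on (hgint.mono_set hIcc) hψint
          measurableSet_Ioc hpt
        have hval : ∫ τ in Ioc 0 t, ((A - ν) * L ^ p') * τ ^ (p'-1)
            = ((A - ν) * L ^ p') * (t ^ p' / p') := by
          rw [← intervalIntegral.integral_of_le ht.1.le,
            intervalIntegral.integral_const_mul,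
            integral_rpow (Or.inl (by linarith : (-1:ℝ) < p' - 1))]
          have e : p' - 1 + 1 = p' := by ring
          rw [e, Real.zero_rpow hp'pos.ne', sub_zero]
        rw [harec, ← hA]
        calc p' * ∫ τ in Ioc 0 t, ((c - h τ) * (max (ytil n τ) 0) ^ (1/p) - f τ)
            ≤ p' * (((A - ν) * L ^ p') * (t ^ p' / p')) :=
              mul_le_mul_of_nonneg_left (hmono.trans_eq hval) hp'pos.le
          _ = (A - ν) * L ^ p' * t ^ p' := by field_simp
  intro n t ht
  exact (main n).2 t ht
end

section
/- Let U : ℝ → [0,1] be a generalized solution (in the sense of Definition of solution, with associated flux v continuous, v(±∞) = 0, and the integral identity v(ẑ) - v(z) + c(U(ẑ) - U(z)) - (H(U(ẑ)) - H(U(z))) + ∫_z^{ẑ} g(U) dτ = 0) of the traveling-wave equation with boundary conditions U(-∞) = 1 and U(+∞) = 0. If g > 0 on (0,1), then c - H(1) = ∫_{-∞}^{+∞} g(U(τ)) dτ > 0, where H(s) = ∫_0^s h. In particular, c > H(1). -/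
open MeasureTheory Set Filter

/-- For a generalized traveling-wave solution `U` (with flux `v`) connecting `1` at `-∞`
to `0` at `+∞`, one has `c - H(1) = ∫_{-∞}^{∞} g(U(τ)) dτ > 0`; in particular
`c > H(1)`, where `H(s) = ∫_0^s h`. -/
theorem stmt16 (c : ℝ) (g h H U v : ℝ → ℝ)
    (hg : ContinuousOn g (Set.Icc 0 1)) (hg0 : g 0 = 0) (hg1 : g 1 = 0)
    (hgpos : ∀ s ∈ Set.Ioo (0 : ℝ) 1, 0 < g s)
    (hhm : Measurable h) (hhb : ∃ M, ∀ s ∈ Set.Icc (0 : ℝ) 1, |h s| ≤ M)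
    (hH : ∀ s, H s = ∫ τ in (0 : ℝ)..s, h τ)
    (hU : Continuous U) (hUrange : ∀ z, U z ∈ Set.Icc (0 : ℝ) 1)
    (hUbot : Tendsto U atBot (nhds 1)) (hUtop : Tendsto U atTop (nhds 0))
    (hv : Continuous v)
    (hvbot : Tendsto v atBot (nhds 0)) (hvtop : Tendsto v atTop (nhds 0))
    (hid : ∀ z w : ℝ,
      v w - v z + c * (U w - U z) - (H (U w) - H (U z))
        + (∫ τ in z..w, g (U τ)) = 0) :
    Integrable (fun τ => g (U τ)) ∧
    c - H 1 = (∫ τ : ℝ, g (U τ)) ∧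
    (0 < ∫ τ : ℝ, g (U τ)) ∧ H 1 < c := by
  obtain ⟨M, hM⟩ := hhb
  set M' : ℝ := max M 0 with hM'def
  have hM' : ∀ s ∈ Set.Icc (0:ℝ) 1, |h s| ≤ M' := fun s hs => (hM s hs).trans (le_max_left _ _)
  -- f := g ∘ U is continuous and nonnegative
  have hf : Continuous (fun τ => g (U τ)) := hg.comp_continuous hU hUrange
  have hfnn : ∀ τ, 0 ≤ g (U τ) := by
    intro τ
    rcases hUrange τ with ⟨h0, h1⟩
    rcases eq_or_lt_of_le h0 with h0 | h0
    · rw [← h0, hg0]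
    rcases eq_or_lt_of_le h1 with h1 | h1
    · rw [h1, hg1]
    exact le_of_lt (hgpos _ ⟨h0, h1⟩)
  -- h is interval integrable on subintervals of [0,1]
  have hhint : IntegrableOn h (Set.Icc (0:ℝ) 1) := by
    apply Measure.integrableOn_of_bounded (M := M') measure_Icc_lt_top.ne
      hhm.aestronglyMeasurable
    filter_upwards [MeasureTheory.ae_restrict_mem measurableSet_Icc] with a ha
    simpa [Real.norm_eq_abs] using hM' a ha
  have hII : ∀ s ∈ Set.Icc (0:ℝ) 1, IntervalIntegrable h volume 0 s := by
    intro s hs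
    rw [intervalIntegrable_iff]
    exact hhint.mono_set ((Set.uIoc_subset_uIcc ..).trans
      (Set.uIcc_subset_Icc ⟨le_rfl, zero_le_one⟩ hs))
  -- Lipschitz bound for H on [0,1]
  have hLip : ∀ s ∈ Set.Icc (0:ℝ) 1, ∀ t ∈ Set.Icc (0:ℝ) 1, |H s - H t| ≤ M' * |s - t| := by
    intro s hs t ht
    have hsub : H s - H t = ∫ τ in t..s, h τ := by
      rw [hH s, hH t]
      exact intervalIntegral.integral_interval_sub_left (hII s hs) (hII t ht)
    rw [hsub]
    have : ∀ x ∈ Set.uIoc t s, ‖h x‖ ≤ M' := by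
      intro x hx
      have : x ∈ Set.Icc (0:ℝ) 1 := (Set.uIoc_subset_uIcc ..).trans (Set.uIcc_subset_Icc ht hs) hx
      simpa [Real.norm_eq_abs] using hM' x this
    simpa [Real.norm_eq_abs] using intervalIntegral.norm_integral_le_of_norm_le_const this
  have hH0 : H 0 = 0 := by simp [hH]
  -- limits of H ∘ U
  have hHU_top : Tendsto (fun n : ℝ => H (U n)) atTop (nhds (H 0)) := by
    have hsq : Tendsto (fun n : ℝ => H (U n) - H 0) atTop (nhds 0) := by
      have hb1 : ∀ n : ℝ, ‖H (U n) - H 0‖ ≤ M' * |U n - 0| := fun n => by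
        simpa [Real.norm_eq_abs] using
          hLip (U n) (hUrange n) 0 ⟨le_rfl, zero_le_one⟩
      have hb2 : Tendsto (fun n : ℝ => M' * |U n - 0|) atTop (nhds 0) := by
        have : Tendsto (fun n : ℝ => |U n - 0|) atTop (nhds |(0:ℝ) - 0|) :=
          (continuous_abs.tendsto _).comp (hUtop.sub tendsto_const_nhds)
        simpa using this.const_mul M'
      exact squeeze_zero_norm hb1 hb2
    have := hsq.add_const (H 0)
    simpa using this
  have hHU_bot : Tendsto (fun n : ℝ => H (U (-n))) atTop (nhds (H 1)) := by
    have hUb : Tendsto (fun n : ℝ => U (-n)) atTop (nhds 1) :=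
      hUbot.comp tendsto_neg_atTop_atBot
    have hsq : Tendsto (fun n : ℝ => H (U (-n)) - H 1) atTop (nhds 0) := by
      have hb1 : ∀ n : ℝ, ‖H (U (-n)) - H 1‖ ≤ M' * |U (-n) - 1| := fun n => by
        simpa [Real.norm_eq_abs] using
          hLip (U (-n)) (hUrange (-n)) 1 ⟨zero_le_one, le_rfl⟩
      have hb2 : Tendsto (fun n : ℝ => M' * |U (-n) - 1|) atTop (nhds 0) := by
        have : Tendsto (fun n : ℝ => |U (-n) - 1|) atTop (nhds |(1:ℝ) - 1|) :=
          (continuous_abs.tendsto _).comp (hUb.sub tendsto_const_nhds)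
        simpa using this.const_mul M'
      exact squeeze_zero_norm hb1 hb2
    have := hsq.add_const (H 1)
    simpa using this
  -- the interval integrals
  have key : ∀ n : ℝ, (∫ τ in (-n)..n, g (U τ)) =
      H (U n) - H (U (-n)) - (v n - v (-n)) - c * (U n - U (-n)) := by
    intro n
    have := hid (-n) n
    linarith
  have hvb : Tendsto (fun n : ℝ => v (-n)) atTop (nhds 0) :=
    hvbot.comp tendsto_neg_atTop_atBot
  have hUb : Tendsto (fun n : ℝ => U (-n)) atTop (nhds 1) :=
    hUbot.comp tendsto_neg_atTop_atBot
  have hseq : Tendsto (fun n : ℝ => ∫ τ in (-n)..n, g (U τ)) atTop (nhds (c - H 1)) := by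
    have hT : Tendsto (fun n : ℝ =>
        H (U n) - H (U (-n)) - (v n - v (-n)) - c * (U n - U (-n))) atTop
        (nhds (H 0 - H 1 - ((0:ℝ) - 0) - c * ((0:ℝ) - 1))) :=
      ((hHU_top.sub hHU_bot).sub (hvtop.sub hvb)).sub ((hUtop.sub hUb).const_mul c)
    have heq : (H 0 - H 1 - ((0:ℝ) - 0) - c * ((0:ℝ) - 1)) = c - H 1 := by
      rw [hH0]; ring
    rw [heq] at hT
    exact hT.congr (fun n => (key n).symm)
  -- integrability
  have hInt : Integrable (fun τ => g (U τ)) := by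
    apply integrable_of_intervalIntegral_norm_tendsto (a := fun n : ℝ => -n)
      (b := fun n : ℝ => n) (c - H 1) (fun i => hf.integrableOn_Ioc)
      tendsto_neg_atTop_atBot tendsto_id
    have : (fun n : ℝ => ∫ τ in (-n)..n, ‖g (U τ)‖) =
        fun n : ℝ => ∫ τ in (-n)..n, g (U τ) := by
      funext n
      congr 1
      funext τ
      rw [Real.norm_eq_abs, abs_of_nonneg (hfnn τ)]
    rw [this]
    exact hseq
  have hseq' : Tendsto (fun n : ℝ => ∫ τ in (-n)..n, g (U τ)) atTop
      (nhds (∫ τ : ℝ, g (U τ))) :=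
    intervalIntegral_tendsto_integral hInt tendsto_neg_atTop_atBot tendsto_id
  have hval : c - H 1 = ∫ τ : ℝ, g (U τ) := tendsto_nhds_unique hseq hseq'
  -- positivity
  have hpos : 0 < ∫ τ : ℝ, g (U τ) := by
    -- find a point where U = 1/2
    obtain ⟨a, ha⟩ := (hUbot.eventually (eventually_gt_nhds (by norm_num : (1/2:ℝ) < 1))).exists
    obtain ⟨b, hb⟩ := (hUtop.eventually (eventually_lt_nhds (by norm_num : (0:ℝ) < 1/2))).exists
    have : (1/2 : ℝ) ∈ Set.uIcc (U a) (U b) := by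
      rw [Set.mem_uIcc]
      right
      exact ⟨le_of_lt hb, le_of_lt ha⟩
    obtain ⟨z0, _, hz0⟩ := intermediate_value_uIcc (hU.continuousOn (s := Set.uIcc a b)) this
    have hfz0 : 0 < g (U z0) := by
      rw [hz0]; exact hgpos _ (by norm_num)
    rw [integral_pos_iff_support_of_nonneg hfnn hInt]
    have hopen : IsOpen {x : ℝ | 0 < g (U x)} := isOpen_lt continuous_const hf
    have hsub : {x : ℝ | 0 < g (U x)} ⊆ Function.support (fun τ => g (U τ)) := by
      intro x hx
      exact ne_of_gt hx
    calc (0 : ENNReal) < volume {x : ℝ | 0 < g (U x)} := hopen.measure_pos volume ⟨z0, hfz0⟩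
      _ ≤ _ := measure_mono hsub
  exact ⟨hInt, hval, hpos, by linarith [hval ▸ hpos]⟩
end

section
/- With the notation of the generalized traveling-wave solution (continuous U : ℝ → [0,1], continuous flux v with v(±∞)=0, the integral identity, boundary conditions U(-∞)=1, U(+∞)=0, and g > 0 on (0,1)): if ξ ∈ ℝ satisfies U(ξ) = 0, then U(z) = 0 for all z ≥ ξ; and if U(ξ) = 1, then U(z) = 1 for all z ≤ ξ. -/
open MeasureTheory Set Filter

/-- For a generalized traveling-wave solution `U` (with flux `v`, vanishing where
`U ∈ {0,1}`): if `U(ξ) = 0` then `U ≡ 0` on `[ξ,∞)`, and if `U(ξ) = 1` then `U ≡ 1`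
on `(-∞,ξ]`. -/
theorem stmt17 (c : ℝ) (g h H U v : ℝ → ℝ)
    (hg : ContinuousOn g (Set.Icc 0 1)) (hg0 : g 0 = 0) (hg1 : g 1 = 0)
    (hgpos : ∀ s ∈ Set.Ioo (0 : ℝ) 1, 0 < g s)
    (hhm : Measurable h) (hhb : ∃ M, ∀ s ∈ Set.Icc (0 : ℝ) 1, |h s| ≤ M)
    (hH : ∀ s, H s = ∫ τ in (0 : ℝ)..s, h τ)
    (hU : Continuous U) (hUrange : ∀ z, U z ∈ Set.Icc (0 : ℝ) 1)
    (hUbot : Tendsto U atBot (nhds 1)) (hUtop : Tendsto U atTop (nhds 0))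
    (hv : Continuous v)
    (hvbot : Tendsto v atBot (nhds 0)) (hvtop : Tendsto v atTop (nhds 0))
    (hveq : ∀ ξ, (U ξ = 0 ∨ U ξ = 1) → v ξ = 0)
    (hid : ∀ z w : ℝ,
      v w - v z + c * (U w - U z) - (H (U w) - H (U z))
        + (∫ τ in z..w, g (U τ)) = 0) :
    ∀ ξ : ℝ,
      (U ξ = 0 → ∀ z, ξ ≤ z → U z = 0) ∧
      (U ξ = 1 → ∀ z, z ≤ ξ → U z = 1) := by
  classical
  obtain ⟨M, hM⟩ := hhb
  have hM0 : 0 ≤ M := le_trans (abs_nonneg _) (hM 0 ⟨le_refl 0, zero_le_one⟩)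
  -- h is interval integrable on subintervals of [0,1]
  have hhint : ∀ a b : ℝ, a ∈ Icc (0:ℝ) 1 → b ∈ Icc (0:ℝ) 1 →
      IntervalIntegrable h volume a b := by
    intro a b ha hb
    rw [intervalIntegrable_iff]
    apply Measure.integrableOn_of_bounded (M := M)
    · exact (measure_Ioc_lt_top).ne
    · exact hhm.aestronglyMeasurable
    · refine (ae_restrict_iff' measurableSet_uIoc).2 (Eventually.of_forall ?_)
      intro x hx
      have hx' : x ∈ Icc (0:ℝ) 1 := by
        rcases hx with ⟨h1, h2⟩
        constructor
        · exact le_trans (le_min ha.1 hb.1) (le_of_lt h1)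
        · exact le_trans h2 (max_le ha.2 hb.2)
      simpa [Real.norm_eq_abs] using hM x hx'
  -- Lipschitz-type bound on H over [0,1]
  have hHb : ∀ a b : ℝ, a ∈ Icc (0:ℝ) 1 → b ∈ Icc (0:ℝ) 1 →
      |H b - H a| ≤ M * |b - a| := by
    intro a b ha hb
    have h0 : (0:ℝ) ∈ Icc (0:ℝ) 1 := ⟨le_refl 0, zero_le_one⟩
    have hsub : H b - H a = ∫ x in a..b, h x := by
      rw [hH, hH]
      exact intervalIntegral.integral_interval_sub_left (hhint 0 b h0 hb) (hhint 0 a h0 ha)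
    rw [hsub]
    have : ∀ x ∈ Set.uIoc a b, ‖h x‖ ≤ M := by
      intro x hx
      have hx' : x ∈ Icc (0:ℝ) 1 := by
        rcases hx with ⟨h1, h2⟩
        exact ⟨le_trans (le_min ha.1 hb.1) (le_of_lt h1), le_trans h2 (max_le ha.2 hb.2)⟩
      simpa [Real.norm_eq_abs] using hM x hx'
    simpa [Real.norm_eq_abs] using intervalIntegral.norm_integral_le_of_norm_le_const this
  -- the composed function k = g ∘ U
  set k : ℝ → ℝ := fun τ => g (U τ) with hk_def
  have hk : Continuous k := hg.comp_continuous hU hUrange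
  have hknn : ∀ τ, 0 ≤ k τ := by
    intro τ
    rcases hUrange τ with ⟨h0, h1⟩
    rcases eq_or_lt_of_le h0 with he | hlt
    · simp [hk_def, ← he, hg0]
    · rcases eq_or_lt_of_le h1 with he | hlt'
      · simp [hk_def, he, hg1]
      · exact le_of_lt (hgpos _ ⟨hlt, hlt'⟩)
  have hkint : ∀ a b : ℝ, IntervalIntegrable k volume a b := fun a b =>
    hk.intervalIntegrable a b
  -- pointwise vanishing of k from vanishing integrals
  have hkvanish : ∀ ξ τ : ℝ, ξ < τ →
      (∀ a b : ℝ, ξ ≤ a → a ≤ b → (∫ x in a..b, k x) = 0) → k τ = 0 := by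
    intro ξ τ hξτ hkey
    by_contra hne
    have hpos : 0 < k τ := lt_of_le_of_ne (hknn τ) (Ne.symm hne)
    have hev : ∀ᶠ x in nhds τ, 0 < k x :=
      (hk.continuousAt).eventually (eventually_gt_nhds hpos)
    rw [Metric.eventually_nhds_iff] at hev
    obtain ⟨ε, hε, hball⟩ := hev
    set δ : ℝ := min (ε / 2) (τ - ξ) with hδ_def
    have hδpos : 0 < δ := lt_min (by linarith) (by linarith)
    have hδε : δ < ε := lt_of_le_of_lt (min_le_left _ _) (by linarith)
    have hδξ : ξ ≤ τ - δ := by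
      have := min_le_right (ε / 2) (τ - ξ)
      simp only [hδ_def] at *
      linarith
    have hip : 0 < ∫ x in (τ - δ)..(τ + δ), k x := by
      apply intervalIntegral.intervalIntegral_pos_of_pos_on (hkint _ _)
      · intro x hx
        apply hball
        rw [Real.dist_eq, abs_lt]
        constructor <;> [skip; skip] <;> rcases hx with ⟨h1, h2⟩ <;> linarith
      · linarith
    rw [hkey (τ - δ) (τ + δ) hδξ (by linarith)] at hip
    exact lt_irrefl 0 hip
  intro ξ
  constructor
  · -- Case U ξ = 0
    intro hUξ z hz
    have hvξ : v ξ = 0 := hveq ξ (Or.inl hUξ)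
    -- key: integrals of k vanish on [ξ, ∞)
    have hkey : ∀ a b : ℝ, ξ ≤ a → a ≤ b → (∫ x in a..b, k x) = 0 := by
      intro a b ha hab
      have hnn : 0 ≤ ∫ x in a..b, k x :=
        intervalIntegral.integral_nonneg hab (fun x _ => hknn x)
      have hle : (∫ x in a..b, k x) ≤ 0 := by
        have hB : Tendsto (fun w => |v w| + (|c| + M) * U w) atTop (nhds 0) := by
          have h1 : Tendsto (fun w => |v w|) atTop (nhds 0) := by
            simpa using hvtop.abs
          have h2 : Tendsto (fun w => (|c| + M) * U w) atTop (nhds 0) := by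
            simpa using hUtop.const_mul (|c| + M)
          simpa using h1.add h2
        refine ge_of_tendsto hB ?_
        filter_upwards [eventually_ge_atTop b] with w hw
        -- split the integral over [ξ, w]
        have hsplit : (∫ x in ξ..w, k x) =
            (∫ x in ξ..a, k x) + (∫ x in a..b, k x) + (∫ x in b..w, k x) := by
          rw [intervalIntegral.integral_add_adjacent_intervals (hkint ξ a) (hkint a b),
            intervalIntegral.integral_add_adjacent_intervals (hkint ξ b) (hkint b w)]
        have h1 : 0 ≤ ∫ x in ξ..a, k x :=
          intervalIntegral.integral_nonneg ha (fun x _ => hknn x)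
        have h2 : 0 ≤ ∫ x in b..w, k x :=
          intervalIntegral.integral_nonneg hw (fun x _ => hknn x)
        have hmono : (∫ x in a..b, k x) ≤ ∫ x in ξ..w, k x := by
          rw [hsplit]; linarith
        have hiden := hid ξ w
        have hHbd : |H (U w) - H (U ξ)| ≤ M * U w := by
          have := hHb (U ξ) (U w) (hUrange ξ) (hUrange w)
          rcases hUrange w with ⟨h0w, _⟩
          rw [hUξ] at this ⊢
          rwa [sub_zero, abs_of_nonneg h0w] at this
        have hUw0 : 0 ≤ U w := (hUrange w).1
        have hcb : c * (U w - U ξ) ≥ -(|c| * U w) := by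
          rw [hUξ, sub_zero]
          have h1 : -(c * U w) ≤ |c * U w| := neg_le_abs _
          rw [abs_mul, abs_of_nonneg hUw0] at h1
          linarith
        have hvb : -(v w) ≤ |v w| := neg_le_abs _
        have hHb' : H (U w) - H (U ξ) ≤ M * U w :=
          le_trans (le_abs_self _) hHbd
        have hintval : (∫ x in ξ..w, k x) ≤ |v w| + (|c| + M) * U w := by
          have : (∫ x in ξ..w, k x) =
              -(v w) + v ξ - c * (U w - U ξ) + (H (U w) - H (U ξ)) := by linarith
          rw [this, hvξ]
          nlinarith [abs_nonneg (v w), abs_nonneg c]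
        linarith
      linarith
    -- k vanishes on [ξ, ∞)
    have hkz : ∀ τ, ξ ≤ τ → k τ = 0 := by
      intro τ hτ
      rcases eq_or_lt_of_le hτ with he | hlt
      · simp [hk_def, ← he, hUξ, hg0]
      · exact hkvanish ξ τ hlt hkey
    -- conclude U z = 0
    have hz01 : U z = 0 ∨ U z = 1 := by
      rcases hUrange z with ⟨h0, h1⟩
      rcases eq_or_lt_of_le h0 with he | hlt
      · exact Or.inl he.symm
      · rcases eq_or_lt_of_le h1 with he | hlt'
        · exact Or.inr he
        · exact absurd (hkz z hz) (ne_of_gt (hgpos _ ⟨hlt, hlt'⟩))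
    rcases hz01 with h0 | h1
    · exact h0
    · exfalso
      have hsub : Icc (U ξ) (U z) ⊆ U '' Icc ξ z :=
        intermediate_value_Icc hz hU.continuousOn
      have hmem : (1/2 : ℝ) ∈ Icc (U ξ) (U z) := by
        rw [hUξ, h1]; constructor <;> norm_num
      obtain ⟨τ, hτmem, hτval⟩ := hsub hmem
      have := hkz τ hτmem.1
      rw [hk_def] at this
      simp only at this
      rw [hτval] at this
      exact absurd this (ne_of_gt (hgpos _ ⟨by norm_num, by norm_num⟩))
  · -- Case U ξ = 1
    intro hUξ z hz
    have hvξ : v ξ = 0 := hveq ξ (Or.inr hUξ)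
    -- key: integrals of k vanish on (-∞, ξ]
    have hkey : ∀ a b : ℝ, a ≤ b → b ≤ ξ → (∫ x in a..b, k x) = 0 := by
      intro a b hab hb
      have hnn : 0 ≤ ∫ x in a..b, k x :=
        intervalIntegral.integral_nonneg hab (fun x _ => hknn x)
      have hle : (∫ x in a..b, k x) ≤ 0 := by
        have hB : Tendsto (fun w => |v w| + (|c| + M) * (1 - U w)) atBot (nhds 0) := by
          have h1 : Tendsto (fun w => |v w|) atBot (nhds 0) := by
            simpa using hvbot.abs
          have h2 : Tendsto (fun w => (|c| + M) * (1 - U w)) atBot (nhds 0) := by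
            have : Tendsto (fun w => (1:ℝ) - U w) atBot (nhds 0) := by
              simpa using (tendsto_const_nhds (x := (1:ℝ)) (f := atBot)).sub hUbot
            simpa using this.const_mul (|c| + M)
          simpa using h1.add h2
        refine ge_of_tendsto hB ?_
        filter_upwards [eventually_le_atBot a] with w hw
        have hsplit : (∫ x in w..ξ, k x) =
            (∫ x in w..a, k x) + (∫ x in a..b, k x) + (∫ x in b..ξ, k x) := by
          rw [intervalIntegral.integral_add_adjacent_intervals (hkint w a) (hkint a b),
            intervalIntegral.integral_add_adjacent_intervals (hkint w b) (hkint b ξ)]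
        have h1 : 0 ≤ ∫ x in w..a, k x :=
          intervalIntegral.integral_nonneg hw (fun x _ => hknn x)
        have h2 : 0 ≤ ∫ x in b..ξ, k x :=
          intervalIntegral.integral_nonneg hb (fun x _ => hknn x)
        have hmono : (∫ x in a..b, k x) ≤ ∫ x in w..ξ, k x := by
          rw [hsplit]; linarith
        have hiden := hid w ξ
        have hHbd : |H (U ξ) - H (U w)| ≤ M * (1 - U w) := by
          have := hHb (U w) (U ξ) (hUrange w) (hUrange ξ)
          rcases hUrange w with ⟨_, h1w⟩
          rw [hUξ] at this ⊢
          rwa [abs_of_nonneg (by linarith : (0:ℝ) ≤ 1 - U w)] at this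
        rcases hUrange w with ⟨h0w, h1w⟩
        have hcb : |c * (U ξ - U w)| ≤ |c| * (1 - U w) := by
          rw [hUξ, abs_mul, abs_of_nonneg (by linarith : (0:ℝ) ≤ 1 - U w)]
        have hintval : (∫ x in w..ξ, k x) ≤ |v w| + (|c| + M) * (1 - U w) := by
          have heq : (∫ x in w..ξ, k x) =
              v w - v ξ - c * (U ξ - U w) + (H (U ξ) - H (U w)) := by linarith
          rw [heq, hvξ]
          have a1 : v w ≤ |v w| := le_abs_self _
          have a2 : -(c * (U ξ - U w)) ≤ |c| * (1 - U w) :=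
            le_trans (neg_le_abs _) hcb
          have a3 : H (U ξ) - H (U w) ≤ M * (1 - U w) :=
            le_trans (le_abs_self _) hHbd
          nlinarith
        linarith
      linarith
    -- k vanishes on (-∞, ξ]
    have hkz : ∀ τ, τ ≤ ξ → k τ = 0 := by
      intro τ hτ
      rcases eq_or_lt_of_le hτ with he | hlt
      · simp [hk_def, he, hUξ, hg1]
      · -- mirror of hkvanish: use a small interval to the right of τ inside (-∞, ξ]
        by_contra hne
        have hpos : 0 < k τ := lt_of_le_of_ne (hknn τ) (Ne.symm hne)
        have hev : ∀ᶠ x in nhds τ, 0 < k x :=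
          (hk.continuousAt).eventually (eventually_gt_nhds hpos)
        rw [Metric.eventually_nhds_iff] at hev
        obtain ⟨ε, hε, hball⟩ := hev
        set δ : ℝ := min (ε / 2) (ξ - τ) with hδ_def
        have hδpos : 0 < δ := lt_min (by linarith) (by linarith)
        have hδε : δ < ε := lt_of_le_of_lt (min_le_left _ _) (by linarith)
        have hδξ : τ + δ ≤ ξ := by
          have := min_le_right (ε / 2) (ξ - τ)
          simp only [hδ_def] at *
          linarith
        have hip : 0 < ∫ x in (τ - δ)..(τ + δ), k x := by
          apply intervalIntegral.intervalIntegral_pos_of_pos_on (hkint _ _)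
          · intro x hx
            apply hball
            rw [Real.dist_eq, abs_lt]
            constructor <;> [skip; skip] <;> rcases hx with ⟨h1, h2⟩ <;> linarith
          · linarith
        rw [hkey (τ - δ) (τ + δ) (by linarith) hδξ] at hip
        exact lt_irrefl 0 hip
    -- conclude U z = 1
    have hz01 : U z = 0 ∨ U z = 1 := by
      rcases hUrange z with ⟨h0, h1⟩
      rcases eq_or_lt_of_le h0 with he | hlt
      · exact Or.inl he.symm
      · rcases eq_or_lt_of_le h1 with he | hlt'
        · exact Or.inr he
        · exact absurd (hkz z hz) (ne_of_gt (hgpos _ ⟨hlt, hlt'⟩))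
    rcases hz01 with h0 | h1
    · exfalso
      have hsub : Icc (U z) (U ξ) ⊆ U '' Icc z ξ :=
        intermediate_value_Icc hz hU.continuousOn
      have hmem : (1/2 : ℝ) ∈ Icc (U z) (U ξ) := by
        rw [hUξ, h0]; constructor <;> norm_num
      obtain ⟨τ, hτmem, hτval⟩ := hsub hmem
      have := hkz τ hτmem.2
      rw [hk_def] at this
      simp only at this
      rw [hτval] at this
      exact absurd this (ne_of_gt (hgpos _ ⟨by norm_num, by norm_num⟩))
    · exact h1
end
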